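/- arXiv:2604.08740 — 13 statements merged into one kernel-verified Lean document; each statement's English description precedes it below -/
import Mathlib

section
/- Let K be a field and x : V → V an endomorphism of a finite-dimensional K-vector space whose minimal polynomial splits into linear factors in K[T]. Then there exist unique endomorphisms s, n : V → V with x = s + n, s diagonalizable, n nilpotent, and s ∘ n = n ∘ s. -/
open Polynomial

/-- An endomorphism is diagonalizable if `V` admits a basis of eigenvectors. -/
def IsDiagonalizable {K V : Type} [Field K] [AddCommGroup V] [Module K V]
    (s : Module.End K V) : Prop :=
  ∃ (ι : Type) (b : Module.Basis ι K V), ∀ i, ∃ μ : K, s (b i) = μ • b i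

section Aux

variable {K V : Type} [Field K] [AddCommGroup V] [Module K V]

private lemma ker_aeval_le_iSup_maxGenEigenspace (x : Module.End K V) :
    ∀ (N : ℕ) (p : K[X]), p.natDegree ≤ N → p ≠ 0 → p.Splits →
      LinearMap.ker (aeval x p) ≤ ⨆ μ, x.maxGenEigenspace μ := by
  intro N
  induction N with
  | zero =>
    intro p hdeg hp0 _
    obtain ⟨c, rfl⟩ := Polynomial.natDegree_eq_zero.mp (Nat.le_zero.mp hdeg)
    have hc : c ≠ 0 := fun h => hp0 (by simp [h])
    intro m hm
    rw [LinearMap.mem_ker] at hm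
    have hcm : c • m = 0 := by simpa [Module.algebraMap_end_apply] using hm
    have : m = 0 := (smul_eq_zero.mp hcm).resolve_left hc
    rw [this]; exact Submodule.zero_mem _
  | succ N ih =>
    intro p hdeg hp0 hs
    by_cases h0 : p.natDegree = 0
    · exact ih p (by omega) hp0 hs
    obtain ⟨μ, hμ⟩ := hs.exists_eval_eq_zero
      (fun h => h0 (Polynomial.natDegree_eq_zero_iff_degree_le_zero.mpr (le_of_eq h)))
    set k := p.rootMultiplicity μ with hk
    set q := p /ₘ (X - C μ) ^ k with hq
    have hfac : (X - C μ) ^ k * q = p := p.pow_mul_divByMonic_rootMultiplicity_eq μ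
    have hqe : q.eval μ ≠ 0 := eval_divByMonic_pow_rootMultiplicity_ne_zero μ hp0
    have hq0 : q ≠ 0 := fun h => hqe (by simp [h])
    have hkpos : 0 < k := (rootMultiplicity_pos hp0).mpr hμ
    have hcop : IsCoprime ((X - C μ) ^ k) q :=
      IsCoprime.pow_left <| (irreducible_X_sub_C μ).coprime_iff_not_dvd.mpr
        (fun hd => hqe (dvd_iff_isRoot.mp hd))
    have hker : LinearMap.ker (aeval x p) =
        LinearMap.ker (aeval x ((X - C μ) ^ k)) ⊔ LinearMap.ker (aeval x q) := by
      conv_lhs => rw [← hfac]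
      exact (Polynomial.sup_ker_aeval_eq_ker_aeval_mul_of_coprime x hcop).symm
    rw [hker]
    apply sup_le
    · refine le_trans ?_ (le_iSup _ μ)
      intro m hm
      rw [LinearMap.mem_ker] at hm
      rw [Module.End.mem_maxGenEigenspace]
      refine ⟨k, ?_⟩
      have haev : aeval x ((X - C μ) ^ k) = (x - μ • 1) ^ k := by
        rw [map_pow]
        congr 1
        rw [map_sub, aeval_X, aeval_C]
        rfl
      rw [← haev]
      exact hm
    · have hdk : ((X - C μ) ^ k).natDegree = k := by
        simp [natDegree_pow]
      have hsumdeg : p.natDegree = k + q.natDegree := by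
        conv_lhs => rw [← hfac]
        rw [natDegree_mul (pow_ne_zero k (X_sub_C_ne_zero μ)) hq0, hdk]
      have hqd : q.natDegree ≤ N := by omega
      have hqs : q.Splits :=
        hs.of_dvd hp0 ⟨(X - C μ) ^ k, by rw [← hfac, mul_comm]⟩
      exact ih q hqd hq0 hqs

private lemma iSup_maxGenEigenspace_eq_top_of_splits [FiniteDimensional K V]
    (x : Module.End K V) (hsplit : (minpoly K x).Splits) :
    ⨆ μ, x.maxGenEigenspace μ = ⊤ := by
  have hnz : minpoly K x ≠ 0 := minpoly.ne_zero_of_finite K x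
  have h := ker_aeval_le_iSup_maxGenEigenspace x (minpoly K x).natDegree (minpoly K x)
    le_rfl hnz hsplit
  have hk : LinearMap.ker (aeval x (minpoly K x)) = ⊤ := by
    rw [minpoly.aeval]; exact LinearMap.ker_zero
  exact le_antisymm le_top (hk ▸ h)

private lemma IsDiagonalizable.isFinitelySemisimple' [FiniteDimensional K V]
    {s : Module.End K V} (hs : IsDiagonalizable s) : s.IsFinitelySemisimple := by
  classical
  obtain ⟨ι, b, h⟩ := hs
  choose μ hμ using h
  have : Fintype ι := FiniteDimensional.fintypeBasisIndex b
  set T : Finset K := Finset.image μ Finset.univ with hT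
  set P : K[X] := ∏ c ∈ T, (X - C c) with hP
  have hsep : P.Separable := separable_prod_X_sub_C_iff'.mpr (fun _ _ _ _ h => h)
  have haev : aeval s P = 0 := by
    apply b.ext
    intro i
    have hmem : μ i ∈ T := Finset.mem_image_of_mem μ (Finset.mem_univ i)
    have hP' : P = (∏ c ∈ T.erase (μ i), (X - C c)) * (X - C (μ i)) :=
      (Finset.prod_erase_mul T _ hmem).symm
    rw [hP', map_mul, Module.End.mul_apply]
    have hz : (aeval s (X - C (μ i))) (b i) = 0 := by
      rw [map_sub, aeval_X, aeval_C, LinearMap.sub_apply, Module.algebraMap_end_apply,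
        hμ i, sub_self]
    rw [hz, map_zero, LinearMap.zero_apply]
  exact (Module.End.isSemisimple_of_squarefree_aeval_eq_zero hsep.squarefree
    haev).isFinitelySemisimple

end Aux

theorem jordan_chevalley_split {K V : Type} [Field K] [AddCommGroup V] [Module K V]
    [FiniteDimensional K V] (x : Module.End K V)
    (hsplit : (minpoly K x).Splits) :
    ∃! p : Module.End K V × Module.End K V,
      x = p.1 + p.2 ∧ IsDiagonalizable p.1 ∧ IsNilpotent p.2 ∧ Commute p.1 p.2 := by
  classical
  have hnz : minpoly K x ≠ 0 := minpoly.ne_zero_of_finite K x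
  -- the separable "radical" polynomial
  set T : Finset K := (minpoly K x).roots.toFinset with hT
  set P : K[X] := ∏ μ ∈ T, (X - C μ) with hP
  have hsep : P.Separable := separable_prod_X_sub_C_iff'.mpr (fun _ _ _ _ h => h)
  have hdvd : minpoly K x ∣ P ^ (minpoly K x).natDegree := by
    have h1 : minpoly K x = ((minpoly K x).roots.map fun a => X - C a).prod :=
      hsplit.eq_prod_roots_of_monic (minpoly.monic (Algebra.IsIntegral.isIntegral x))
    have h2 : ((minpoly K x).roots.map fun a => X - C a).prod ∣
        P ^ (minpoly K x).natDegree := by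
      rw [prod_multiset_root_eq_finset_root, hP, ← Finset.prod_pow]
      refine Finset.prod_dvd_prod_of_dvd _ _ (fun a _ => pow_dvd_pow _ ?_)
      calc rootMultiplicity a (minpoly K x) = (minpoly K x).roots.count a :=
            (count_roots _).symm
        _ ≤ Multiset.card (minpoly K x).roots := Multiset.count_le_card _ _
        _ ≤ (minpoly K x).natDegree := card_roots' _
    conv_lhs => rw [h1]
    exact h2
  obtain ⟨n₀, hn₀mem, s₀, hs₀mem, hn₀, hs₀ss, hsum⟩ :=
    Module.End.exists_isNilpotent_isSemisimple_of_separable_of_dvd_pow hsep hdvd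
  rw [Algebra.adjoin_singleton_eq_range_aeval] at hn₀mem hs₀mem
  obtain ⟨pn, rfl⟩ := hn₀mem
  obtain ⟨ps, rfl⟩ := hs₀mem
  set n₀ := aeval x pn
  set s₀ := aeval x ps
  have hcomm : Commute s₀ n₀ := by
    have := (Commute.all ps pn).map (aeval x)
    exact this
  -- key fact: any admissible semisimple part acts as μ on each generalized eigenspace of x
  have key : ∀ (s n : Module.End K V), x = s + n → s.IsFinitelySemisimple → IsNilpotent n →
      Commute s n → ∀ μ : K, ∀ m ∈ x.maxGenEigenspace μ, s m = μ • m := by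
    intro s n hxsn hss hn hc μ m hm
    have hxs : Commute x s := by rw [hxsn]; exact ((Commute.refl s).add_left hc.symm)
    have hnil : IsNilpotent (x - s) := by
      have : x - s = n := by rw [hxsn]; abel
      rw [this]; exact hn
    exact Module.End.apply_eq_of_mem_of_comm_of_isFinitelySemisimple_of_isNil hm hxs hss hnil
  have htop : ⨆ μ, x.maxGenEigenspace μ = ⊤ :=
    iSup_maxGenEigenspace_eq_top_of_splits x hsplit
  have hx₀ : x = s₀ + n₀ := by rw [hsum]; exact add_comm _ _
  have hs₀act : ∀ μ : K, ∀ m ∈ x.maxGenEigenspace μ, s₀ m = μ • m :=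
    key s₀ n₀ hx₀ hs₀ss.isFinitelySemisimple hn₀ hcomm
  -- s₀ is diagonalizable
  have hdiag : IsDiagonalizable s₀ := by
    set E : Set V := {v | ∃ μ : K, s₀ v = μ • v} with hE
    have hspan : ⊤ ≤ Submodule.span K E := by
      rw [← htop]
      refine iSup_le fun μ v hv => ?_
      exact Submodule.subset_span ⟨μ, hs₀act μ v hv⟩
    obtain ⟨b, hbE, hbsp, hbli⟩ := exists_linearIndependent K E
    have hbtop : ⊤ ≤ Submodule.span K (Set.range ((↑) : b → V)) := by
      rwa [Subtype.range_coe, hbsp]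
    refine ⟨b, Module.Basis.mk hbli hbtop, fun i => ?_⟩
    rw [Module.Basis.mk_apply]
    exact hbE i.2
  refine ⟨(s₀, n₀), ⟨hx₀, hdiag, hn₀, hcomm⟩, ?_⟩
  rintro ⟨s, n⟩ ⟨hx', hd', hn', hc'⟩
  have hsfs : s.IsFinitelySemisimple := hd'.isFinitelySemisimple'
  have hact' := key s n hx' hsfs hn' hc'
  have hs : s = s₀ := by
    ext v
    have hv : v ∈ ⨆ μ, x.maxGenEigenspace μ := htop ▸ Submodule.mem_top
    refine Submodule.iSup_induction (motive := fun w => s w = s₀ w) _ hv ?_ ?_ ?_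
    · intro μ w hw
      rw [hact' μ w hw, hs₀act μ w hw]
    · simp
    · intro a c ha hc
      rw [map_add, map_add, ha, hc]
  have hn : n = n₀ := by
    have h1 : n = x - s := by rw [hx']; abel
    have h2 : n₀ = x - s₀ := by rw [hx₀]; abel
    rw [h1, h2, hs]
  simp [Prod.ext_iff, hs, hn]
end

section
/- Let K be a field and x : V → V an endomorphism of a finite-dimensional K-vector space such that every irreducible factor of the minimal polynomial of x is separable. Then x admits a Jordan-Chevalley decomposition: x = s + n with s semisimple, n nilpotent, and s ∘ n = n ∘ s. -/
open Polynomial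

lemma separable_of_squarefree_aux {K : Type} [Field K] :
    ∀ n : ℕ, ∀ g : K[X], g.natDegree = n → Squarefree g →
    (∀ p : K[X], Irreducible p → p ∣ g → p.Separable) → g.Separable := by
  intro n
  induction n using Nat.strong_induction_on with
  | _ n ih =>
    intro g hn hg h
    by_cases hu : IsUnit g
    · obtain ⟨a, ha, rfl⟩ := Polynomial.isUnit_iff.mp hu
      exact (Polynomial.separable_C a).mpr ha
    · obtain ⟨p, hp, q, rfl⟩ := WfDvdMonoid.exists_irreducible_factor hu hg.ne_zero
      have hpq : ¬ p ∣ q := fun hd => hp.not_isUnit (hg p (mul_dvd_mul_left p hd))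
      have hcop : IsCoprime p q := hp.coprime_iff_not_dvd.mpr hpq
      have hq0 : q ≠ 0 := right_ne_zero_of_mul hg.ne_zero
      have hdeg : q.natDegree < n := by
        subst hn
        rw [Polynomial.natDegree_mul hp.ne_zero hq0]
        have : 0 < p.natDegree := Polynomial.natDegree_pos_iff_degree_pos.mpr
          (Polynomial.degree_pos_of_irreducible hp)
        omega
      have hqsep := ih q.natDegree hdeg q rfl hg.of_mul_right
        (fun r hr hrd => h r hr (hrd.mul_left p))
      exact (h p hp (dvd_mul_right p q)).mul hqsep hcop

/-- If every irreducible factor of the minimal polynomial of `x` is separable, then `x`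
admits a Jordan-Chevalley decomposition. -/
theorem exists_jordan_chevalley {K V : Type} [Field K] [AddCommGroup V] [Module K V]
    [FiniteDimensional K V] (x : Module.End K V)
    (hsep : ∀ g : K[X], Irreducible g → g ∣ minpoly K x → g.Separable) :
    ∃ s n : Module.End K V,
      x = s + n ∧ s.IsSemisimple ∧ IsNilpotent n ∧ Commute s n := by
  obtain ⟨g, k, hsq, hdvd, hpow⟩ :=
    exists_squarefree_dvd_pow_of_ne_zero (minpoly.ne_zero_of_finite K x)
  have hg : g.Separable := separable_of_squarefree_aux g.natDegree g rfl hsq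
    (fun p hp hpd => hsep p hp (hpd.trans hdvd))
  obtain ⟨n, hn, s, hs, hnil, hss, hx⟩ :=
    Module.End.exists_isNilpotent_isSemisimple_of_separable_of_dvd_pow hg hpow
  have h1 : Commute x s := Algebra.commute_of_mem_adjoin_self hs
  have h2 : Commute s n := Algebra.commute_of_mem_adjoin_singleton_of_commute hn h1.symm
  exact ⟨s, n, by rw [hx, add_comm], hss, hnil, h2⟩
end

section
/- Let K be a field, x : V → V an endomorphism of a finite-dimensional K-vector space, and x = s + n a Jordan-Chevalley decomposition (s semisimple, n nilpotent, s ∘ n = n ∘ s) such that for every field extension M/K the base change id ⊗ s remains semisimple over M. Then every irreducible factor of the minimal polynomial of x is separable. -/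
open Polynomial TensorProduct

/-- The minimal polynomial of a base change is divisible by the image of the
original minimal polynomial. -/
lemma map_minpoly_dvd_minpoly_baseChange' {K V M : Type} [Field K] [AddCommGroup V]
    [Module K V] [Field M] [Algebra K M] (s : Module.End K V) :
    (minpoly K s).map (algebraMap K M) ∣
      minpoly M (LinearMap.baseChange M s : Module.End M (M ⊗[K] V)) := by
  classical
  set q := minpoly M (LinearMap.baseChange M s : Module.End M (M ⊗[K] V)) with hq
  set b : Module.Basis (Module.Basis.ofVectorSpaceIndex K M) K M := Module.Basis.ofVectorSpace K M with hb
  -- coordinate projection maps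
  set φ : Module.Basis.ofVectorSpaceIndex K M → (M ⊗[K] V →ₗ[K] V) :=
    fun i => (TensorProduct.lid K V).toLinearMap ∘ₗ LinearMap.rTensor V (b.coord i) with hφ
  have hφ_tmul : ∀ i (c : M) (w : V), φ i (c ⊗ₜ w) = b.repr c i • w := by
    intro i c w
    simp [hφ, Module.Basis.coord_apply]
  -- evaluate the annihilation of q at 1 ⊗ v
  have key : ∀ v : V, ∑ j ∈ Finset.range (q.natDegree + 1),
      (q.coeff j) ⊗ₜ[K] ((s ^ j) v) = (0 : M ⊗[K] V) := by
    intro v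
    have h0 : (aeval (LinearMap.baseChange M s : Module.End M (M ⊗[K] V)) q)
        ((1 : M) ⊗ₜ v) = 0 := by rw [hq, minpoly.aeval M (LinearMap.baseChange M s)]; rfl
    rw [aeval_eq_sum_range] at h0
    rw [← h0]
    rw [LinearMap.sum_apply]
    refine Finset.sum_congr rfl fun j _ => ?_
    rw [LinearMap.smul_apply, ← LinearMap.baseChange_pow, LinearMap.baseChange_tmul,
      TensorProduct.smul_tmul', smul_eq_mul, mul_one]
  -- the component polynomials
  set p : Module.Basis.ofVectorSpaceIndex K M → K[X] :=
    fun i => ∑ j ∈ Finset.range (q.natDegree + 1), C (b.repr (q.coeff j) i) * X ^ j with hp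
  have hpc : ∀ i k, (p i).coeff k =
      if k ∈ Finset.range (q.natDegree + 1) then b.repr (q.coeff k) i else 0 := by
    intro i k
    rw [hp]
    simp only [finset_sum_coeff, coeff_C_mul, coeff_X_pow, mul_ite, mul_one, mul_zero]
    rw [Finset.sum_ite_eq (Finset.range (q.natDegree + 1)) k
      (fun j => b.repr (q.coeff j) i)]
  have hpzero : ∀ i, aeval s (p i) = 0 := by
    intro i
    ext v
    have h1 := congrArg (φ i) (key v)
    rw [map_sum, map_zero] at h1
    simp only [hφ_tmul] at h1
    rw [hp]
    simpa [Algebra.smul_def] using h1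
  have hdvd : ∀ i, (minpoly K s).map (algebraMap K M) ∣ (p i).map (algebraMap K M) :=
    fun i => Polynomial.map_dvd _ (minpoly.dvd K s (hpzero i))
  -- reassemble q from the components
  set T : Finset (Module.Basis.ofVectorSpaceIndex K M) :=
    (Finset.range (q.natDegree + 1)).biUnion (fun j => (b.repr (q.coeff j)).support) with hT
  have hqsum : q = ∑ i ∈ T, b i • (p i).map (algebraMap K M) := by
    ext k
    rw [finset_sum_coeff]
    simp only [coeff_smul, coeff_map, hpc, apply_ite (algebraMap K M), map_zero, smul_ite,
      smul_zero]
    by_cases hk : k ∈ Finset.range (q.natDegree + 1)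
    · simp only [if_pos hk]
      have hsub : (b.repr (q.coeff k)).support ⊆ T := by
        rw [hT]; exact Finset.subset_biUnion_of_mem (fun j => (b.repr (q.coeff j)).support) hk
      have htot := b.linearCombination_repr (q.coeff k)
      rw [Finsupp.linearCombination_apply, Finsupp.sum] at htot
      rw [Finset.sum_congr rfl (fun i _ =>
        show b i • algebraMap K M (b.repr (q.coeff k) i) = b.repr (q.coeff k) i • b i by
          rw [smul_eq_mul, Algebra.smul_def, mul_comm])]
      rw [← Finset.sum_subset hsub (fun i _ hi => by
        rw [Finsupp.notMem_support_iff.mp hi, zero_smul])]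
      exact htot.symm
    · simp only [if_neg hk, Finset.sum_const_zero]
      rw [Finset.mem_range, not_lt] at hk
      exact coeff_eq_zero_of_natDegree_lt hk
  rw [hqsum]
  refine Finset.dvd_sum fun i _ => ?_
  rw [smul_eq_C_mul]
  exact Dvd.dvd.mul_left (hdvd i) _

/-- If `x = s + n` is a Jordan-Chevalley decomposition such that `s` stays semisimple
(square-free minimal polynomial) after base change to every field extension `M/K`, then
every irreducible factor of the minimal polynomial of `x` is separable. -/
theorem separable_of_geometrically_semisimple {K V : Type} [Field K] [AddCommGroup V]
    [Module K V] [FiniteDimensional K V] (x s n : Module.End K V)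
    (hx : x = s + n) (hs : Squarefree (minpoly K s)) (hn : IsNilpotent n)
    (hc : Commute s n)
    (hbase : ∀ (M : Type) [Field M] [Algebra K M],
      Squarefree (minpoly M (LinearMap.baseChange M s : Module.End M (M ⊗[K] V)))) :
    ∀ g : K[X], Irreducible g → g ∣ minpoly K x → g.Separable := by
  intro g hg hgx
  set p := minpoly K s with hpdef
  -- Step A: g divides minpoly K s
  have hcx : Commute n x := by rw [hx]; exact hc.symm.add_right (Commute.refl n)
  have hxs : Commute x s := by rw [hx]; exact (Commute.refl s).add_left hc.symm
  set w : Module.End K V := ∑ j ∈ Finset.range (p.natDegree + 1),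
    p.coeff j • (∑ i ∈ Finset.range j, x ^ i * s ^ (j - 1 - i)) with hw
  have hnw : Commute n w := by
    refine Commute.sum_right _ _ _ fun j _ => ?_
    refine Commute.smul_right ?_ _
    exact Commute.sum_right _ _ _ fun i _ =>
      (hcx.pow_right i).mul_right (hc.symm.pow_right _)
  have hdiff : aeval x p - aeval s p = w * n := by
    rw [aeval_eq_sum_range, aeval_eq_sum_range, ← Finset.sum_sub_distrib, hw, Finset.sum_mul]
    refine Finset.sum_congr rfl fun j _ => ?_
    rw [← smul_sub, ← hxs.geom_sum₂_mul j, smul_mul_assoc,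
      show x - s = n from by rw [hx]; abel]
  have hnilp : IsNilpotent (aeval x p) := by
    have : aeval x p = w * n := by
      rw [← hdiff, hpdef, minpoly.aeval, sub_zero]
    rw [this]
    exact hnw.symm.isNilpotent_mul_left hn
  obtain ⟨k, hk⟩ := hnilp
  have hxk : minpoly K x ∣ p ^ k :=
    minpoly.dvd K x (by rw [map_pow, hk])
  have hgs : g ∣ p :=
    hg.prime.dvd_of_dvd_pow (dvd_trans hgx hxk)
  -- Step B: base change to the algebraic closure
  set M := AlgebraicClosure K with hM
  have hsq : Squarefree (p.map (algebraMap K M)) :=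
    (hbase M).squarefree_of_dvd (map_minpoly_dvd_minpoly_baseChange' s)
  have hgsq : Squarefree (g.map (algebraMap K M)) :=
    hsq.squarefree_of_dvd (Polynomial.map_dvd _ hgs)
  have hsep : (g.map (algebraMap K M)).Separable :=
    PerfectField.separable_iff_squarefree.mpr hgsq
  exact (separable_map (algebraMap K M)).mp hsep
end

section
/- Let K be a field, f ∈ K[T] monic irreducible, and x : V → V an f-primary endomorphism of a finite-dimensional K-vector space (i.e. the minimal polynomial of x is a power of f). If x = s + n is a Jordan-Chevalley decomposition of x (s semisimple, n nilpotent, commuting), then the minimal polynomial of s equals f. -/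
open Polynomial

/-- If `x` is `f`-primary (its minimal polynomial is a positive power of the monic
irreducible polynomial `f`) and `x = s + n` is a Jordan-Chevalley decomposition,
then the minimal polynomial of `s` equals `f`. -/
theorem minpoly_semisimple_part_eq {K V : Type} [Field K] [AddCommGroup V] [Module K V]
    [FiniteDimensional K V] [Nontrivial V] (f : K[X]) (hf : f.Monic) (hirr : Irreducible f)
    (x s n : Module.End K V) (k : ℕ) (hk : 1 ≤ k) (hprim : minpoly K x = f ^ k)
    (hx : x = s + n) (hs : Squarefree (minpoly K s)) (hn : IsNilpotent n)
    (hc : Commute s n) :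
    minpoly K s = f := by
  classical
  -- x commutes with n
  have hxn : x * n = n * x := by rw [hx]; simp [add_mul, mul_add, hc.eq]
  -- commutative subalgebra generated by x and n
  set A := Algebra.adjoin K ({x, n} : Set (Module.End K V)) with hA
  letI : CommRing A := Algebra.adjoinCommRingOfComm K (s := ({x, n} : Set (Module.End K V)))
    (by
      rintro a (rfl | rfl) b (rfl | rfl)
      · rfl
      · exact hxn
      · exact hxn.symm
      · rfl)
  have hxA : x ∈ A := Algebra.subset_adjoin (Set.mem_insert _ _)
  have hnA : n ∈ A := Algebra.subset_adjoin (Set.mem_insert_of_mem _ rfl)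
  set x' : A := ⟨x, hxA⟩ with hx'
  set n' : A := ⟨n, hnA⟩ with hn'
  set s' : A := x' - n' with hs'
  have hval : ∀ a : A, (Polynomial.aeval a f : A).val = Polynomial.aeval (a : Module.End K V) f := by
    intro a
    exact (Polynomial.aeval_algHom_apply A.val a f).symm
  -- n' is nilpotent
  have hn' : IsNilpotent n' := by
    obtain ⟨m, hm⟩ := hn
    exact ⟨m, Subtype.ext (by simpa using hm)⟩
  -- aeval x' f is nilpotent
  have hxf : IsNilpotent (Polynomial.aeval x' f) := by
    refine ⟨k, Subtype.ext ?_⟩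
    have : ((Polynomial.aeval x' f) ^ k).val = (Polynomial.aeval x f) ^ k := by
      simp [hval x']
      rfl
    rw [this]
    have := minpoly.aeval K x
    rw [hprim, map_pow] at this
    simpa using this
  -- aeval s' f is nilpotent
  have hsf' : IsNilpotent (Polynomial.aeval s' f) := by
    have hsub : IsNilpotent (s' - x') := by
      have : s' - x' = -n' := by rw [hs']; ring
      rw [this]
      exact hn'.neg
    have h1 : IsNilpotent (Polynomial.aeval s' f - Polynomial.aeval x' f) :=
      isNilpotent_aeval_sub_of_isNilpotent_sub f hsub
    have h2 := (Commute.all _ _).isNilpotent_add h1 hxf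
    rwa [sub_add_cancel] at h2
  -- hence aeval s f is nilpotent
  have hsV : (s' : Module.End K V) = s := by
    simp [hs', hx', hn', hx]
    exact add_sub_cancel_right s n
  have hsf : IsNilpotent (Polynomial.aeval s f) := by
    obtain ⟨m, hm⟩ := hsf'
    refine ⟨m, ?_⟩
    have : ((Polynomial.aeval s' f) ^ m).val = (Polynomial.aeval s f) ^ m := by
      simp [hval s', hsV]
    rw [← this, hm]; rfl
  obtain ⟨m, hm⟩ := hsf
  -- minpoly s divides f ^ m
  have hdvd : minpoly K s ∣ f ^ m := by
    apply minpoly.dvd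
    rw [map_pow, hm]
  have hprime : Prime f := hirr.prime
  obtain ⟨i, him, hassoc⟩ := (dvd_prime_pow hprime m).mp hdvd
  -- minpoly s is not a unit
  have hint : IsIntegral K s := Algebra.IsIntegral.isIntegral s
  have hpos : 0 < (minpoly K s).natDegree := minpoly.natDegree_pos hint
  have hnotunit : ¬ IsUnit (minpoly K s) :=
    Polynomial.not_isUnit_of_natDegree_pos _ hpos
  -- i = 1
  have hi1 : i = 1 := by
    rcases Nat.lt_or_ge i 2 with h2 | h2
    · interval_cases i
      · exfalso
        exact hnotunit (hassoc.symm.isUnit (by simpa using isUnit_one))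
      · rfl
    · exfalso
      have : f * f ∣ minpoly K s := by
        refine dvd_trans ?_ hassoc.symm.dvd
        have : f * f = f ^ 2 := by ring
        rw [this]
        exact pow_dvd_pow f h2
      exact hirr.not_isUnit (hs f this)
  rw [hi1, pow_one] at hassoc
  exact Polynomial.eq_of_monic_of_associated (minpoly.monic hint) hf hassoc
end

section
/- Let K be a field, x : V → V an endomorphism of a finite-dimensional K-vector space, and g ∈ K[T] a polynomial with g(x) = 0. If x = s + n with s, n commuting and n nilpotent, then g(s) is a multiple of n in the commutative subring K[s,n] of End(V); in particular g(s) is nilpotent. -/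
open Polynomial

private lemma pow_add_aux {K V : Type} [Field K] [AddCommGroup V] [Module K V]
    (s n : Module.End K V) (hc : Commute s n) (k : ℕ) :
    ∃ c ∈ Algebra.adjoin K {s, n}, (s + n) ^ k = s ^ k + n * c := by
  induction k with
  | zero => exact ⟨0, Subalgebra.zero_mem _, by simp⟩
  | succ k ih =>
    obtain ⟨c, hcmem, hck⟩ := ih
    have hsA : s ∈ Algebra.adjoin K ({s, n} : Set (Module.End K V)) :=
      Algebra.subset_adjoin (by simp)
    have hnA : n ∈ Algebra.adjoin K ({s, n} : Set (Module.End K V)) :=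
      Algebra.subset_adjoin (by simp)
    refine ⟨s ^ k + c * s + c * n, ?_, ?_⟩
    · exact Subalgebra.add_mem _ (Subalgebra.add_mem _ (Subalgebra.pow_mem _ hsA _)
        (Subalgebra.mul_mem _ hcmem hsA)) (Subalgebra.mul_mem _ hcmem hnA)
    · have hns : n * s ^ k = s ^ k * n := ((hc.symm.pow_right k)).eq
      calc (s + n) ^ (k + 1) = (s + n) ^ k * (s + n) := by rw [pow_succ]
        _ = (s ^ k + n * c) * (s + n) := by rw [hck]
        _ = s ^ (k + 1) + s ^ k * n + (n * (c * s) + n * (c * n)) := by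
            rw [pow_succ]; noncomm_ring
        _ = s ^ (k + 1) + n * (s ^ k + c * s + c * n) := by
            rw [pow_succ, ← hns]; noncomm_ring

private lemma aeval_add_aux {K V : Type} [Field K] [AddCommGroup V] [Module K V]
    (s n : Module.End K V) (hc : Commute s n) (g : K[X]) :
    ∃ c ∈ Algebra.adjoin K {s, n},
      Polynomial.aeval (s + n) g = Polynomial.aeval s g + n * c := by
  induction g using Polynomial.induction_on' with
  | add p q hp hq =>
    obtain ⟨c₁, h₁, e₁⟩ := hp
    obtain ⟨c₂, h₂, e₂⟩ := hq
    exact ⟨c₁ + c₂, Subalgebra.add_mem _ h₁ h₂, by simp only [map_add, e₁, e₂, mul_add]; abel⟩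
  | monomial k a =>
    obtain ⟨c, hcmem, hck⟩ := pow_add_aux s n hc k
    refine ⟨a • c, Subalgebra.smul_mem _ hcmem a, ?_⟩
    simp [Polynomial.aeval_monomial, Algebra.algebraMap_eq_smul_one, hck, mul_add,
      smul_mul_assoc, mul_smul_comm]

/-- If `g` annihilates `x = s + n` with `s, n` commuting and `n` nilpotent, then `g(s)`
is a multiple of `n` in the commutative subring `K[s,n]` of `End_K(V)`; in particular
`g(s)` is nilpotent. -/
theorem aeval_semisimple_part_multiple_of_nilpotent {K V : Type} [Field K] [AddCommGroup V]
    [Module K V] [FiniteDimensional K V] (x s n : Module.End K V) (g : K[X])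
    (hg : Polynomial.aeval x g = 0) (hx : x = s + n) (hc : Commute s n)
    (hn : IsNilpotent n) :
    (∃ c ∈ Algebra.adjoin K {s, n}, Polynomial.aeval s g = c * n) ∧
      IsNilpotent (Polynomial.aeval s g) := by
  obtain ⟨c, hcmem, hceq⟩ := aeval_add_aux s n hc g
  rw [hx] at hg
  have hgs : Polynomial.aeval s g = -(n * c) := by
    rw [hceq] at hg; exact eq_neg_of_add_eq_zero_left hg
  have hnc : Commute n c :=
    Algebra.commute_of_mem_adjoin_of_forall_mem_commute hcmem
      (by rintro b (rfl | rfl); exacts [hc.symm, Commute.refl _])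
  refine ⟨⟨-c, Subalgebra.neg_mem _ hcmem, by rw [hgs, hnc.eq, neg_mul]⟩, ?_⟩
  rw [hgs]
  exact (hnc.isNilpotent_mul_right hn).neg
end

section
/- Let K be a field and f ∈ K[T] a monic irreducible inseparable polynomial (so that its formal derivative f' is zero). Let C_f be the companion matrix of f and E any nonzero matrix of size deg f commuting with C_f. Then the block matrix M = [[C_f, E],[0, C_f]] satisfies f(M) = 0; hence its minimal polynomial is f and M is semisimple. -/
open Polynomial

/-- The companion matrix of a monic polynomial `f`: it represents multiplication by `T`
on `K[T]/(f)` with respect to the standard basis. -/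
def companionMatrix {K : Type} [Field K] (f : K[X]) :
    Matrix (Fin f.natDegree) (Fin f.natDegree) K :=
  fun i j => if (i : ℕ) = (j : ℕ) + 1 then 1
    else if (j : ℕ) = f.natDegree - 1 then -f.coeff i else 0

section Aux

variable {K : Type} [Field K]

lemma comp_pow_apply (f : K[X]) (hn : 0 < f.natDegree) :
    ∀ k, k < f.natDegree → ∀ i : Fin f.natDegree,
      ((companionMatrix f) ^ k) i ⟨0, hn⟩ = if (i : ℕ) = k then 1 else 0 := by
  intro k
  induction k with
  | zero =>
    intro _ i
    simp [Matrix.one_apply, Fin.ext_iff]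
  | succ k ih =>
    intro hk i
    have hk' : k < f.natDegree := Nat.lt_of_succ_lt hk
    rw [pow_succ', Matrix.mul_apply]
    have hsum : ∀ j : Fin f.natDegree,
        companionMatrix f i j * ((companionMatrix f) ^ k) j ⟨0, hn⟩
          = if j = ⟨k, hk'⟩ then companionMatrix f i j else 0 := by
      intro j
      rw [ih hk']
      by_cases h : (j : ℕ) = k
      · simp [h, Fin.ext_iff]
      · simp [h, Fin.ext_iff]
    rw [Finset.sum_congr rfl (fun j _ => hsum j), Finset.sum_ite_eq' Finset.univ]
    simp only [Finset.mem_univ, if_true]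
    have hne : k ≠ f.natDegree - 1 := by omega
    simp [companionMatrix, hne]

lemma comp_commute (f : K[X]) (g : K[X]) (m : ℕ) :
    aeval (companionMatrix f) g * (companionMatrix f) ^ m
      = (companionMatrix f) ^ m * aeval (companionMatrix f) g := by
  have h1 : aeval (companionMatrix f) g * (companionMatrix f) ^ m
      = aeval (companionMatrix f) (g * X ^ m) := by simp
  have h2 : (companionMatrix f) ^ m * aeval (companionMatrix f) g
      = aeval (companionMatrix f) (X ^ m * g) := by simp
  rw [h1, h2, mul_comm g]

lemma comp_aeval_col0 (f : K[X]) (hf : f.Monic) (hn : 0 < f.natDegree)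
    (i : Fin f.natDegree) :
    (aeval (companionMatrix f) f) i ⟨0, hn⟩ = 0 := by
  rw [aeval_eq_sum_range, Finset.sum_range_succ]
  rw [Matrix.add_apply, Matrix.sum_apply]
  have hterm : ∀ k ∈ Finset.range f.natDegree,
      (f.coeff k • (companionMatrix f) ^ k) i ⟨0, hn⟩
        = if k = (i : ℕ) then f.coeff k else 0 := by
    intro k hk
    rw [Finset.mem_range] at hk
    rw [Matrix.smul_apply, comp_pow_apply f hn k hk i]
    by_cases h : (i : ℕ) = k
    · simp [h]
    · simp [h, Ne.symm h]
  rw [Finset.sum_congr rfl hterm, Finset.sum_ite_eq' (Finset.range f.natDegree)]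
  have hmem : (i : ℕ) ∈ Finset.range f.natDegree := Finset.mem_range.2 i.2
  rw [if_pos hmem]
  -- now compute the top term: coeff n • C^n i 0
  have hlast : ((companionMatrix f) ^ f.natDegree) i ⟨0, hn⟩ = -f.coeff i := by
    have hp : companionMatrix f * companionMatrix f ^ (f.natDegree - 1)
        = companionMatrix f ^ f.natDegree := by
      rw [← pow_succ', Nat.sub_add_cancel hn]
    rw [← hp, Matrix.mul_apply]
    have hk' : f.natDegree - 1 < f.natDegree := by omega
    have hsum : ∀ j : Fin f.natDegree,
        companionMatrix f i j * ((companionMatrix f) ^ (f.natDegree - 1)) j ⟨0, hn⟩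
          = if j = ⟨f.natDegree - 1, hk'⟩ then companionMatrix f i j else 0 := by
      intro j
      rw [comp_pow_apply f hn _ hk' j]
      by_cases h : (j : ℕ) = f.natDegree - 1
      · simp [h, Fin.ext_iff]
      · simp [h, Fin.ext_iff]
    rw [Finset.sum_congr rfl (fun j _ => hsum j), Finset.sum_ite_eq' Finset.univ]
    simp only [Finset.mem_univ, if_true]
    have hi : (i : ℕ) ≠ (f.natDegree - 1) + 1 := by omega
    simp [companionMatrix, hi]
  rw [Matrix.smul_apply, hlast]
  rw [Polynomial.Monic.coeff_natDegree hf]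
  simp

lemma comp_aeval_zero (f : K[X]) (hf : f.Monic) (hn : 0 < f.natDegree) :
    aeval (companionMatrix f) f = 0 := by
  ext i j
  have key : (aeval (companionMatrix f) f) i j
      = (aeval (companionMatrix f) f * (companionMatrix f) ^ (j : ℕ)) i ⟨0, hn⟩ := by
    rw [Matrix.mul_apply]
    have hsum : ∀ k : Fin f.natDegree,
        (aeval (companionMatrix f) f) i k * ((companionMatrix f) ^ (j : ℕ)) k ⟨0, hn⟩
          = if k = j then (aeval (companionMatrix f) f) i k else 0 := by
      intro k
      rw [comp_pow_apply f hn _ j.2 k]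
      by_cases h : (k : ℕ) = (j : ℕ)
      · simp [h, Fin.ext_iff]
      · simp [h, Fin.ext_iff]
    rw [Finset.sum_congr rfl (fun k _ => hsum k), Finset.sum_ite_eq' Finset.univ]
    simp
  rw [key, comp_commute, Matrix.mul_apply]
  have : ∀ k : Fin f.natDegree,
      ((companionMatrix f) ^ (j : ℕ)) i k * (aeval (companionMatrix f) f) k ⟨0, hn⟩ = 0 := by
    intro k
    rw [comp_aeval_col0 f hf hn k, mul_zero]
  simp [this]

lemma block_pow (f : K[X]) (E : Matrix (Fin f.natDegree) (Fin f.natDegree) K)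
    (hcomm : E * companionMatrix f = companionMatrix f * E) (k : ℕ) :
    (Matrix.fromBlocks (companionMatrix f) E 0 (companionMatrix f)) ^ k =
      Matrix.fromBlocks ((companionMatrix f) ^ k)
        (aeval (companionMatrix f) (derivative (X ^ k : K[X])) * E) 0
        ((companionMatrix f) ^ k) := by
  induction k with
  | zero => simp [Matrix.fromBlocks_one]
  | succ k ih =>
    rw [pow_succ, ih, Matrix.fromBlocks_multiply]
    have hd : derivative (X ^ (k + 1) : K[X]) = derivative (X ^ k : K[X]) * X + X ^ k := by
      rw [pow_succ, derivative_mul, derivative_X, mul_one]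
    have htr : (companionMatrix f) ^ k * E
        + aeval (companionMatrix f) (derivative (X ^ k : K[X])) * E * companionMatrix f
        = (aeval (companionMatrix f) (derivative (X ^ k : K[X])) * companionMatrix f
            + (companionMatrix f) ^ k) * E := by
      rw [add_mul, mul_assoc, hcomm, ← mul_assoc, add_comm]
    rw [hd]
    simp only [map_add, map_mul, map_pow, aeval_X, Matrix.mul_zero, Matrix.zero_mul,
      add_zero, zero_add, htr, pow_succ]

lemma block_aeval (f : K[X]) (E : Matrix (Fin f.natDegree) (Fin f.natDegree) K)
    (hcomm : E * companionMatrix f = companionMatrix f * E) (g : K[X]) :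
    aeval (Matrix.fromBlocks (companionMatrix f) E 0 (companionMatrix f)) g =
      Matrix.fromBlocks (aeval (companionMatrix f) g)
        (aeval (companionMatrix f) (derivative g) * E) 0
        (aeval (companionMatrix f) g) := by
  induction g using Polynomial.induction_on' with
  | add p q hp hq =>
    simp [map_add, hp, hq, add_mul, Matrix.fromBlocks_add]
  | monomial k a =>
    rw [← C_mul_X_pow_eq_monomial, map_mul, aeval_C, map_pow, aeval_X,
      block_pow f E hcomm, derivative_C_mul, map_mul, aeval_C]
    simp only [map_pow, aeval_X, map_mul, aeval_C, Algebra.algebraMap_eq_smul_one,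
      smul_mul_assoc, one_mul, smul_zero, Matrix.fromBlocks_smul]

end Aux

/-- If `f` is monic irreducible with vanishing formal derivative, `C_f` its companion
matrix and `E ≠ 0` commutes with `C_f`, then the block matrix `M = [[C_f, E], [0, C_f]]`
satisfies `f(M) = 0`; hence its minimal polynomial is `f` and `M` is semisimple
(square-free minimal polynomial). -/
theorem block_matrix_semisimple {K : Type} [Field K] (f : K[X]) (hf : f.Monic)
    (hirr : Irreducible f) (hder : derivative f = 0)
    (E : Matrix (Fin f.natDegree) (Fin f.natDegree) K) (hE : E ≠ 0)
    (hcomm : E * companionMatrix f = companionMatrix f * E) :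
    Polynomial.aeval (Matrix.fromBlocks (companionMatrix f) E 0 (companionMatrix f)) f = 0 ∧
    minpoly K (Matrix.fromBlocks (companionMatrix f) E 0 (companionMatrix f)) = f ∧
    Squarefree (minpoly K (Matrix.fromBlocks (companionMatrix f) E 0 (companionMatrix f))) := by
  have hn : 0 < f.natDegree := hirr.natDegree_pos
  haveI : Nonempty (Fin f.natDegree) := ⟨⟨0, hn⟩⟩
  have h1 : Polynomial.aeval
      (Matrix.fromBlocks (companionMatrix f) E 0 (companionMatrix f)) f = 0 := by
    rw [block_aeval f E hcomm, hder, map_zero, zero_mul,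
      comp_aeval_zero f hf hn, Matrix.fromBlocks_zero]
  have h2 : minpoly K (Matrix.fromBlocks (companionMatrix f) E 0 (companionMatrix f)) = f :=
    (minpoly.eq_of_irreducible_of_monic hirr h1 hf).symm
  refine ⟨h1, h2, ?_⟩
  rw [h2]
  exact hirr.squarefree
end

section
/- Let K be a field, f ∈ K[T] monic irreducible with f' = 0, and C_{f²} the companion matrix of f². Then C_{f²} admits no Jordan-Chevalley decomposition: there are no commuting matrices S, N over K with C_{f²} = S + N, N nilpotent, and S having square-free minimal polynomial. -/
open Polynomial

section Aux

variable {K : Type} [Field K]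

lemma lmul_apply_aux {A : Type*} [CommRing A] [Algebra K A] (a b : A) :
    Algebra.lmul K A a b = a * b := rfl

lemma root_pow_natDegree (g : K[X]) (hg : g.Monic) :
    AdjoinRoot.root g ^ g.natDegree
      = ∑ i : Fin g.natDegree, (-g.coeff i) • AdjoinRoot.root g ^ (i : ℕ) := by
  have h0 : aeval (AdjoinRoot.root g) g = 0 := by
    rw [AdjoinRoot.aeval_eq, AdjoinRoot.mk_self]
  have hsum := Polynomial.aeval_eq_sum_range (R := K) (p := g) (AdjoinRoot.root g)
  rw [Finset.sum_range_succ, hg.coeff_natDegree, one_smul, h0] at hsum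
  have h1 : AdjoinRoot.root g ^ g.natDegree
      = -∑ i ∈ Finset.range g.natDegree, g.coeff i • AdjoinRoot.root g ^ i := by
    rw [eq_neg_iff_add_eq_zero, add_comm, hsum]
  rw [h1, ← Finset.sum_neg_distrib]
  rw [Finset.sum_range fun i => -(g.coeff i • AdjoinRoot.root g ^ i)]
  exact Finset.sum_congr rfl fun i _ => (neg_smul _ _).symm

lemma toMatrix_lmul_root (g : K[X]) (hg : g.Monic) :
    LinearMap.toMatrixAlgEquiv (AdjoinRoot.powerBasis' hg).basis
      (Algebra.lmul K (AdjoinRoot g) (AdjoinRoot.root g)) = companionMatrix g := by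
  set pb := AdjoinRoot.powerBasis' hg with hpb
  have hb : ∀ i : Fin g.natDegree, pb.basis i = AdjoinRoot.root g ^ (i : ℕ) :=
    fun i => pb.basis_eq_pow i
  ext i j
  have hi : (i : ℕ) < g.natDegree := i.isLt
  have hjlt : (j : ℕ) < g.natDegree := j.isLt
  rw [LinearMap.toMatrixAlgEquiv_apply, lmul_apply_aux, hb j, ← pow_succ']
  by_cases hj : (j : ℕ) = g.natDegree - 1
  · have hjn : (j : ℕ) + 1 = g.natDegree := by omega
    rw [hjn, root_pow_natDegree g hg]
    have hsum_eq : ∑ i : Fin g.natDegree, (-g.coeff i) • AdjoinRoot.root g ^ (i : ℕ)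
        = ∑ i : Fin g.natDegree, (-g.coeff i) • pb.basis i :=
      Finset.sum_congr rfl fun i _ => by rw [hb]
    have h3 : (pb.basis.repr (∑ i : Fin g.natDegree, (-g.coeff i) • pb.basis i)) i
        = -g.coeff i := congrFun (pb.basis.repr_sum_self fun i => -g.coeff i) i
    rw [hsum_eq, h3]
    simp only [companionMatrix]
    have hne : ¬ (i : ℕ) = (j : ℕ) + 1 := by omega
    rw [if_neg hne, if_pos hj]
  · have hlt : (j : ℕ) + 1 < g.natDegree := by omega
    have h4 : AdjoinRoot.root g ^ ((j : ℕ) + 1) = pb.basis ⟨(j : ℕ) + 1, hlt⟩ := by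
      exact (hb ⟨(j : ℕ) + 1, hlt⟩).symm
    rw [h4, pb.basis.repr_self]
    simp only [companionMatrix]
    rw [Finsupp.single_apply]
    by_cases hij : (i : ℕ) = (j : ℕ) + 1
    · rw [if_pos hij, if_pos (by exact Fin.ext hij.symm)]
    · rw [if_neg hij, if_neg (fun h => hij (by rw [← h])), if_neg hj]

lemma exists_lmul_of_commute (g : K[X]) (hg : g.Monic)
    {M : Matrix (Fin g.natDegree) (Fin g.natDegree) K}
    (hM : M * companionMatrix g = companionMatrix g * M) :
    ∃ a : AdjoinRoot g, M = LinearMap.toMatrixAlgEquiv (AdjoinRoot.powerBasis' hg).basis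
      (Algebra.lmul K (AdjoinRoot g) a) := by
  set pb := AdjoinRoot.powerBasis' hg with hpb
  set E := LinearMap.toMatrixAlgEquiv (R := K) pb.basis with hE
  set φ := E.symm M with hφ
  have hC : companionMatrix g = E (Algebra.lmul K (AdjoinRoot g) (AdjoinRoot.root g)) :=
    (toMatrix_lmul_root g hg).symm
  have hcomm : φ * (Algebra.lmul K (AdjoinRoot g) (AdjoinRoot.root g))
      = (Algebra.lmul K (AdjoinRoot g) (AdjoinRoot.root g)) * φ := by
    apply E.injective
    have hM' : E φ = M := E.apply_symm_apply M
    rw [map_mul, map_mul, ← hC, hM']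
    exact hM
  have hcomm' : ∀ x : AdjoinRoot g, φ (AdjoinRoot.root g * x) = AdjoinRoot.root g * φ x := by
    intro x
    have := LinearMap.congr_fun hcomm x
    simpa [Module.End.mul_apply, lmul_apply_aux] using this
  have hpow : ∀ m : ℕ, φ (AdjoinRoot.root g ^ m) = AdjoinRoot.root g ^ m * φ 1 := by
    intro m
    induction m with
    | zero => simp
    | succ m ih =>
      rw [pow_succ', hcomm', ih, mul_assoc]
  refine ⟨φ 1, ?_⟩
  have hφeq : φ = Algebra.lmul K (AdjoinRoot g) (φ 1) := by
    apply pb.basis.ext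
    intro i
    rw [show pb.basis i = AdjoinRoot.root g ^ (i : ℕ) from pb.basis_eq_pow i,
      hpow, lmul_apply_aux, mul_comm]
  rw [← hφeq]
  exact (E.apply_symm_apply M).symm

end Aux

/-- If `f` is monic irreducible and inseparable (`f' = 0`), then the companion matrix of
`f²` admits no Jordan-Chevalley decomposition. -/
theorem companion_sq_no_jordan_chevalley {K : Type} [Field K] (f : K[X]) (hf : f.Monic)
    (hirr : Irreducible f) (hder : derivative f = 0) :
    ¬ ∃ S N : Matrix (Fin (f ^ 2).natDegree) (Fin (f ^ 2).natDegree) K,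
        companionMatrix (f ^ 2) = S + N ∧ S * N = N * S ∧ IsNilpotent N ∧
        Squarefree (minpoly K S) := by
  rintro ⟨S, N, hSN, hcomm, hnil, hsq⟩
  have hm2 : (f ^ 2).Monic := hf.pow 2
  have hdpos : 0 < f.natDegree := hirr.natDegree_pos
  set A := AdjoinRoot (f ^ 2) with hA
  set pb := AdjoinRoot.powerBasis' hm2 with hpb
  set E := LinearMap.toMatrixAlgEquiv (R := K) pb.basis with hE
  set L := Algebra.lmul K A with hL
  have hC : companionMatrix (f ^ 2) = E (L (AdjoinRoot.root (f ^ 2))) :=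
    (toMatrix_lmul_root (f ^ 2) hm2).symm
  -- S and N commute with the companion matrix
  have hSC : S * companionMatrix (f ^ 2) = companionMatrix (f ^ 2) * S := by
    rw [hSN, mul_add, add_mul, hcomm]
  have hNC : N * companionMatrix (f ^ 2) = companionMatrix (f ^ 2) * N := by
    rw [hSN, mul_add, add_mul, hcomm]
  obtain ⟨s, hs⟩ := exists_lmul_of_commute (f ^ 2) hm2 hSC
  obtain ⟨nn, hnn⟩ := exists_lmul_of_commute (f ^ 2) hm2 hNC
  -- root = s + nn
  have hroot : AdjoinRoot.root (f ^ 2) = s + nn := by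
    apply Algebra.lmul_injective (R := K)
    apply E.injective
    rw [← hC, map_add, map_add, ← hs, ← hnn, hSN]
    rfl
  -- nn is nilpotent
  obtain ⟨k, hk⟩ := hnil
  have hnk : nn ^ k = 0 := by
    have h1 : E (L (nn ^ k)) = 0 := by
      rw [map_pow, map_pow, ← hnn]
      exact hk
    have h2 : L (nn ^ k) = 0 := by
      apply E.injective; rw [h1, map_zero]
    calc nn ^ k = L (nn ^ k) 1 := by rw [lmul_apply_aux, mul_one]
    _ = 0 := by rw [h2]; rfl
  -- minpoly S = minpoly s
  have hmin : minpoly K S = minpoly K s := by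
    rw [hs]
    exact (minpoly.algEquiv_eq E (L s)).trans
      (minpoly.algHom_eq (Algebra.lmul K A) (Algebra.lmul_injective) s)
  -- f (root) ≠ 0
  have hfr : aeval (AdjoinRoot.root (f ^ 2)) f ≠ 0 := by
    rw [AdjoinRoot.aeval_eq, Ne, AdjoinRoot.mk_eq_zero]
    intro hdvd
    have h1 : (f ^ 2).natDegree ≤ f.natDegree :=
      Polynomial.natDegree_le_of_dvd hdvd hf.ne_zero
    rw [Polynomial.natDegree_pow] at h1
    omega
  -- f (root) ^ 2 = 0
  have hfr2 : (aeval (AdjoinRoot.root (f ^ 2)) f) ^ 2 = 0 := by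
    rw [← map_pow, AdjoinRoot.aeval_eq, AdjoinRoot.mk_self]
  -- nn is a multiple of f(root), so nn ^ 2 = 0
  obtain ⟨p, hp⟩ := AdjoinRoot.mk_surjective (g := f ^ 2) nn
  have hfp : f ∣ p := by
    have hnk1 : nn ^ (k + 1) = 0 := by
      have h5 : nn ^ (k + 1) = nn ^ k * nn := pow_succ nn k
      rw [h5, hnk, zero_mul]
    have h1 : AdjoinRoot.mk (f ^ 2) (p ^ (k + 1)) = 0 := by
      rw [map_pow, hp, hnk1]
    rw [AdjoinRoot.mk_eq_zero] at h1
    exact hirr.prime.dvd_of_dvd_pow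
      (dvd_trans (dvd_pow_self f two_ne_zero) h1)
  obtain ⟨h', hp'⟩ := hfp
  have hnnsq : nn ^ 2 = 0 := by
    have h1 : nn = aeval (AdjoinRoot.root (f ^ 2)) f * AdjoinRoot.mk (f ^ 2) h' := by
      rw [← hp, hp', map_mul, AdjoinRoot.aeval_eq]
    rw [h1, mul_pow, hfr2, zero_mul]
  -- aeval s f is nilpotent
  set F := f.map (algebraMap K A) with hF
  have hFs : F.eval s = aeval s f := by rw [hF, Polynomial.eval_map, ← Polynomial.aeval_def]
  have hFr : F.eval (AdjoinRoot.root (f ^ 2)) = aeval (AdjoinRoot.root (f ^ 2)) f := by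
    rw [hF, Polynomial.eval_map, ← Polynomial.aeval_def]
  have hdiff : IsNilpotent (aeval (AdjoinRoot.root (f ^ 2)) f - aeval s f) := by
    obtain ⟨c, hc⟩ := Polynomial.sub_dvd_eval_sub (AdjoinRoot.root (f ^ 2)) s F
    have hrs : AdjoinRoot.root (f ^ 2) - s = nn := by rw [hroot]; ring
    refine ⟨2, ?_⟩
    rw [← hFr, ← hFs, hc, hrs, mul_pow, hnnsq, zero_mul]
  have hsf_nil : IsNilpotent (aeval s f) := by
    have h1 : aeval s f = aeval (AdjoinRoot.root (f ^ 2)) f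
        - (aeval (AdjoinRoot.root (f ^ 2)) f - aeval s f) := by ring
    rw [h1]
    exact Commute.isNilpotent_sub (Commute.all _ _) ⟨2, hfr2⟩ hdiff
  -- hence aeval s f = 0
  obtain ⟨m, hm⟩ := hsf_nil
  have hdvd2 : minpoly K s ∣ f ^ (m + 1) := by
    apply minpoly.dvd
    have h5 : aeval s f ^ (m + 1) = aeval s f ^ m * aeval s f := pow_succ _ m
    rw [map_pow, h5, hm, zero_mul]
  have hmf : minpoly K s ∣ f :=
    ((hmin ▸ hsq : Squarefree (minpoly K s)).dvd_pow_iff_dvd (Nat.succ_ne_zero m)).mp hdvd2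
  have hsf0 : aeval s f = 0 := by
    obtain ⟨q, hq⟩ := hmf
    have h6 : aeval s (minpoly K s * q) = 0 := by rw [map_mul, minpoly.aeval, zero_mul]
    exact (congrArg (aeval s) hq).trans h6
  -- Taylor expansion: f(root) = f(s + nn) ∈ (nn²) = 0, contradiction
  have hc0 : (Polynomial.taylor s F).coeff 0 = 0 := by
    rw [Polynomial.taylor_coeff_zero, hFs, hsf0]
  have hc1 : (Polynomial.taylor s F).coeff 1 = 0 := by
    rw [Polynomial.taylor_coeff_one, hF, Polynomial.derivative_map, hder,
      Polynomial.map_zero, Polynomial.eval_zero]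
  have hX2 : (X : A[X]) ^ 2 ∣ Polynomial.taylor s F := by
    rw [Polynomial.X_pow_dvd_iff]
    intro d hd
    interval_cases d
    · exact hc0
    · exact hc1
  obtain ⟨r, hr⟩ := hX2
  apply hfr
  have h1 : (Polynomial.taylor s F).eval nn = F.eval (nn + s) := Polynomial.taylor_eval s F nn
  rw [hr, Polynomial.eval_mul, Polynomial.eval_pow, Polynomial.eval_X, hnnsq, zero_mul] at h1
  have h2 : nn + s = AdjoinRoot.root (f ^ 2) := by rw [hroot]; ring
  rw [h2, hFr] at h1
  exact h1.symm
end

section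
/- Let K be a field, f ∈ K[T] monic irreducible of inseparability degree q, L = K[S]/f(S), and write f = (T − S)^q · g in L[T] with g(S) ≠ 0. For a ≥ 1 set V = L[U]/(U^a) with x acting as multiplication by S + U. Then for every i ≥ 0, dim_L ker f(x)^i = min(iq, a). -/
open Polynomial

/-- In `L[U]/(U^a)`, the kernel of multiplication by `U^m` has dimension `min m a`. -/
lemma aux_finrank_ker_mulLeft_root_pow {L : Type} [Field L] (a : ℕ) (ha : 1 ≤ a) (m : ℕ) :
    Module.finrank L (LinearMap.ker (LinearMap.mulLeft L
      ((AdjoinRoot.root (X ^ a : L[X])) ^ m))) = min m a := by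
  set u : AdjoinRoot (X ^ a : L[X]) := AdjoinRoot.root (X ^ a) with hu_def
  have hX : (X ^ a : L[X]).Monic := monic_X_pow a
  have hu : u ^ a = 0 := by
    rw [hu_def, ← AdjoinRoot.mk_X, ← map_pow, AdjoinRoot.mk_self]
  set pb := AdjoinRoot.powerBasis' hX with hpb
  have hdim : (X ^ a : L[X]).natDegree = a := natDegree_X_pow a
  set B : Module.Basis (Fin a) L (AdjoinRoot (X ^ a : L[X])) :=
    pb.basis.reindex (finCongr hdim) with hB_def
  have hB : ∀ j : Fin a, B j = u ^ (j : ℕ) := by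
    intro j
    rw [hB_def, Module.Basis.reindex_apply, pb.basis_eq_pow]
    simp [hpb, hu_def]
    rfl
  have hfr : Module.finrank L (AdjoinRoot (X ^ a : L[X])) = a := by
    rw [pb.finrank, hpb]
    simpa using hdim
  rcases le_or_gt a m with h | h
  · have hzero : u ^ m = 0 := by
      calc u ^ m = u ^ a * u ^ (m - a) := by rw [← pow_add, Nat.add_sub_cancel' h]
        _ = 0 := by rw [hu, zero_mul]
    rw [hzero, min_eq_right h, LinearMap.mulLeft_zero_eq_zero, LinearMap.ker_zero,
      finrank_top, hfr]
  · have hm : m ≤ a := h.le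
    set emb : Fin m → Fin a := fun j => ⟨a - m + j, by omega⟩ with hemb_def
    have hemb : Function.Injective emb := by
      intro j k hjk
      have := congrArg Fin.val hjk
      simp only [hemb_def] at this
      exact Fin.ext (by omega)
    have hcoord : ∀ (k : ℕ) (hk1 : k < a - m),
        B.coord ⟨k, by omega⟩ = (B.coord ⟨m + k, by omega⟩).comp
          (LinearMap.mulLeft L (u ^ m)) := by
      intro k hk1
      apply B.ext
      intro j
      rw [LinearMap.comp_apply, LinearMap.mulLeft_apply,
        show u ^ m * B j = u ^ (m + (j : ℕ)) by rw [hB, pow_add]]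
      by_cases hj : m + (j : ℕ) < a
      · rw [show u ^ (m + (j : ℕ)) = B ⟨m + (j : ℕ), hj⟩ from (hB ⟨m + (j : ℕ), hj⟩).symm]
        simp only [Module.Basis.coord_apply, Module.Basis.repr_self, Finsupp.single_apply, Fin.ext_iff,
          Fin.val_mk]
        split_ifs <;> first | rfl | omega
      · rw [show u ^ (m + (j : ℕ)) = 0 by
            calc u ^ (m + (j : ℕ)) = u ^ a * u ^ (m + (j : ℕ) - a) := by
                  rw [← pow_add, Nat.add_sub_cancel' (by omega)]
              _ = 0 := by rw [hu, zero_mul]]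
        rw [map_zero]
        simp only [Module.Basis.coord_apply, Module.Basis.repr_self, Finsupp.single_apply]
        rw [if_neg]
        intro e
        have hv : (j : ℕ) = k := by simpa using congrArg Fin.val e
        omega
    have hker : LinearMap.ker (LinearMap.mulLeft L (u ^ m)) =
        Submodule.span L (Set.range (B ∘ emb)) := by
      apply le_antisymm
      · intro x hx
        rw [Set.range_comp, Module.Basis.mem_span_image]
        intro k hk
        simp only [Finset.mem_coe, Finsupp.mem_support_iff] at hk
        rw [Set.mem_range]
        by_contra hcon
        have hklt : (k : ℕ) < a - m := by
          by_contra hge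
          exact hcon ⟨⟨(k : ℕ) - (a - m), by omega⟩, Fin.ext (by simp [hemb_def]; omega)⟩
        rw [LinearMap.mem_ker] at hx
        have hkey := congrArg (fun ℓ : _ →ₗ[L] L => ℓ x) (hcoord k hklt)
        simp only [LinearMap.comp_apply, hx, map_zero, Module.Basis.coord_apply, Fin.eta] at hkey
        exact hk hkey
      · rw [Submodule.span_le]
        rintro _ ⟨j, rfl⟩
        rw [SetLike.mem_coe, LinearMap.mem_ker, Function.comp_apply, LinearMap.mulLeft_apply,
          hB, ← pow_add]
        have hej : m + ((emb j : ℕ)) = a + (j : ℕ) := by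
          simp only [hemb_def]
          omega
        rw [hej, pow_add, hu, zero_mul]
    have hli : LinearIndependent L (B ∘ emb) := B.linearIndependent.comp emb hemb
    rw [hker, min_eq_left hm, finrank_span_eq_card hli, Fintype.card_fin]

/-- Let `f ∈ K[T]` be monic irreducible of inseparability degree `q`, i.e.
`f = (T - S)^q · g` over `L = K[S]/(f)` with `g(S) ≠ 0`.  For `a ≥ 1` let
`x` be multiplication by `S + U` on `V = L[U]/(U^a)`.  Then
`dim_L ker f(x)^i = min (i·q) a` for all `i`. -/
theorem finrank_ker_aeval_pow {K : Type} [Field K] (f : K[X]) (hf : f.Monic)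
    [Fact (Irreducible f)] (q : ℕ) (g : Polynomial (AdjoinRoot f))
    (hfac : f.map (algebraMap K (AdjoinRoot f)) =
      (X - C (AdjoinRoot.root f)) ^ q * g)
    (hg : Polynomial.eval (AdjoinRoot.root f) g ≠ 0)
    (a : ℕ) (ha : 1 ≤ a) :
    ∀ i : ℕ,
      Module.finrank (AdjoinRoot f)
        (LinearMap.ker ((Polynomial.aeval
          (LinearMap.mulLeft (AdjoinRoot f)
            (algebraMap (AdjoinRoot f) (AdjoinRoot (X ^ a : Polynomial (AdjoinRoot f)))
              (AdjoinRoot.root f) +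
             AdjoinRoot.root (X ^ a : Polynomial (AdjoinRoot f))))
          (f.map (algebraMap K (AdjoinRoot f)))) ^ i)) = min (i * q) a := by
  intro i
  set L := AdjoinRoot f
  set V := AdjoinRoot (X ^ a : L[X])
  set s : V := algebraMap L V (AdjoinRoot.root f) with hs_def
  set u : V := AdjoinRoot.root (X ^ a : L[X]) with hu_def
  set w : V := s + u with hw_def
  have hu_nil : u ^ a = 0 := by
    rw [hu_def, ← AdjoinRoot.mk_X, ← map_pow, AdjoinRoot.mk_self]
  -- aeval at mulLeft is mulLeft of aeval
  have hml : ∀ v : V, LinearMap.mulLeft L v = (Algebra.lmul L V) v := by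
    intro v
    ext y
    simp [LinearMap.mulLeft_apply]
  have h1 : (Polynomial.aeval (LinearMap.mulLeft L w)) (f.map (algebraMap K L)) =
      LinearMap.mulLeft L ((Polynomial.aeval w) (f.map (algebraMap K L))) := by
    rw [hml w, aeval_algHom_apply, ← hml]
  -- factorization of f(w)
  set c : V := (Polynomial.aeval w) g with hc_def
  have h2 : (Polynomial.aeval w) (f.map (algebraMap K L)) = u ^ q * c := by
    rw [hfac, map_mul, map_pow, map_sub, aeval_X, aeval_C, ← hs_def, hw_def,
      add_sub_cancel_left, hc_def]
  -- c is a unit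
  have hc : IsUnit c := by
    set G : L[X] := g.comp (X + C (AdjoinRoot.root f)) with hG_def
    have hGu : (Polynomial.aeval u) G = c := by
      rw [hG_def, aeval_comp, map_add, aeval_X, aeval_C, hc_def, hw_def, add_comm, hs_def]
    have hG0 : G.coeff 0 = Polynomial.eval (AdjoinRoot.root f) g := by
      rw [coeff_zero_eq_eval_zero, hG_def, eval_comp, eval_add, eval_X, eval_C, zero_add]
    have hsplit : c = u * (Polynomial.aeval u) G.divX + algebraMap L V (G.coeff 0) := by
      conv_lhs => rw [← hGu, ← X_mul_divX_add G]
      rw [map_add, map_mul, aeval_X, aeval_C]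
    have hnil : IsNilpotent (u * (Polynomial.aeval u) G.divX) :=
      ⟨a, by rw [mul_pow, hu_nil, zero_mul]⟩
    have hunit : IsUnit (algebraMap L V (G.coeff 0)) := by
      refine (isUnit_iff_ne_zero.mpr ?_).map (algebraMap L V)
      rw [hG0]
      exact hg
    rw [hsplit]
    exact hnil.isUnit_add_right_of_commute hunit (Commute.all _ _)
  -- kernel identification
  have hker : LinearMap.ker (((Polynomial.aeval (LinearMap.mulLeft L w))
        (f.map (algebraMap K L))) ^ i) =
      LinearMap.ker (LinearMap.mulLeft L (u ^ (i * q))) := by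
    rw [h1, h2, LinearMap.pow_mulLeft]
    ext v
    simp only [LinearMap.mem_ker, LinearMap.mulLeft_apply]
    have hrw : (u ^ q * c) ^ i * v = c ^ i * (u ^ (i * q) * v) := by
      rw [mul_pow, ← pow_mul, mul_comm q i]
      ring
    rw [hrw, (hc.pow i).mul_right_eq_zero]
  rw [hker]
  exact aux_finrank_ker_mulLeft_root_pow a ha (i * q)
end

section
/- Let q ≥ 1 and let ζ_q : Part → Part be the monoid homomorphism on the monoid of partitions (under splicing/union) determined on singleton partitions by [a] ↦ l·[k+1] + (q−l)·[k], where a = kq + l with 0 ≤ l < q. Then a partition ψ lies in the image of ζ_q if and only if ψ_{(i−1)q+1} ≤ 1 + ψ_{iq} for all i ≥ 1. -/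
/- We model partitions as multisets of positive integers; splicing is multiset sum,
making this the free commutative monoid on the singleton partitions. -/

/-- The `i`-th entry (1-indexed) of a partition, listed in decreasing order, with
value `0` beyond the length of the partition. -/
def Multiset.nthPart (ψ : Multiset ℕ+) (i : ℕ) : ℕ :=
  (((ψ.map ((↑·) : ℕ+ → ℕ)).sort (· ≤ ·)).reverse).getD (i - 1) 0

/-- The image of the singleton partition `[a]` under `ζ_q`: writing `a = k·q + l` with
`0 ≤ l < q`, it consists of `l` copies of `k + 1` and `q - l` copies of `k`
(copies of `0` being discarded). -/
def zetaPiece (q : ℕ) (a : ℕ+) : Multiset ℕ+ :=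
  Multiset.replicate ((a : ℕ) % q) ⟨(a : ℕ) / q + 1, Nat.succ_pos _⟩ +
    if h : 0 < (a : ℕ) / q then Multiset.replicate (q - (a : ℕ) % q) ⟨(a : ℕ) / q, h⟩
    else 0

/-- The monoid homomorphism `ζ_q : Part → Part`, determined on singleton partitions by
`[a] ↦ l·[k+1] + (q-l)·[k]` where `a = k·q + l`, `0 ≤ l < q`. -/
def zetaPart (q : ℕ) (ψ : Multiset ℕ+) : Multiset ℕ+ := ψ.bind (zetaPiece q)

/-- The standard preimage sequence: `φ_i = ψ_{(i-1)q+1} + ⋯ + ψ_{iq}`. -/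
def stdPreimageFun (q : ℕ) (ψ : Multiset ℕ+) (i : ℕ) : ℕ :=
  ∑ j ∈ Finset.Icc ((i - 1) * q + 1) (i * q), ψ.nthPart j

/-! ### Auxiliary development -/

namespace ZetaAux

/-- The number of entries of `μ` that are at least `m`. -/
def cnt (μ : Multiset ℕ) (m : ℕ) : ℕ := μ.countP (fun x => m ≤ x)

lemma countP_replicate {α : Type*} (p : α → Prop) [DecidablePred p] (n : ℕ) (a : α) :
    (Multiset.replicate n a).countP p = if p a then n else 0 := by
  induction n with
  | zero => simp
  | succ n ih =>
    rw [Multiset.replicate_succ, Multiset.countP_cons, ih]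
    split <;> omega

lemma countP_bind {α β : Type*} (p : β → Prop) [DecidablePred p] (s : Multiset α)
    (f : α → Multiset β) :
    (s.bind f).countP p = (s.map fun a => (f a).countP p).sum := by
  induction s using Multiset.induction_on with
  | empty => simp
  | cons a s ih => simp [Multiset.cons_bind, Multiset.countP_add, ih]

lemma sorted_getD_le {L : List ℕ} (h : L.Pairwise (· ≥ ·)) {i j : ℕ} (hij : i ≤ j) :
    L.getD j 0 ≤ L.getD i 0 := by
  by_cases hj : j < L.length
  · have hi : i < L.length := lt_of_le_of_lt hij hj
    rw [List.getD_eq_getElem _ _ hj, List.getD_eq_getElem _ _ hi]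
    rcases eq_or_lt_of_le hij with rfl | hlt
    · exact le_refl _
    · exact List.pairwise_iff_get.mp h ⟨i, hi⟩ ⟨j, hj⟩ hlt
  · rw [List.getD_eq_default _ _ (le_of_not_gt hj)]
    exact Nat.zero_le _

lemma sorted_le_getD {L : List ℕ} (h : L.Pairwise (· ≥ ·)) {m : ℕ} (hm : 1 ≤ m) (idx : ℕ) :
    m ≤ L.getD idx 0 ↔ idx < Multiset.countP (fun x => m ≤ x) (L : Multiset ℕ) := by
  induction L generalizing idx with
  | nil => simp [List.getD_nil]; omega
  | cons a L ih =>
    rcases List.pairwise_cons.mp h with ⟨ha, hL⟩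
    have hc : ((a :: L : List ℕ) : Multiset ℕ) = a ::ₘ (L : Multiset ℕ) := rfl
    rw [hc, Multiset.countP_cons]
    cases idx with
    | zero =>
      rw [List.getD_cons_zero]
      constructor
      · intro hma; rw [if_pos hma]; omega
      · intro hpos
        by_cases hma : m ≤ a
        · exact hma
        · rw [if_neg hma] at hpos
          have hpos' : 0 < Multiset.countP (fun x => m ≤ x) (L : Multiset ℕ) := by omega
          obtain ⟨x, hx, hmx⟩ := Multiset.countP_pos.mp hpos'
          exact absurd (le_trans hmx (ha x (Multiset.mem_coe.mp hx))) hma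
    | succ i =>
      rw [List.getD_cons_succ, ih hL]
      by_cases hma : m ≤ a
      · rw [if_pos hma]; omega
      · rw [if_neg hma]
        have h0 : Multiset.countP (fun x => m ≤ x) (L : Multiset ℕ) = 0 :=
          Multiset.countP_eq_zero.mpr
            (fun x hx hmx => hma (le_trans hmx (ha x (Multiset.mem_coe.mp hx))))
        omega

lemma nthPart_le_iff (ψ : Multiset ℕ+) {m j : ℕ} (hm : 1 ≤ m) (hj : 1 ≤ j) :
    m ≤ ψ.nthPart j ↔ j ≤ cnt (ψ.map ((↑·) : ℕ+ → ℕ)) m := by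
  have hs : (((ψ.map ((↑·) : ℕ+ → ℕ)).sort (· ≤ ·)).reverse).Pairwise (· ≥ ·) :=
    List.pairwise_reverse.mpr (Multiset.pairwise_sort (ψ.map ((↑·) : ℕ+ → ℕ)) (· ≤ ·))
  have hcoe : ((((ψ.map ((↑·) : ℕ+ → ℕ)).sort (· ≤ ·)).reverse : List ℕ) : Multiset ℕ)
      = ψ.map ((↑·) : ℕ+ → ℕ) := by
    rw [Multiset.coe_reverse, Multiset.sort_eq]
  have hdef : ψ.nthPart j = (((ψ.map ((↑·) : ℕ+ → ℕ)).sort (· ≤ ·)).reverse).getD (j - 1) 0 := rfl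
  rw [hdef, sorted_le_getD hs hm, hcoe]
  unfold cnt
  omega

lemma nthPart_anti (ψ : Multiset ℕ+) {i j : ℕ} (hij : i ≤ j) :
    ψ.nthPart j ≤ ψ.nthPart i := by
  have hs : (((ψ.map ((↑·) : ℕ+ → ℕ)).sort (· ≤ ·)).reverse).Pairwise (· ≥ ·) :=
    List.pairwise_reverse.mpr (Multiset.pairwise_sort (ψ.map ((↑·) : ℕ+ → ℕ)) (· ≤ ·))
  exact sorted_getD_le hs (by omega)

lemma count_add_cnt (μ : Multiset ℕ) (n : ℕ) :
    μ.count n + cnt μ (n + 1) = cnt μ n := by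
  induction μ using Multiset.induction_on with
  | empty => simp [cnt]
  | cons a s ih =>
    simp only [cnt, Multiset.count_cons, Multiset.countP_cons] at *
    split_ifs <;> omega

lemma eq_of_cnt {s t : Multiset ℕ+}
    (h : ∀ m, 1 ≤ m → cnt (s.map ((↑·) : ℕ+ → ℕ)) m = cnt (t.map ((↑·) : ℕ+ → ℕ)) m) :
    s = t := by
  ext v
  have h1 := count_add_cnt (s.map ((↑·) : ℕ+ → ℕ)) v
  have h2 := count_add_cnt (t.map ((↑·) : ℕ+ → ℕ)) v
  have hcs : (s.map ((↑·) : ℕ+ → ℕ)).count (v : ℕ) = s.count v :=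
    Multiset.count_map_eq_count' _ _ (fun a b hab => PNat.coe_injective hab) v
  have hct : (t.map ((↑·) : ℕ+ → ℕ)).count (v : ℕ) = t.count v :=
    Multiset.count_map_eq_count' _ _ (fun a b hab => PNat.coe_injective hab) v
  have e1 := h (v : ℕ) v.one_le
  have e2 := h ((v : ℕ) + 1) (by omega)
  omega

lemma cnt_zetaPiece {q m : ℕ} (hq : 1 ≤ q) (hm : 1 ≤ m) (a : ℕ+) :
    cnt ((zetaPiece q a).map ((↑·) : ℕ+ → ℕ)) m = min q ((a : ℕ) - (m - 1) * q) := by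
  have hdm : (a : ℕ) / q * q + (a : ℕ) % q = (a : ℕ) := Nat.div_add_mod' _ _
  have hl : (a : ℕ) % q < q := Nat.mod_lt _ hq
  rcases Nat.eq_zero_or_pos ((a : ℕ) / q) with hk | hk
  · have h0 : (a : ℕ) / q * q = 0 := by rw [hk, Nat.zero_mul]
    rw [zetaPiece, dif_neg (by omega)]
    erw [add_zero, Multiset.map_replicate]
    simp only [add_zero, Multiset.map_replicate, cnt, countP_replicate, PNat.mk_coe]
    rcases eq_or_lt_of_le hm with rfl | hm2
    · rw [if_pos (by omega)]
      omega
    · have hq2 : q ≤ (m - 1) * q := Nat.le_mul_of_pos_left _ (by omega)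
      rw [if_neg (by omega)]
      omega
  · rw [zetaPiece, dif_pos hk]
    erw [Multiset.map_add, Multiset.map_replicate, Multiset.map_replicate]
    simp only [Multiset.map_add, Multiset.map_replicate, cnt, Multiset.countP_add,
      countP_replicate, PNat.mk_coe]
    rcases lt_trichotomy m ((a : ℕ) / q + 1) with hm1 | hm1 | hm1
    · have h1 : m * q ≤ (a : ℕ) / q * q := Nat.mul_le_mul_right _ (by omega)
      have h2 : (m - 1) * q + q = m * q := by
        calc (m - 1) * q + q = (m - 1 + 1) * q := (Nat.succ_mul _ _).symm
          _ = m * q := by rw [Nat.sub_add_cancel hm]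
      rw [if_pos (by omega), if_pos (by omega)]
      omega
    · have h1 : (m - 1) * q = (a : ℕ) / q * q := by
        have h3 : m - 1 = (a : ℕ) / q := by omega
        rw [h3]
      rw [if_pos (by omega), if_neg (by omega)]
      omega
    · have h1 : ((a : ℕ) / q + 1) * q ≤ (m - 1) * q := Nat.mul_le_mul_right _ (by omega)
      have h2 : ((a : ℕ) / q + 1) * q = (a : ℕ) / q * q + q := Nat.succ_mul _ _
      rw [if_neg (by omega), if_neg (by omega)]
      omega

lemma cnt_zetaPart (q : ℕ) (hq : 1 ≤ q) (φ : Multiset ℕ+) {m : ℕ} (hm : 1 ≤ m) :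
    cnt ((zetaPart q φ).map ((↑·) : ℕ+ → ℕ)) m
      = (φ.map (fun a : ℕ+ => min q ((a : ℕ) - (m - 1) * q))).sum := by
  unfold zetaPart cnt
  rw [Multiset.map_bind, countP_bind]
  congr 1
  apply Multiset.map_congr rfl
  intro a _
  exact cnt_zetaPiece hq hm a

lemma sum_le_mul_card {α : Type*} (s : Multiset α) (f : α → ℕ) (q : ℕ)
    (hf : ∀ a ∈ s, f a ≤ q) :
    (s.map f).sum ≤ q * (s.filter (fun a => 0 < f a)).card := by
  induction s using Multiset.induction_on with
  | empty => simp
  | cons a s ih =>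
    have hfa := hf a (Multiset.mem_cons_self _ _)
    have ih' := ih (fun b hb => hf b (Multiset.mem_cons_of_mem hb))
    rw [Multiset.map_cons, Multiset.sum_cons, Multiset.filter_cons]
    by_cases h : 0 < f a
    · rw [if_pos h]
      simp only [Multiset.card_add, Multiset.card_singleton]
      have : q * (1 + (s.filter (fun a => 0 < f a)).card)
          = q + q * (s.filter (fun a => 0 < f a)).card := by ring
      omega
    · rw [if_neg h, zero_add]
      omega

lemma mul_card_le_sum {α : Type*} (s : Multiset α) (f g : α → ℕ) (q : ℕ)
    (hg : ∀ a ∈ s, 0 < f a → g a = q) :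
    q * (s.filter (fun a => 0 < f a)).card ≤ (s.map g).sum := by
  induction s using Multiset.induction_on with
  | empty => simp
  | cons a s ih =>
    have ih' := ih (fun b hb => hg b (Multiset.mem_cons_of_mem hb))
    rw [Multiset.map_cons, Multiset.sum_cons, Multiset.filter_cons]
    by_cases h : 0 < f a
    · rw [if_pos h]
      have hga := hg a (Multiset.mem_cons_self _ _) h
      simp only [Multiset.card_add, Multiset.card_singleton]
      have : q * (1 + (s.filter (fun a => 0 < f a)).card)
          = q + q * (s.filter (fun a => 0 < f a)).card := by ring
      omega
    · rw [if_neg h, zero_add]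
      omega

/-- The candidate preimage entry option map: keep positive numbers as `ℕ+`. -/
def toOpt (x : ℕ) : Option ℕ+ := if h : 0 < x then some ⟨x, h⟩ else none

lemma sum_filterMap (t : Multiset ℕ) (q r : ℕ) :
    ((t.filterMap toOpt).map (fun a : ℕ+ => min q ((a : ℕ) - r))).sum
      = (t.map (fun x => min q (x - r))).sum := by
  induction t using Multiset.induction_on with
  | empty => simp
  | cons a t ih =>
    by_cases ha : 0 < a
    · have hsome : toOpt a = some ⟨a, ha⟩ := by simp only [toOpt]; rw [dif_pos ha]
      rw [Multiset.filterMap_cons_some _ _ _ hsome, Multiset.map_cons,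
        Multiset.sum_cons]
      erw [Multiset.map_cons]
      rw [Multiset.sum_cons, ih]
      simp only [PNat.mk_coe]
    · have hnone : toOpt a = none := by simp only [toOpt]; rw [dif_neg ha]
      have ha0 : a = 0 := by omega
      rw [Multiset.filterMap_cons_none _ _ hnone, Multiset.map_cons,
        Multiset.sum_cons, ih, ha0]
      simp

/-- The key per-block computation. -/
lemma blockCount (q : ℕ) (hq : 1 ≤ q) (ψ : Multiset ℕ+) {m : ℕ} (hm : 1 ≤ m)
    (i : ℕ) (hi : 1 ≤ i)
    (hH : ψ.nthPart ((i - 1) * q + 1) ≤ 1 + ψ.nthPart (i * q)) :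
    min q (stdPreimageFun q ψ i - (m - 1) * q)
      = min (i * q) (cnt (ψ.map ((↑·) : ℕ+ → ℕ)) m)
        - min ((i - 1) * q) (cnt (ψ.map ((↑·) : ℕ+ → ℕ)) m) := by
  set c := cnt (ψ.map ((↑·) : ℕ+ → ℕ)) m with hc
  set A := (i - 1) * q with hA
  set B := i * q with hB
  have hAB : B = A + q := by
    rw [hA, hB]
    calc i * q = (i - 1 + 1) * q := by rw [Nat.sub_add_cancel hi]
    _ = (i - 1) * q + q := Nat.succ_mul _ _
  set k := ψ.nthPart B with hk
  set t := ψ.nthPart (A + 1) with ht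
  have hent : ∀ j ∈ Finset.Icc (A + 1) B, k ≤ ψ.nthPart j ∧ ψ.nthPart j ≤ t := by
    intro j hj
    rw [Finset.mem_Icc] at hj
    exact ⟨nthPart_anti ψ hj.2, nthPart_anti ψ hj.1⟩
  have hb : stdPreimageFun q ψ i = ∑ j ∈ Finset.Icc (A + 1) B, ψ.nthPart j := rfl
  have hcard : (Finset.Icc (A + 1) B).card = q := by
    rw [Nat.card_Icc]; omega
  set e := ((Finset.Icc (A + 1) B).filter (fun j => m ≤ ψ.nthPart j)).card with he
  have he2 : e = min B c - min A c := by
    have hset : (Finset.Icc (A + 1) B).filter (fun j => m ≤ ψ.nthPart j)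
        = Finset.Icc (A + 1) (min B c) := by
      ext j
      rw [Finset.mem_filter, Finset.mem_Icc, Finset.mem_Icc]
      constructor
      · rintro ⟨⟨h1, h2⟩, h3⟩
        rw [nthPart_le_iff ψ hm (by omega), ← hc] at h3
        omega
      · rintro ⟨h1, h2⟩
        refine ⟨⟨h1, by omega⟩, ?_⟩
        rw [nthPart_le_iff ψ hm (by omega), ← hc]
        omega
    rw [he, hset, Nat.card_Icc]
    omega
  suffices hS : min q (stdPreimageFun q ψ i - (m - 1) * q) = e by rw [hS, he2]
  rcases lt_trichotomy m (k + 1) with hm1 | hm1 | hm1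
  · -- m ≤ k : everything in the block counts
    have he3 : e = q := by
      rw [he, Finset.filter_true_of_mem, hcard]
      intro j hj
      exact le_trans (by omega) (hent j hj).1
    have hbk : q * k ≤ stdPreimageFun q ψ i := by
      rw [hb]
      calc q * k = (Finset.Icc (A + 1) B).card • k := by rw [hcard, smul_eq_mul]
      _ ≤ _ := Finset.card_nsmul_le_sum _ _ _ (fun j hj => (hent j hj).1)
    have h1 : q * m ≤ q * k := Nat.mul_le_mul_left _ (by omega)
    have h2 : q * m = q * (m - 1) + q := by
      calc q * m = q * (m - 1 + 1) := by rw [Nat.sub_add_cancel hm]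
      _ = q * (m - 1) + q := Nat.mul_succ _ _
    have h3 : (m - 1) * q = q * (m - 1) := Nat.mul_comm _ _
    omega
  · -- m = k + 1
    have hH' : t ≤ 1 + k := hH
    have hsum : stdPreimageFun q ψ i = q * k + e := by
      rw [hb]
      have hcong : ∀ j ∈ Finset.Icc (A + 1) B,
          ψ.nthPart j = k + (if m ≤ ψ.nthPart j then 1 else 0) := by
        intro j hj
        have := hent j hj
        split_ifs <;> omega
      rw [Finset.sum_congr rfl hcong, Finset.sum_add_distrib, Finset.sum_const, hcard,
        smul_eq_mul, ← Finset.card_filter]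
    have heq : e ≤ q := by
      rw [he, ← hcard]
      exact Finset.card_filter_le _ _
    have h1 : (m - 1) * q = k * q := by
      have hmk : m - 1 = k := by omega
      rw [hmk]
    have h2 : q * k = k * q := Nat.mul_comm _ _
    omega
  · -- k + 2 ≤ m : nothing counts
    have he3 : e = 0 := by
      rw [he, Finset.filter_false_of_mem, Finset.card_empty]
      intro j hj
      have := (hent j hj).2
      omega
    have hbt : stdPreimageFun q ψ i ≤ q * t := by
      rw [hb]
      calc ∑ j ∈ Finset.Icc (A + 1) B, ψ.nthPart j
          ≤ (Finset.Icc (A + 1) B).card • t :=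
            Finset.sum_le_card_nsmul _ _ _ (fun j hj => (hent j hj).2)
      _ = q * t := by rw [hcard, smul_eq_mul]
    have hH' : t ≤ 1 + k := hH
    have h1 : q * t ≤ q * (m - 1) := Nat.mul_le_mul_left _ (by omega)
    have h2 : (m - 1) * q = q * (m - 1) := Nat.mul_comm _ _
    omega

end ZetaAux

open ZetaAux in
/-- A partition `ψ` lies in the image of `ζ_q` if and only if
`ψ_{(i-1)q+1} ≤ 1 + ψ_{iq}` for all `i ≥ 1`. -/
theorem mem_range_zetaPart_iff (q : ℕ) (hq : 1 ≤ q) (ψ : Multiset ℕ+) :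
    (∃ φ : Multiset ℕ+, zetaPart q φ = ψ) ↔
      ∀ i : ℕ, 1 ≤ i → ψ.nthPart ((i - 1) * q + 1) ≤ 1 + ψ.nthPart (i * q) := by
  constructor
  · rintro ⟨φ, rfl⟩ i hi
    set m := (zetaPart q φ).nthPart ((i - 1) * q + 1) with hm
    by_cases hm2 : m ≤ 1
    · omega
    push_neg at hm2
    have h1 : (i - 1) * q + 1 ≤ cnt ((zetaPart q φ).map ((↑·) : ℕ+ → ℕ)) m :=
      (nthPart_le_iff _ (by omega) (by omega)).mp (le_of_eq hm)
    set f : ℕ+ → ℕ := fun a : ℕ+ => min q ((a : ℕ) - (m - 1) * q) with hf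
    set g : ℕ+ → ℕ := fun a : ℕ+ => min q ((a : ℕ) - (m - 1 - 1) * q) with hg
    set S := (φ.filter (fun a => 0 < f a)).card with hS
    have hfq : ∀ a ∈ φ, f a ≤ q := fun a _ => min_le_left _ _
    have hgq : ∀ a ∈ φ, 0 < f a → g a = q := by
      intro a _ hfa
      have h2 : (m - 1) * q = (m - 1 - 1) * q + q := by
        calc (m - 1) * q = (m - 1 - 1 + 1) * q := by
              congr 1
              omega
        _ = (m - 1 - 1) * q + q := Nat.succ_mul _ _
      simp only [hf] at hfa
      simp only [hg]
      omega
    have hd1 : (φ.map f).sum ≤ q * S := sum_le_mul_card φ f q hfq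
    have hd2 : q * S ≤ (φ.map g).sum := mul_card_le_sum φ f g q hgq
    have hcm : cnt ((zetaPart q φ).map ((↑·) : ℕ+ → ℕ)) m = (φ.map f).sum :=
      cnt_zetaPart q hq φ (by omega)
    have hcm1 : cnt ((zetaPart q φ).map ((↑·) : ℕ+ → ℕ)) (m - 1) = (φ.map g).sum :=
      cnt_zetaPart q hq φ (by omega)
    have hiS : i ≤ S := by
      by_contra hcon
      have h3 : q * S ≤ q * (i - 1) := Nat.mul_le_mul_left _ (by omega)
      have h4 : q * (i - 1) = (i - 1) * q := Nat.mul_comm _ _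
      omega
    have h5 : i * q ≤ cnt ((zetaPart q φ).map ((↑·) : ℕ+ → ℕ)) (m - 1) := by
      have h6 : q * i ≤ q * S := Nat.mul_le_mul_left _ hiS
      have h7 : i * q = q * i := Nat.mul_comm _ _
      omega
    have h8 : m - 1 ≤ (zetaPart q φ).nthPart (i * q) :=
      (nthPart_le_iff _ (by omega) (by
        have := Nat.mul_le_mul hi hq
        omega)).mpr h5
    omega
  · intro H
    refine ⟨((Multiset.range (Multiset.card ψ)).map
      (fun n => stdPreimageFun q ψ (n + 1))).filterMap toOpt, ?_⟩
    apply eq_of_cnt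
    intro m hm
    set c := cnt (ψ.map ((↑·) : ℕ+ → ℕ)) m with hc
    rw [cnt_zetaPart q hq _ hm, sum_filterMap, Multiset.map_map]
    have hcong : ∀ n ∈ Multiset.range (Multiset.card ψ),
        ((fun x => min q (x - (m - 1) * q)) ∘ fun n => stdPreimageFun q ψ (n + 1)) n
          = min ((n + 1) * q) c - min (n * q) c := by
      intro n _
      have := blockCount q hq ψ hm (n + 1) (by omega) (H (n + 1) (by omega))
      simpa using this
    rw [Multiset.map_congr rfl hcong]
    have hrange : ((Multiset.range (Multiset.card ψ)).map
        (fun n => min ((n + 1) * q) c - min (n * q) c)).sum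
        = ∑ n ∈ Finset.range (Multiset.card ψ), (min ((n + 1) * q) c - min (n * q) c) := by
      rw [Finset.sum_eq_multiset_sum, Finset.range_val]
    rw [hrange]
    have hmono : Monotone (fun n : ℕ => min (n * q) c) := by
      intro x y hxy
      exact min_le_min (Nat.mul_le_mul_right _ hxy) (le_refl _)
    rw [Finset.sum_range_tsub hmono]
    simp only [Nat.zero_mul, Nat.min_eq_left (Nat.zero_le _), Nat.sub_zero]
    have h1 : c ≤ Multiset.card ψ := by
      rw [hc]
      calc cnt (ψ.map ((↑·) : ℕ+ → ℕ)) m ≤ Multiset.card (ψ.map ((↑·) : ℕ+ → ℕ)) :=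
        Multiset.countP_le_card _ _
      _ = Multiset.card ψ := Multiset.card_map _ _
    have h2 : Multiset.card ψ ≤ Multiset.card ψ * q := Nat.le_mul_of_pos_right _ (by omega)
    omega
end

section
/- Let q ≥ 1 and ζ_q : Part → Part as above. If a partition ψ satisfies ψ_{(i−1)q+1} ≤ 1 + ψ_{iq} for all i ≥ 1, then the sequence φ defined by φ_i := ψ_{(i−1)q+1} + ψ_{(i−1)q+2} + ... + ψ_{iq} is a partition (i.e. decreasing) and satisfies ζ_q(φ) = ψ. -/
private lemma getD_drop' (l : List ℕ) (n j : ℕ) : (l.drop n).getD j 0 = l.getD (n + j) 0 := by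
  simp [List.getD_eq_getElem?_getD, List.getElem?_drop]

private lemma getD_anti {l : List ℕ} (h : l.Pairwise (· ≥ ·)) {i j : ℕ} (hij : i ≤ j) :
    l.getD j 0 ≤ l.getD i 0 := by
  rcases lt_or_ge j l.length with hj | hj
  · have hi : i < l.length := lt_of_le_of_lt hij hj
    rw [List.getD_eq_getElem l 0 hj, List.getD_eq_getElem l 0 hi]
    exact h.rel_get_of_le (a := ⟨i, hi⟩) (b := ⟨j, hj⟩) hij
  · rw [List.getD_eq_default l 0 hj]; exact Nat.zero_le _

private lemma sum_take (l : List ℕ) : ∀ n : ℕ, (l.take n).sum = ∑ j ∈ Finset.range n, l.getD j 0 := by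
  induction l with
  | nil => intro n; simp [List.getD]
  | cons x xs ih =>
    intro n
    cases n with
    | zero => simp
    | succ n =>
      rw [Finset.sum_range_succ']
      simp only [List.getD_cons_succ, List.getD_cons_zero, List.take_succ_cons, List.sum_cons]
      rw [ih n]; omega

private lemma sort_coe (M : List ℕ+) (h : (M.map ((↑·) : ℕ+ → ℕ)).Pairwise (· ≥ ·)) :
    ((↑M : Multiset ℕ+).map ((↑·) : ℕ+ → ℕ)).sort (· ≤ ·) = (M.map ((↑·) : ℕ+ → ℕ)).reverse := by
  refine (fun hp h1 h2 => List.Perm.eq_of_pairwise' (r := (· ≤ ·)) h1 h2 hp) ?_ ?_ ?_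
  · have h1 : ((↑M : Multiset ℕ+).map ((↑·) : ℕ+ → ℕ)) = ↑(M.map ((↑·) : ℕ+ → ℕ)) := by
      simp [Multiset.map_coe]
    rw [h1]
    exact (Multiset.coe_eq_coe.mp (Multiset.sort_eq _ _)).trans (M.map _).reverse_perm.symm
  · exact Multiset.pairwise_sort _ _
  · exact List.pairwise_reverse.mpr h

private lemma nthPart_coe (M : List ℕ+) (h : (M.map ((↑·) : ℕ+ → ℕ)).Pairwise (· ≥ ·)) (i : ℕ) :
    (↑M : Multiset ℕ+).nthPart i = (M.map ((↑·) : ℕ+ → ℕ)).getD (i - 1) 0 := by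
  rw [Multiset.nthPart, sort_coe M h, List.reverse_reverse]

private lemma exists_sorted_rep (ψ : Multiset ℕ+) :
    ∃ M : List ℕ+, (M.map ((↑·) : ℕ+ → ℕ)).Pairwise (· ≥ ·) ∧ (↑M : Multiset ℕ+) = ψ := by
  refine ⟨(ψ.sort (· ≤ ·)).reverse, ?_, ?_⟩
  · rw [List.map_reverse]
    refine List.pairwise_reverse.mpr ?_
    refine List.Pairwise.map _ (fun a b hab => ?_) (ψ.pairwise_sort (· ≤ ·))
    exact_mod_cast hab
  · rw [Multiset.coe_reverse, Multiset.sort_eq]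


private lemma decomp (s : Multiset ℕ) (m : ℕ) (hm : ∀ x ∈ s, x = m + 1 ∨ x = m) :
    s = Multiset.replicate (s.count (m + 1)) (m + 1) + Multiset.replicate (s.count m) m := by
  rw [← Multiset.filter_eq, ← Multiset.filter_eq]
  have h2 : Multiset.filter (Eq m) s = Multiset.filter (fun x => ¬ (m + 1 = x)) s := by
    apply Multiset.filter_congr
    intro x hx
    rcases hm x hx with h | h <;> constructor <;> omega
  rw [h2, Multiset.filter_add_not]

private lemma zeta_block (q : ℕ) (hq : 1 ≤ q) (M : List ℕ+)
    (hs : (M.map ((↑·) : ℕ+ → ℕ)).Pairwise (· ≥ ·)) (hne : M ≠ [])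
    (hH : (M.map ((↑·) : ℕ+ → ℕ)).getD 0 0 ≤ 1 + (M.map ((↑·) : ℕ+ → ℕ)).getD (q - 1) 0)
    (a : ℕ+) (ha : (a : ℕ) = ((M.map ((↑·) : ℕ+ → ℕ)).take q).sum) :
    zetaPiece q a = ↑(M.take q) := by
  set lm : List ℕ := M.map ((↑·) : ℕ+ → ℕ) with hlm
  set T : List ℕ := lm.take q with hTdef
  have hT : T = (M.take q).map ((↑·) : ℕ+ → ℕ) := by rw [hTdef, hlm, List.map_take]
  set m : ℕ := lm.getD (q - 1) 0 with hmdef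
  -- bounds on members of T
  have hmem : ∀ x ∈ T, m ≤ x ∧ x ≤ m + 1 ∧ 1 ≤ x := by
    intro x hx
    obtain ⟨k, hk, hkx⟩ := List.mem_iff_getElem.mp hx
    have hkq : k < q := lt_of_lt_of_le hk (by rw [hTdef]; exact (List.length_take (i := q) (l := lm)) ▸ min_le_left _ _)
    have hklm : k < lm.length := by
      have := hk; rw [hTdef, List.length_take] at this; omega
    have hxval : x = lm.getD k 0 := by
      rw [List.getD_eq_getElem lm 0 hklm, ← hkx]
      exact List.getElem_take
    have h1 : 1 ≤ x := by
      have hxmem : x ∈ lm := List.take_subset q lm (hkx ▸ List.getElem_mem hk)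
      rw [hlm] at hxmem
      obtain ⟨p, _, hp⟩ := List.mem_map.mp hxmem
      rw [← hp]; exact p.pos
    refine ⟨?_, ?_, h1⟩
    · rw [hxval, hmdef]; exact getD_anti hs (by omega)
    · rw [hxval]
      calc lm.getD k 0 ≤ lm.getD 0 0 := getD_anti hs (Nat.zero_le k)
        _ ≤ 1 + m := hH
        _ = m + 1 := by omega
  set s : Multiset ℕ := (↑T : Multiset ℕ) with hsdef
  have hsum : (a : ℕ) = s.sum := by rw [ha]; rfl
  have hMne : lm ≠ [] := by simpa [hlm] using hne
  have hmap_take : ((↑(M.take q) : Multiset ℕ+).map ((↑·) : ℕ+ → ℕ)) = s := by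
    rw [hsdef, hT, Multiset.map_coe]
  apply Multiset.map_injective (f := ((↑·) : ℕ+ → ℕ)) (fun a b h => PNat.coe_injective h)
  rw [hmap_take]
  rcases Nat.eq_zero_or_pos m with hm0 | hmpos
  · -- m = 0 : all entries are 1
    have hall1 : ∀ x ∈ s, x = 1 := by
      intro x hx
      have := hmem x (by exact hx)
      omega
    have hrep : s = Multiset.replicate (Multiset.card s) 1 :=
      (Multiset.eq_replicate_card).mpr hall1
    have hlen_lt : lm.length < q := by
      by_contra hc
      push_neg at hc
      have hq1 : q - 1 < lm.length := by omega
      have : m ∈ lm := by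
        rw [hmdef, List.getD_eq_getElem lm 0 hq1]
        exact List.getElem_mem hq1
      rw [hlm] at this
      obtain ⟨p, _, hp⟩ := List.mem_map.mp this
      have := p.pos; omega
    have hcard : Multiset.card s = lm.length := by
      rw [hsdef]
      simp only [Multiset.coe_card, hTdef, List.length_take]
      omega
    have haval : (a : ℕ) = lm.length := by
      rw [hsum, hrep, Multiset.sum_replicate, smul_eq_mul, mul_one, hcard]
    have hdiv : (a : ℕ) / q = 0 := Nat.div_eq_of_lt (by omega)
    have hmod : (a : ℕ) % q = (a : ℕ) := Nat.mod_eq_of_lt (by omega)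
    rw [zetaPiece, dif_neg (by omega), add_zero]
    refine (Multiset.map_replicate _ _ _).trans ?_
    show Multiset.replicate ((a : ℕ) % q) ((a : ℕ) / q + 1) = s
    rw [hmod, hdiv, hrep, hcard, ← haval]
  · -- m ≥ 1
    have hlen : q ≤ lm.length := by
      by_contra hc
      push_neg at hc
      have : m = 0 := by rw [hmdef]; exact List.getD_eq_default lm 0 (by omega)
      omega
    have hTlen : T.length = q := by rw [hTdef, List.length_take]; omega
    have hmmem : m ∈ s := by
      have hq1 : q - 1 < T.length := by omega
      have : T[q-1] = m := by
        have h1 : T[q-1] = lm[q-1]'(by omega) := List.getElem_take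
        rw [h1, hmdef, List.getD_eq_getElem lm 0 (by omega)]
      rw [hsdef]
      exact this ▸ (List.getElem_mem hq1)
    set c1 : ℕ := s.count (m + 1) with hc1
    set c0 : ℕ := s.count m with hc0
    have hdec : s = Multiset.replicate c1 (m + 1) + Multiset.replicate c0 m := by
      apply decomp
      intro x hx
      have := hmem x hx
      omega
    have hcards : c1 + c0 = q := by
      have h1 := congrArg Multiset.card hdec
      rw [Multiset.card_add, Multiset.card_replicate, Multiset.card_replicate] at h1
      have h2 : Multiset.card s = q := by rw [hsdef, Multiset.coe_card, hTlen]
      omega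
    have hc0pos : 1 ≤ c0 := Multiset.one_le_count_iff_mem.mpr hmmem
    have haval : (a : ℕ) = c1 + q * m := by
      rw [hsum, hdec, Multiset.sum_add, Multiset.sum_replicate, Multiset.sum_replicate,
        smul_eq_mul, smul_eq_mul]
      nlinarith [hcards]
    have hc1lt : c1 < q := by omega
    have hdiv : (a : ℕ) / q = m := by
      rw [haval, Nat.add_mul_div_left _ _ (by omega), Nat.div_eq_of_lt hc1lt, zero_add]
    have hmod : (a : ℕ) % q = c1 := by
      rw [haval, Nat.add_mul_mod_self_left, Nat.mod_eq_of_lt hc1lt]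
    rw [zetaPiece, dif_pos (by omega), Multiset.map_add]
    refine (congrArg₂ (· + ·) (Multiset.map_replicate _ _ _) (Multiset.map_replicate _ _ _)).trans ?_
    show Multiset.replicate ((a:ℕ) % q) ((a:ℕ) / q + 1) +
        Multiset.replicate (q - (a:ℕ) % q) ((a:ℕ) / q) = s
    have hqc : q - c1 = c0 := by omega
    rw [hmod, hdiv, hqc, hdec]

private def gP (M : List ℕ+) (i : ℕ) : ℕ := (M.map ((↑·) : ℕ+ → ℕ)).getD (i - 1) 0

private def FP (q : ℕ) (M : List ℕ+) (i : ℕ) : ℕ :=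
  ∑ j ∈ Finset.Icc ((i - 1) * q + 1) (i * q), gP M j

private lemma FP_eq (q : ℕ) (M : List ℕ+) (k : ℕ) :
    FP q M (k + 1) = ∑ j ∈ Finset.range q, (M.map ((↑·) : ℕ+ → ℕ)).getD (k * q + j) 0 := by
  rw [FP]
  simp only [Nat.add_sub_cancel]
  rw [← Finset.Ico_add_one_right_eq_Icc, Finset.sum_Ico_eq_sum_range]
  have hq : (k + 1) * q + 1 - (k * q + 1) = q := by
    have : (k + 1) * q = k * q + q := by ring
    omega
  rw [hq]
  refine Finset.sum_congr rfl (fun j _ => ?_)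
  rw [gP]
  congr 1
  omega

private lemma FP_anti (q : ℕ) (M : List ℕ+) (hs : (M.map ((↑·) : ℕ+ → ℕ)).Pairwise (· ≥ ·))
    (i : ℕ) (hi : 1 ≤ i) : FP q M (i + 1) ≤ FP q M i := by
  obtain ⟨k, rfl⟩ : ∃ k, i = k + 1 := ⟨i - 1, by omega⟩
  rw [FP_eq, FP_eq]
  refine Finset.sum_le_sum (fun j _ => ?_)
  exact getD_anti hs (Nat.add_le_add_right (Nat.mul_le_mul_right q (by omega)) j)

private lemma mainLemma (q : ℕ) (hq : 1 ≤ q) : ∀ (n : ℕ) (L : List ℕ+), L.length ≤ n →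
    ((L.map ((↑·) : ℕ+ → ℕ)).Pairwise (· ≥ ·)) →
    (∀ i, 1 ≤ i → gP L ((i - 1) * q + 1) ≤ 1 + gP L (i * q)) →
    ∃ M : List ℕ+, ((M.map ((↑·) : ℕ+ → ℕ)).Pairwise (· ≥ ·)) ∧
      (∀ i, 1 ≤ i → gP M i = FP q L i) ∧
      (↑M : Multiset ℕ+).bind (zetaPiece q) = ↑L ∧
      (∀ x ∈ M, (x : ℕ) ≤ FP q L 1) := by
  intro n
  induction n with
  | zero =>
    intro L hlen _ _
    have hL : L = [] := List.eq_nil_of_length_eq_zero (by omega)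
    subst hL
    refine ⟨[], by simp, fun i hi => ?_, by simp [Multiset.coe_nil], by simp⟩
    simp [gP, FP]
  | succ n ih =>
    intro L hlen hs hH
    rcases eq_or_ne L [] with rfl | hne
    · refine ⟨[], by simp, fun i hi => ?_, by simp [Multiset.coe_nil], by simp⟩
      simp [gP, FP]
    · set L' := L.drop q with hL'
      have hLpos : 0 < L.length := List.length_pos_iff.mpr hne
      have hlen' : L'.length ≤ n := by rw [hL', List.length_drop]; omega
      have hmapdrop : L'.map ((↑·) : ℕ+ → ℕ) = (L.map ((↑·) : ℕ+ → ℕ)).drop q := by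
        rw [hL', List.map_drop]
      have hs' : (L'.map ((↑·) : ℕ+ → ℕ)).Pairwise (· ≥ ·) := by
        rw [hmapdrop]; exact List.Pairwise.sublist (List.drop_sublist _ _) hs
      have hg : ∀ j, 1 ≤ j → gP L' j = gP L (j + q) := by
        intro j hj
        rw [gP, gP, hmapdrop, getD_drop']
        congr 1
        omega
      have hH' : ∀ i, 1 ≤ i → gP L' ((i - 1) * q + 1) ≤ 1 + gP L' (i * q) := by
        intro i hi
        obtain ⟨k, rfl⟩ : ∃ k, i = k + 1 := ⟨i - 1, by omega⟩
        have hiq : 1 ≤ (k + 1) * q := Nat.mul_pos (by omega) (by omega)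
        rw [hg _ (by omega), hg _ hiq]
        have h2 := hH (k + 2) (by omega)
        simp only [Nat.add_sub_cancel] at h2 ⊢
        have e1 : k * q + 1 + q = (k + 1) * q + 1 := by ring
        have e2 : (k + 1) * q + q = (k + 2) * q := by ring
        rw [e1, e2]
        exact h2
      have hFP : ∀ i, 1 ≤ i → FP q L' i = FP q L (i + 1) := by
        intro i hi
        obtain ⟨k, rfl⟩ : ∃ k, i = k + 1 := ⟨i - 1, by omega⟩
        rw [FP_eq, FP_eq]
        refine Finset.sum_congr rfl (fun j _ => ?_)
        rw [hmapdrop, getD_drop']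
        congr 1
        ring
      obtain ⟨x, tl, rfl⟩ := List.exists_cons_of_ne_nil hne
      have hg1 : gP (x :: tl) 1 = (x : ℕ) := by simp [gP]
      have apos : 0 < FP q (x :: tl) 1 := by
        have h1 := FP_eq q (x :: tl) 0
        simp only [zero_add] at h1
        rw [h1]
        have hmem0 : 0 ∈ Finset.range q := Finset.mem_range.mpr (by omega)
        calc 0 < (x : ℕ) := x.pos
          _ = ((x :: tl).map ((↑·) : ℕ+ → ℕ)).getD (0 * q + 0) 0 := by simp
          _ ≤ _ := Finset.single_le_sum
              (f := fun j => ((x :: tl).map ((↑·) : ℕ+ → ℕ)).getD (0 * q + j) 0)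
              (fun j _ => Nat.zero_le _) hmem0
      obtain ⟨M', hsM', hgM', hbind', hbound'⟩ := ih L' hlen' hs' hH'
      set a : ℕ+ := ⟨FP q (x :: tl) 1, apos⟩ with hadef
      have hF21 : FP q (x :: tl) 2 ≤ FP q (x :: tl) 1 := FP_anti q _ hs 1 le_rfl
      have hbound2 : ∀ y ∈ M', (y : ℕ) ≤ FP q (x :: tl) 1 := by
        intro y hy
        calc (y : ℕ) ≤ FP q L' 1 := hbound' y hy
          _ = FP q (x :: tl) 2 := hFP 1 le_rfl
          _ ≤ FP q (x :: tl) 1 := hF21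
      refine ⟨a :: M', ?_, ?_, ?_, ?_⟩
      · rw [List.map_cons, List.pairwise_cons]
        refine ⟨fun b hb => ?_, hsM'⟩
        obtain ⟨y, hy, rfl⟩ := List.mem_map.mp hb
        exact hbound2 y hy
      · intro i hi
        match i, hi with
        | 1, _ =>
          show gP (a :: M') 1 = FP q (x :: tl) 1
          simp only [gP, List.map_cons, Nat.sub_self, List.getD_cons_zero]
          rfl
        | (k + 2), _ =>
          have : gP (a :: M') (k + 2) = gP M' (k + 1) := by
            simp [gP, List.getD_cons_succ]
          rw [this, hgM' (k + 1) (by omega), hFP (k + 1) (by omega)]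
      · have hcons : (↑(a :: M') : Multiset ℕ+) = a ::ₘ (↑M' : Multiset ℕ+) := rfl
        rw [hcons, Multiset.cons_bind, hbind']
        have hblock : zetaPiece q a = ↑((x :: tl).take q) := by
          apply zeta_block q hq _ hs hne
          · have h1 := hH 1 le_rfl
            simp only [gP, Nat.sub_self, zero_mul, zero_add, one_mul] at h1
            simpa using h1
          · have h1 := FP_eq q (x :: tl) 0
            simp only [zero_add, zero_mul] at h1
            rw [hadef]
            simp only [PNat.mk_coe]
            rw [h1, sum_take]
        rw [hblock, hL']
        have hca : ((↑((x :: tl).take q) : Multiset ℕ+) + ↑((x :: tl).drop q)) =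
            ↑((x :: tl).take q ++ (x :: tl).drop q) := rfl
        rw [hca, List.take_append_drop]
      · intro y hy
        rcases List.mem_cons.mp hy with rfl | hy'
        · exact le_rfl
        · exact hbound2 y hy'


/-- If `ψ_{(i-1)q+1} ≤ 1 + ψ_{iq}` for all `i ≥ 1`, then the sequence
`φ_i = ψ_{(i-1)q+1} + ⋯ + ψ_{iq}` is decreasing, determines a partition `φ`,
and `ζ_q(φ) = ψ`. -/
theorem stdPreimage_works (q : ℕ) (hq : 1 ≤ q) (ψ : Multiset ℕ+)
    (hψ : ∀ i : ℕ, 1 ≤ i → ψ.nthPart ((i - 1) * q + 1) ≤ 1 + ψ.nthPart (i * q)) :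
    (∀ i : ℕ, 1 ≤ i → stdPreimageFun q ψ (i + 1) ≤ stdPreimageFun q ψ i) ∧
      ∃ φ : Multiset ℕ+, (∀ i : ℕ, 1 ≤ i → φ.nthPart i = stdPreimageFun q ψ i) ∧
        zetaPart q φ = ψ := by
  obtain ⟨L, hsL, rfl⟩ := exists_sorted_rep ψ
  have hnp : ∀ i, (↑L : Multiset ℕ+).nthPart i = gP L i := fun i => nthPart_coe L hsL i
  have hstd : ∀ i, stdPreimageFun q (↑L) i = FP q L i := by
    intro i
    rw [stdPreimageFun, FP]
    exact Finset.sum_congr rfl fun j _ => hnp j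
  have hH : ∀ i, 1 ≤ i → gP L ((i - 1) * q + 1) ≤ 1 + gP L (i * q) := by
    intro i hi
    have := hψ i hi
    rwa [hnp, hnp] at this
  constructor
  · intro i hi
    rw [hstd, hstd]
    exact FP_anti q L hsL i hi
  · obtain ⟨M, hsM, hgM, hbind, -⟩ := mainLemma q hq L.length L le_rfl hsL hH
    refine ⟨↑M, fun i hi => ?_, ?_⟩
    · have h1 : (↑M : Multiset ℕ+).nthPart i = gP M i := nthPart_coe M hsM i
      rw [h1, hgM i hi, hstd]
    · rw [zetaPart]
      exact hbind
end

section
/- Let q ≥ 2 and ζ_q : Part → Part as above. A partition ψ in the image of ζ_q has more than one preimage under ζ_q if and only if there exist r ≥ 0 and indices 0 < i₁ < i₂ with ψ_{(i₁−1)q+1} = ψ_{(i₁−1)q+2} = r+1 and ψ_{i₂q−1} = ψ_{i₂q} = r. -/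
namespace ZetaAux


/-- number of parts of `φ` that are `≥ j`. -/
def cge (φ : Multiset ℕ+) (j : ℕ) : ℕ := (φ.filter (fun a : ℕ+ => j ≤ (a:ℕ))).card

lemma cge_add (φ₁ φ₂ : Multiset ℕ+) (j : ℕ) : cge (φ₁ + φ₂) j = cge φ₁ j + cge φ₂ j := by
  simp [cge, Multiset.filter_add]

lemma cge_zero (j : ℕ) : cge 0 j = 0 := rfl

lemma cge_cons (a : ℕ+) (φ : Multiset ℕ+) (j : ℕ) :
    cge (a ::ₘ φ) j = (if j ≤ (a:ℕ) then 1 else 0) + cge φ j := by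
  by_cases h : j ≤ (a:ℕ) <;> simp [cge, Multiset.filter_cons, h] <;> omega

lemma cge_replicate (n : ℕ) (x : ℕ+) (j : ℕ) :
    cge (Multiset.replicate n x) j = if j ≤ (x:ℕ) then n else 0 := by
  induction n with
  | zero => simp [cge]
  | succ n ih =>
    rw [Multiset.replicate_succ, cge_cons, ih]
    by_cases h : j ≤ (x:ℕ) <;> simp [h] <;> omega

lemma cge_antitone (φ : Multiset ℕ+) {j j' : ℕ} (h : j ≤ j') : cge φ j' ≤ cge φ j := by
  apply Multiset.card_le_card
  apply Multiset.monotone_filter_right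
  intro a ha; exact le_trans h ha

lemma cge_succ (φ : Multiset ℕ+) (j : ℕ) (hj : 1 ≤ j) :
    cge φ j = cge φ (j+1) + (φ.filter (fun a : ℕ+ => (a:ℕ) = j)).card := by
  rw [cge, cge, ← Multiset.card_add, Multiset.filter_add_filter]
  have h1 : Multiset.filter (fun a : ℕ+ => j+1 ≤ (a:ℕ) ∨ (a:ℕ) = j) φ
      = Multiset.filter (fun a : ℕ+ => j ≤ (a:ℕ)) φ := by
    apply Multiset.filter_congr; intro a _; constructor
    · intro h; omega
    · intro h; omega
  have h2 : Multiset.filter (fun a : ℕ+ => (j+1 ≤ (a:ℕ)) ∧ (a:ℕ) = j) φ = 0 := by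
    rw [Multiset.filter_eq_nil]; intro a ha h; omega
  rw [h1, h2]; simp

lemma cge_eventually_zero (φ : Multiset ℕ+) :
    ∀ j, ((φ.map ((↑·) : ℕ+ → ℕ)).sum + 1) ≤ j → cge φ j = 0 := by
  intro j hj
  rw [cge, Multiset.card_eq_zero, Multiset.filter_eq_nil]
  intro a ha h
  have : (a:ℕ) ≤ (φ.map ((↑·) : ℕ+ → ℕ)).sum := by
    apply Multiset.le_sum_of_mem
    exact Multiset.mem_map_of_mem _ ha
  omega

/-- A multiset of positive naturals is determined by its `cge` function. -/
lemma ext_cge {φ₁ φ₂ : Multiset ℕ+} (h : ∀ j, 1 ≤ j → cge φ₁ j = cge φ₂ j) : φ₁ = φ₂ := by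
  rw [Multiset.ext]
  intro a
  have h1 := cge_succ φ₁ (a:ℕ) a.2
  have h2 := cge_succ φ₂ (a:ℕ) a.2
  have key : (φ₁.filter (fun b : ℕ+ => (b:ℕ) = (a:ℕ))).card = (φ₂.filter (fun b : ℕ+ => (b:ℕ) = (a:ℕ))).card := by
    have e1 := h (a:ℕ) a.2
    have e2 := h ((a:ℕ)+1) (by omega)
    omega
  have conv : ∀ φ : Multiset ℕ+, (φ.filter (fun b : ℕ+ => (b:ℕ) = (a:ℕ))).card = φ.count a := by
    intro φ
    rw [Multiset.count, Multiset.countP_eq_card_filter]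
    congr 1; ext b
    simp [PNat.coe_inj, eq_comm]
  rwa [conv, conv] at key


section Zeta

variable (q : ℕ)

lemma cge_zetaPiece (hq : 1 ≤ q) (a : ℕ+) (v : ℕ) (hv : 1 ≤ v) :
    cge (zetaPiece q a) v = min q ((a:ℕ) - (v-1)*q) := by
  have hdm : (a:ℕ) / q * q + (a:ℕ) % q = (a:ℕ) := Nat.div_add_mod' _ _
  set d := (a:ℕ) / q with hd
  set l := (a:ℕ) % q with hl
  have hlq : l < q := Nat.mod_lt _ (by omega)
  rw [zetaPiece]
  by_cases hd0 : 0 < d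
  · rw [dif_pos hd0, cge_add]; erw [cge_replicate, cge_replicate]
    simp only [PNat.mk_coe]
    rcases Nat.lt_trichotomy v (d+1) with h | h | h
    · -- v ≤ d
      have hvd : v ≤ d := by omega
      have h1 : v*q ≤ d*q := Nat.mul_le_mul_right _ hvd
      have h2 : (v-1)*q + q = v*q := by
        have : (v-1)*q + q = ((v-1)+1)*q := (Nat.succ_mul _ _).symm
        rw [this, Nat.sub_add_cancel hv]
      have h3 : q ≤ (a:ℕ) - (v-1)*q := by omega
      rw [min_eq_left h3]; by_cases h5 : v ≤ (a:ℕ)/q + 1 <;> by_cases h6 : v ≤ (a:ℕ)/q <;> simp only [h5, h6, ↓reduceIte] <;> omega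
    · -- v = d+1
      subst h
      have h2 : (d+1-1)*q = d*q := by norm_num
      have h3 : (a:ℕ) - (d+1-1)*q = l := by omega
      rw [h3, min_eq_right (le_of_lt hlq)]; by_cases h5 : d + 1 ≤ (a:ℕ)/q + 1 <;> by_cases h6 : d + 1 ≤ (a:ℕ)/q <;> simp only [h5, h6, ↓reduceIte] <;> omega
    · -- v ≥ d+2
      have h1 : (d+1)*q ≤ (v-1)*q := Nat.mul_le_mul_right _ (by omega)
      have h2 : (d+1)*q = d*q + q := Nat.succ_mul _ _
      have h3 : (a:ℕ) - (v-1)*q = 0 := by omega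
      rw [h3, Nat.min_zero]; by_cases h5 : v ≤ (a:ℕ)/q + 1 <;> by_cases h6 : v ≤ (a:ℕ)/q <;> simp only [h5, h6, ↓reduceIte] <;> omega
  · rw [dif_neg hd0]
    have hd0' : d = 0 := Nat.le_zero.mp (Nat.not_lt.mp hd0)
    rw [hd0', zero_mul, zero_add] at hdm
    have ha : (a:ℕ) = l := hdm.symm
    rw [add_zero]; erw [cge_replicate]
    simp only [PNat.mk_coe]
    rcases Nat.lt_trichotomy v 1 with h | h | h
    · omega
    · subst h
      have h3 : (a:ℕ) - (1-1)*q = l := by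
        rw [show (1-1)*q = 0 by norm_num]; omega
      rw [h3, min_eq_right (le_of_lt hlq)]; by_cases h5 : 1 ≤ (a:ℕ)/q + 1 <;> simp only [h5, ↓reduceIte] <;> omega
    · have h1 : 1*q ≤ (v-1)*q := Nat.mul_le_mul_right _ (by omega)
      have h3 : (a:ℕ) - (v-1)*q = 0 := by omega
      rw [h3, Nat.min_zero]; by_cases h5 : v ≤ (a:ℕ)/q + 1 <;> simp only [h5, ↓reduceIte] <;> omega

lemma cge_zetaPart (hq : 1 ≤ q) (φ : Multiset ℕ+) (v : ℕ) (hv : 1 ≤ v) :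
    cge (zetaPart q φ) v = (φ.map (fun a : ℕ+ => min q ((a:ℕ) - (v-1)*q))).sum := by
  induction φ using Multiset.induction with
  | empty => simp [zetaPart, cge]
  | cons a φ ih =>
    rw [zetaPart, Multiset.cons_bind, cge_add, ← zetaPart, ih,
      cge_zetaPiece q hq a v hv, Multiset.map_cons, Multiset.sum_cons]

lemma indicator_sum_Icc (m a c : ℕ) :
    (∑ j ∈ Finset.Icc (m+1) (m+c), if j ≤ a then 1 else 0) = min c (a - m) := by
  induction c with
  | zero => simp
  | succ c ih =>
    rw [show m + (c+1) = (m+c) + 1 from rfl, Finset.sum_Icc_succ_top (by omega), ih]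
    by_cases h : m + c + 1 ≤ a
    · rw [if_pos h, min_eq_left (by omega), min_eq_left (by omega)]
    · rw [if_neg h, min_eq_right (by omega), min_eq_right (by omega)]
      omega

/-- Block-sum formula: the conjugate of `ζ_q φ` at `v` is the sum of the conjugate of `φ`
over the `v`-th block of positions. -/
lemma cge_zetaPart_block (hq : 1 ≤ q) (φ : Multiset ℕ+) (v : ℕ) (hv : 1 ≤ v) :
    cge (zetaPart q φ) v = ∑ j ∈ Finset.Icc ((v-1)*q+1) ((v-1)*q+q), cge φ j := by
  rw [cge_zetaPart q hq φ v hv]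
  induction φ using Multiset.induction with
  | empty => simp [cge]
  | cons a φ ih =>
    rw [Multiset.map_cons, Multiset.sum_cons, ih]
    have hc : ∀ j, cge (a ::ₘ φ) j = (if j ≤ (a:ℕ) then 1 else 0) + cge φ j := fun j => cge_cons a φ j
    simp only [hc]
    rw [Finset.sum_add_distrib, indicator_sum_Icc ((v-1)*q) (a:ℕ) q]

end Zeta

section NthPart

lemma getD_sorted_ge {l : List ℕ} (hl : l.Pairwise (· ≥ ·)) (j v : ℕ) (hv : 1 ≤ v) :
    v ≤ l.getD j 0 ↔ j < l.countP (fun a => decide (v ≤ a)) := by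
  induction l generalizing j with
  | nil => simp; omega
  | cons a t ih =>
    have hat : ∀ b ∈ t, b ≤ a := fun b hb => List.rel_of_pairwise_cons hl hb
    have hst : t.Pairwise (· ≥ ·) := hl.of_cons
    rw [List.countP_cons]
    cases j with
    | zero =>
      rw [List.getD_cons_zero]
      by_cases h : v ≤ a
      · simp [h]
      · rw [if_neg (by simpa using h)]
        have : t.countP (fun a => decide (v ≤ a)) = 0 := by
          rw [List.countP_eq_zero]
          intro b hb
          simp only [decide_eq_true_eq]
          intro hvb; exact h (le_trans hvb (hat b hb))
        simp [h, this]
    | succ j =>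
      rw [List.getD_cons_succ, ih hst j]
      by_cases h : v ≤ a
      · rw [if_pos (by simpa using h)]; omega
      · rw [if_neg (by simpa using h)]
        have h0 : t.countP (fun a => decide (v ≤ a)) = 0 := by
          rw [List.countP_eq_zero]
          intro b hb
          simp only [decide_eq_true_eq]
          intro hvb; exact h (le_trans hvb (hat b hb))
        omega

lemma cge_eq_countP (ψ : Multiset ℕ+) (v : ℕ) :
    cge ψ v = (((ψ.map ((↑·) : ℕ+ → ℕ)).sort (· ≤ ·)).reverse).countP (fun a => decide (v ≤ a)) := by
  rw [List.countP_reverse, cge, ← Multiset.countP_eq_card_filter]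
  have : Multiset.countP (fun x : ℕ => v ≤ x) (ψ.map ((↑·) : ℕ+ → ℕ))
      = Multiset.countP (fun a : ℕ+ => v ≤ (a:ℕ)) ψ := by
    rw [Multiset.countP_map, Multiset.countP_eq_card_filter]
  rw [← this]
  rw [← Multiset.sort_eq (ψ.map ((↑·) : ℕ+ → ℕ)) (· ≤ ·), Multiset.coe_countP]
  simp

/-- Key interface: the `p`-th part is at least `v` iff at least `p` parts are at least `v`. -/
lemma nthPart_iff (ψ : Multiset ℕ+) (p v : ℕ) (hp : 1 ≤ p) (hv : 1 ≤ v) :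
    v ≤ ψ.nthPart p ↔ p ≤ cge ψ v := by
  rw [Multiset.nthPart, cge_eq_countP]
  have hs : (((ψ.map ((↑·) : ℕ+ → ℕ)).sort (· ≤ ·)).reverse).Pairwise (· ≥ ·) := by
    rw [List.pairwise_reverse]
    exact Multiset.pairwise_sort _ (fun a b : ℕ => a ≤ b)
  rw [getD_sorted_ge hs (p-1) v hv]
  omega

end NthPart

section Realization

lemma anti_mono (C : ℕ → ℕ) (hC : ∀ j, 1 ≤ j → C (j+1) ≤ C j) :
    ∀ j k, 1 ≤ j → j ≤ k → C k ≤ C j := by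
  intro j k hj hjk
  induction k with
  | zero => exact absurd hjk (by omega)
  | succ k ih =>
    rcases Nat.lt_or_ge j (k+1) with h | h
    · exact le_trans (hC k (by omega)) (ih (by omega))
    · have : j = k+1 := by omega
      subst this; exact le_rfl

lemma cge_finsetSum {ι : Type*} (s : Finset ι) (f : ι → Multiset ℕ+) (i : ℕ) :
    cge (∑ j ∈ s, f j) i = ∑ j ∈ s, cge (f j) i := by
  classical
  induction s using Finset.induction_on with
  | empty => simp [cge]
  | insert _ _ h ih => rw [Finset.sum_insert h, Finset.sum_insert h, cge_add, ih]

/-- telescoping sum for antitone sequences -/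
lemma telescope_sum (C : ℕ → ℕ) (hC : ∀ j, 1 ≤ j → C (j+1) ≤ C j) (a b : ℕ) (hab : a ≤ b) :
    (∑ j ∈ Finset.Ico a b, (C (j+1) - C (j+2))) = C (a+1) - C (b+1) := by
  induction b with
  | zero => simp [Nat.le_zero.mp hab]
  | succ b ihb =>
    rcases Nat.lt_or_ge a (b+1) with h | h
    · rw [Finset.sum_Ico_succ_top (by omega), ihb (by omega)]
      have h1 : C (b+2) ≤ C (b+1) := hC (b+1) (by omega)
      have h2 : C (b+1) ≤ C (a+1) := anti_mono C hC (a+1) (b+1) (by omega) (by omega)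
      have hg : C (b+1+1) = C (b+2) := by norm_num
      rw [hg]
      omega
    · have : a = b + 1 := by omega
      subst this
      simp

/-- Realization: any antitone eventually-zero sequence on positions `≥ 1` is the
`cge` function of a multiset of positive naturals. -/
lemma realize (C : ℕ → ℕ) (hC : ∀ j, 1 ≤ j → C (j+1) ≤ C j) (N : ℕ)
    (hN : ∀ j, N < j → C j = 0) :
    ∃ φ : Multiset ℕ+, ∀ j, 1 ≤ j → cge φ j = C j := by
  refine ⟨∑ j ∈ Finset.range N, Multiset.replicate (C (j+1) - C (j+2)) ⟨j+1, Nat.succ_pos _⟩, ?_⟩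
  intro i hi
  rw [cge_finsetSum]
  have hterm : ∀ j, cge (Multiset.replicate (C (j+1) - C (j+2)) (⟨j+1, Nat.succ_pos _⟩ : ℕ+)) i
      = if i ≤ j+1 then C (j+1) - C (j+2) else 0 := by
    intro j; erw [cge_replicate]; simp; rfl
  simp only [hterm]
  rw [Finset.sum_ite, Finset.sum_const_zero, add_zero]
  have hfil : Finset.filter (fun j => i ≤ j + 1) (Finset.range N) = Finset.Ico (i-1) N := by
    ext j; simp [Finset.mem_filter, Finset.mem_Ico]; omega
  rw [hfil]
  rcases Nat.lt_or_ge N (i-1) with h | h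
  · rw [Finset.Ico_eq_empty (by omega), Finset.sum_empty]
    exact (hN i (by omega)).symm
  · rw [telescope_sum C hC (i-1) N h]
    have : i - 1 + 1 = i := by omega
    rw [this, hN (N+1) (by omega)]
    omega

end Realization

section Main

variable {q : ℕ} {ψ : Multiset ℕ+}

lemma block_sum_eq (hq : 1 ≤ q) {φ : Multiset ℕ+} (hφ : zetaPart q φ = ψ)
    (v : ℕ) (hv : 1 ≤ v) :
    ∑ j ∈ Finset.Icc ((v-1)*q+1) ((v-1)*q+q), cge φ j = cge ψ v := by
  rw [← hφ]; exact (cge_zetaPart_block q hq φ v hv).symm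

lemma card_blk (m c : ℕ) : (Finset.Icc (m+1) (m+c)).card = c := by
  rw [Nat.card_Icc]; omega

lemma sum_blk_le (f : ℕ → ℕ) (m c bnd : ℕ) (h : ∀ j ∈ Finset.Icc (m+1) (m+c), f j ≤ bnd) :
    ∑ j ∈ Finset.Icc (m+1) (m+c), f j ≤ c * bnd := by
  have := Finset.sum_le_card_nsmul (Finset.Icc (m+1) (m+c)) f bnd h
  rwa [card_blk, smul_eq_mul] at this

lemma sum_blk_ge (f : ℕ → ℕ) (m c bnd : ℕ) (h : ∀ j ∈ Finset.Icc (m+1) (m+c), bnd ≤ f j) :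
    c * bnd ≤ ∑ j ∈ Finset.Icc (m+1) (m+c), f j := by
  have := Finset.card_nsmul_le_sum (Finset.Icc (m+1) (m+c)) f bnd h
  rwa [card_blk, smul_eq_mul] at this

/-- MB: a preimage which has two parts strictly inside some band gives rise to
two distinct preimages. -/
lemma two_preimages_of_spread (hq : 2 ≤ q) {φ : Multiset ℕ+} (hφ : zetaPart q φ = ψ)
    {v : ℕ} (hv : 1 ≤ v) (hsp : cge φ ((v-1)*q+q) + 2 ≤ cge φ ((v-1)*q+1)) :
    ∃ φ₁ φ₂ : Multiset ℕ+, φ₁ ≠ φ₂ ∧ zetaPart q φ₁ = ψ ∧ zetaPart q φ₂ = ψ := by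
  set m := (v-1)*q with hm
  set Mv := cge ψ v with hMv
  obtain ⟨K, e, hKe, heq⟩ : ∃ K e, q * K + e = Mv ∧ e < q :=
    ⟨Mv / q, Mv % q, Nat.div_add_mod Mv q, Nat.mod_lt _ (by omega)⟩
  have hsum : ∑ j ∈ Finset.Icc (m+1) (m+q), cge φ j = Mv := block_sum_eq (by omega) hφ v hv
  -- bounds
  have htop : Mv ≤ q * cge φ (m+1) := by
    have := sum_blk_le (cge φ) m q (cge φ (m+1))
      (fun j hj => cge_antitone φ (by simp [Finset.mem_Icc] at hj; omega))
    have hcomm : q * cge φ (m+1) = cge φ (m+1) * q := Nat.mul_comm _ _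
    omega
  have hbot : q * cge φ (m+q) ≤ Mv := by
    have := sum_blk_ge (cge φ) m q (cge φ (m+q))
      (fun j hj => cge_antitone φ (by simp [Finset.mem_Icc] at hj; omega))
    have hcomm : q * cge φ (m+q) = cge φ (m+q) * q := Nat.mul_comm _ _
    omega
  have hK1 : cge φ (m+q) ≤ K := by
    by_contra hcon
    push_neg at hcon
    have : q * (K+1) ≤ q * cge φ (m+q) := Nat.mul_le_mul_left _ hcon
    have hs : q * (K+1) = q * K + q := Nat.mul_succ q K
    omega
  have hK2a : 0 < e → K + 1 ≤ cge φ (m+1) := by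
    intro he0
    by_contra hcon
    push_neg at hcon
    have hcon' : cge φ (m+1) ≤ K := by omega
    have : q * cge φ (m+1) ≤ q * K := Nat.mul_le_mul_left _ hcon'
    omega
  have hK2b : K ≤ cge φ (m+1) := by
    by_contra hcon
    push_neg at hcon
    have hcon' : cge φ (m+1) + 1 ≤ K := by omega
    have : q * (cge φ (m+1) + 1) ≤ q * K := Nat.mul_le_mul_left _ hcon'
    have hs : q * (cge φ (m+1) + 1) = q * cge φ (m+1) + q := Nat.mul_succ _ _
    omega
  -- the modified conjugate function
  set C' : ℕ → ℕ := fun j => if m+1 ≤ j ∧ j ≤ m+q then K + (if j ≤ m + e then 1 else 0) else cge φ j with hC'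
  have hC'in : ∀ j, m+1 ≤ j → j ≤ m+q → C' j = K + (if j ≤ m + e then 1 else 0) := by
    intro j h1 h2; simp only [hC', if_pos (And.intro h1 h2)]
  have hC'out : ∀ j, ¬(m+1 ≤ j ∧ j ≤ m+q) → C' j = cge φ j := by
    intro j h; simp only [hC', if_neg h]
  -- antitone
  have hanti : ∀ j, 1 ≤ j → C' (j+1) ≤ C' j := by
    intro j hj
    rcases Nat.lt_or_ge j m with h | h
    · rw [hC'out j (by omega)]
      rcases Nat.lt_or_ge (j+1) (m+1) with h2 | h2
      · rw [hC'out (j+1) (by omega)]; exact cge_antitone φ (by omega)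
      · have hjm : j + 1 = m + 1 := by omega
        omega
    · rcases Nat.lt_or_ge j (m+1) with h1 | h1
      · -- j = m
        have hjm : j = m := by omega
        rw [hjm, hC'out m (by omega), hC'in (m+1) (by omega) (by omega)]
        have hmono : cge φ (m+1) ≤ cge φ m := cge_antitone φ (by omega)
        by_cases h3 : m+1 ≤ m + e <;> simp [h3] <;> omega
      · rcases Nat.lt_or_ge j (m+q) with h2 | h2
        · -- j and j+1 both in block
          rw [hC'in j (by omega) (by omega), hC'in (j+1) (by omega) (by omega)]
          by_cases h3 : j+1 ≤ m + e
          · rw [if_pos h3, if_pos (by omega)]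
          · rw [if_neg h3]
            by_cases h4 : j ≤ m + e <;> simp [h4]
        · rcases Nat.lt_or_ge j (m+q+1) with h3 | h3
          · -- j = m + q
            have hjm : j = m+q := by omega
            rw [hjm, hC'in (m+q) (by omega) (by omega), hC'out (m+q+1) (by omega),
              if_neg (by omega)]
            have hmono : cge φ (m+q+1) ≤ cge φ (m+q) := cge_antitone φ (by omega)
            omega
          · rw [hC'out j (by omega), hC'out (j+1) (by omega)]
            exact cge_antitone φ (by omega)
  -- eventually zero
  have hev : ∀ j, max ((φ.map ((↑·) : ℕ+ → ℕ)).sum + 1) (m+q+1) < j → C' j = 0 := by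
    intro j hj
    rw [hC'out j (by omega)]
    exact cge_eventually_zero φ j (by omega)
  obtain ⟨φ', hφ'⟩ := realize C' hanti _ hev
  -- block sums of C' equal those of cge φ
  have hblocks : ∀ w, 1 ≤ w →
      ∑ j ∈ Finset.Icc ((w-1)*q+1) ((w-1)*q+q), C' j
        = ∑ j ∈ Finset.Icc ((w-1)*q+1) ((w-1)*q+q), cge φ j := by
    intro w hw
    rcases Nat.lt_trichotomy w v with h | h | h
    · apply Finset.sum_congr rfl
      intro j hjmem
      simp only [Finset.mem_Icc] at hjmem
      have hwv : w * q ≤ (v-1) * q := Nat.mul_le_mul_right _ (by omega)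
      have hww : (w-1)*q + q = w * q := by
        have : (w-1)*q + q = ((w-1)+1)*q := (Nat.succ_mul _ _).symm
        rw [this, Nat.sub_add_cancel hw]
      exact hC'out j (by omega)
    · subst h
      rw [hsum]
      have : ∀ j ∈ Finset.Icc (m+1) (m+q), C' j = K + (if j ≤ m + e then 1 else 0) := by
        intro j hjmem
        simp only [Finset.mem_Icc] at hjmem
        exact hC'in j hjmem.1 hjmem.2
      rw [Finset.sum_congr rfl this, Finset.sum_add_distrib, indicator_sum_Icc m (m+e) q,
        Finset.sum_const, card_blk, smul_eq_mul]
      have : min q (m + e - m) = e := by omega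
      rw [this]
      omega
    · apply Finset.sum_congr rfl
      intro j hjmem
      simp only [Finset.mem_Icc] at hjmem
      have hwv : v * q ≤ (w-1) * q := Nat.mul_le_mul_right _ (by omega)
      have hvv : (v-1)*q + q = v * q := by
        have : (v-1)*q + q = ((v-1)+1)*q := (Nat.succ_mul _ _).symm
        rw [this, Nat.sub_add_cancel hv]
      exact hC'out j (by omega)
  -- φ' is a preimage
  have hpre' : zetaPart q φ' = ψ := by
    apply ext_cge
    intro u hu
    rw [cge_zetaPart_block q (by omega) φ' u hu]
    have : ∀ j ∈ Finset.Icc ((u-1)*q+1) ((u-1)*q+q), cge φ' j = C' j := by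
      intro j hjmem
      simp only [Finset.mem_Icc] at hjmem
      exact hφ' j (by omega)
    rw [Finset.sum_congr rfl this, hblocks u hu, block_sum_eq (by omega) hφ u hu]
  -- φ' ≠ φ
  have hne : φ' ≠ φ := by
    intro hcontra
    have h1 : cge φ (m+1) = C' (m+1) := by rw [← hcontra]; exact hφ' (m+1) (by omega)
    have h2 : cge φ (m+q) = C' (m+q) := by rw [← hcontra]; exact hφ' (m+q) (by omega)
    rw [hC'in (m+1) (by omega) (by omega)] at h1
    rw [hC'in (m+q) (by omega) (by omega)] at h2
    rw [if_neg (by omega)] at h2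
    by_cases h3 : m+1 ≤ m+e
    · rw [if_pos h3] at h1; omega
    · rw [if_neg h3] at h1; omega
  exact ⟨φ', φ, hne, hpre', hφ⟩

lemma nthPart_eq_of (p w : ℕ) (hp : 1 ≤ p) (hw : 1 ≤ w)
    (hle : p ≤ cge ψ w) (hgt : cge ψ (w+1) < p) : ψ.nthPart p = w := by
  have h1 : w ≤ ψ.nthPart p := (nthPart_iff ψ p w hp hw).2 hle
  have h2 : ¬ (w+1 ≤ ψ.nthPart p) := by
    rw [nthPart_iff ψ p (w+1) hp (by omega)]; omega
  omega

lemma nthPart_eq_zero (p : ℕ) (hp : 1 ≤ p) (hgt : cge ψ 1 < p) : ψ.nthPart p = 0 := by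
  have h2 : ¬ (1 ≤ ψ.nthPart p) := by
    rw [nthPart_iff ψ p 1 hp (by omega)]; omega
  omega

/-- MD: a preimage with two parts strictly inside band `v` yields the position condition. -/
lemma cond_of_spread (hq : 2 ≤ q) {φ : Multiset ℕ+} (hφ : zetaPart q φ = ψ)
    {v : ℕ} (hv : 1 ≤ v) (hsp : cge φ ((v-1)*q+q) + 2 ≤ cge φ ((v-1)*q+1)) :
    ∃ r i₁ i₂ : ℕ, 0 < i₁ ∧ i₁ < i₂ ∧
      ψ.nthPart ((i₁ - 1) * q + 1) = r + 1 ∧ ψ.nthPart ((i₁ - 1) * q + 2) = r + 1 ∧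
      ψ.nthPart (i₂ * q - 1) = r ∧ ψ.nthPart (i₂ * q) = r := by
  set m := (v-1)*q with hm
  set b := cge φ (m+q) with hb
  set t := cge φ (m+1) with ht
  have hsum : ∑ j ∈ Finset.Icc (m+1) (m+q), cge φ j = cge ψ v := block_sum_eq (by omega) hφ v hv
  have hmem1 : m+1 ∈ Finset.Icc (m+1) (m+q) := by simp [Finset.mem_Icc]; omega
  have hmemq : m+q ∈ Finset.Icc (m+1) (m+q) := by simp [Finset.mem_Icc]; omega
  -- A2 : q*b + (t-b) ≤ cge ψ v
  have hA2 : b*q + (t - b) ≤ cge ψ v := by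
    have hsplit := Finset.add_sum_erase _ (cge φ) hmem1
    have hrest : (q-1) * b ≤ ∑ j ∈ (Finset.Icc (m+1) (m+q)).erase (m+1), cge φ j := by
      have := Finset.card_nsmul_le_sum ((Finset.Icc (m+1) (m+q)).erase (m+1)) (cge φ) b
        (fun j hj => by
          have hj' := Finset.mem_of_mem_erase hj
          simp [Finset.mem_Icc] at hj'
          exact cge_antitone φ (by omega))
      rwa [Finset.card_erase_of_mem hmem1, card_blk, smul_eq_mul] at this
    have hbq : b * q = (q-1) * b + b := by
      have h1 : (q-1) * b + b = ((q-1)+1) * b := (Nat.succ_mul _ _).symm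
      have h2 : (q-1)+1 = q := by omega
      rw [h1, h2, Nat.mul_comm]
    omega
  -- A3 : cge ψ v + (t - b) ≤ (b + (t-b)) * q  i.e.  sum ≤ b + (q-1)*t
  have hA3 : cge ψ v + (t - b) ≤ t * q := by
    have hsplit := Finset.add_sum_erase _ (cge φ) hmemq
    have hrest : ∑ j ∈ (Finset.Icc (m+1) (m+q)).erase (m+q), cge φ j ≤ (q-1) * t := by
      have := Finset.sum_le_card_nsmul ((Finset.Icc (m+1) (m+q)).erase (m+q)) (cge φ) t
        (fun j hj => by
          have hj' := Finset.mem_of_mem_erase hj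
          simp [Finset.mem_Icc] at hj'
          exact cge_antitone φ (by omega))
      rwa [Finset.card_erase_of_mem hmemq, card_blk, smul_eq_mul] at this
    have htq : t * q = (q-1) * t + t := by
      have h1 : (q-1) * t + t = ((q-1)+1) * t := (Nat.succ_mul _ _).symm
      have h2 : (q-1)+1 = q := by omega
      rw [h1, h2, Nat.mul_comm]
    omega
  -- A1 : cge ψ (v+1) ≤ b*q
  have hA1 : cge ψ (v+1) ≤ b*q := by
    have hsum1 : ∑ j ∈ Finset.Icc (v*q+1) (v*q+q), cge φ j = cge ψ (v+1) := by
      have := block_sum_eq (q := q) (ψ := ψ) (by omega) hφ (v+1) (by omega)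
      have hvq : (v+1-1)*q = v*q := by norm_num
      rwa [hvq] at this
    have hvm : v*q = m + q := by
      have : (v-1)*q + q = ((v-1)+1)*q := (Nat.succ_mul _ _).symm
      rw [hm, this, Nat.sub_add_cancel hv]
    have hle : ∑ j ∈ Finset.Icc (v*q+1) (v*q+q), cge φ j ≤ q * b := by
      have := sum_blk_ge (cge φ) (v*q) q 0 (fun j hj => by omega)
      have := sum_blk_le (cge φ) (v*q) q b
        (fun j hj => by
          simp [Finset.mem_Icc] at hj
          exact cge_antitone φ (by omega))
      have hcomm : q * b = b * q := Nat.mul_comm _ _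
      omega
    have hcomm : q * b = b * q := Nat.mul_comm _ _
    omega
  -- A4 : v ≥ 2 → t*q ≤ cge ψ (v-1)
  have hA4 : 2 ≤ v → t * q ≤ cge ψ (v-1) := by
    intro hv2
    have hsum1 : ∑ j ∈ Finset.Icc ((v-2)*q+1) ((v-2)*q+q), cge φ j = cge ψ (v-1) := by
      have h := block_sum_eq (q := q) (ψ := ψ) (by omega) hφ (v-1) (by omega)
      have hvq : (v-1-1)*q = (v-2)*q := by rw [Nat.sub_sub]
      rwa [hvq] at h
    have hmm : (v-2)*q + q = (v-1)*q := by
      have h1 : (v-2)*q + q = ((v-2)+1)*q := (Nat.succ_mul _ _).symm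
      have h2 : (v-2)+1 = v-1 := by omega
      rw [h1, h2]
    have hge : q * t ≤ ∑ j ∈ Finset.Icc ((v-2)*q+1) ((v-2)*q+q), cge φ j := by
      apply sum_blk_ge (cge φ) ((v-2)*q) q t
      intro j hj
      simp [Finset.mem_Icc] at hj
      exact cge_antitone φ (by omega)
    have hcomm : q * t = t * q := Nat.mul_comm _ _
    omega
  -- conclusion
  have hq4 : 2*2 ≤ t * q := Nat.mul_le_mul (by omega) (by omega)
  refine ⟨v - 1, b + 1, t, by omega, by omega, ?_, ?_, ?_, ?_⟩
  · have hpos : (b+1-1)*q = b*q := by norm_num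
    rw [hpos, show v - 1 + 1 = v from by omega]
    exact nthPart_eq_of _ _ (by omega) hv (by omega) (by omega)
  · have hpos : (b+1-1)*q = b*q := by norm_num
    rw [hpos, show v - 1 + 1 = v from by omega]
    exact nthPart_eq_of _ _ (by omega) hv (by omega) (by omega)
  · rcases Nat.lt_or_ge v 2 with h2 | h2
    · rw [show v - 1 = 0 from by omega]
      apply nthPart_eq_zero _ (by omega)
      rw [show (1:ℕ) = v from by omega]
      omega
    · apply nthPart_eq_of _ _ (by omega) (by omega) ?_ ?_
      · have := hA4 h2
        omega
      · rw [show v - 1 + 1 = v from by omega]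
        omega
  · rcases Nat.lt_or_ge v 2 with h2 | h2
    · rw [show v - 1 = 0 from by omega]
      apply nthPart_eq_zero _ (by omega)
      rw [show (1:ℕ) = v from by omega]
      omega
    · apply nthPart_eq_of _ _ (by omega) (by omega) ?_ ?_
      · have := hA4 h2
        omega
      · rw [show v - 1 + 1 = v from by omega]
        omega

lemma divmod_unique {Q K₁ e₁ K₂ e₂ : ℕ} (h : Q*K₁ + e₁ = Q*K₂ + e₂)
    (h₁ : e₁ < Q) (h₂ : e₂ < Q) : K₁ = K₂ ∧ e₁ = e₂ := by
  rcases Nat.lt_trichotomy K₁ K₂ with hlt | heq | hgt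
  · have h3 : Q*(K₁+1) ≤ Q*K₂ := Nat.mul_le_mul_left _ hlt
    have h4 : Q*(K₁+1) = Q*K₁ + Q := Nat.mul_succ _ _
    omega
  · subst heq; omega
  · have h3 : Q*(K₂+1) ≤ Q*K₁ := Nat.mul_le_mul_left _ hgt
    have h4 : Q*(K₂+1) = Q*K₂ + Q := Nat.mul_succ _ _
    omega

lemma sum_split (f : ℕ → ℕ) (m c j : ℕ) (h1 : m ≤ j) (h2 : j ≤ m + c) :
    ∑ i ∈ Finset.Icc (m+1) (m+c), f i
      = ∑ i ∈ Finset.Icc (m+1) j, f i + ∑ i ∈ Finset.Icc (j+1) (m+c), f i := by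
  rw [Finset.Icc_add_one_left_eq_Ioc, Finset.Icc_add_one_left_eq_Ioc, Finset.Icc_add_one_left_eq_Ioc]
  exact (Finset.sum_Ioc_consecutive _ h1 h2).symm

lemma sum_Icc_le (f : ℕ → ℕ) (a b bnd : ℕ) (h : ∀ j ∈ Finset.Icc a b, f j ≤ bnd) :
    ∑ j ∈ Finset.Icc a b, f j ≤ (b+1-a) * bnd := by
  have := Finset.sum_le_card_nsmul (Finset.Icc a b) f bnd h
  rwa [Nat.card_Icc, smul_eq_mul] at this

lemma sum_Icc_ge (f : ℕ → ℕ) (a b bnd : ℕ) (h : ∀ j ∈ Finset.Icc a b, bnd ≤ f j) :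
    (b+1-a) * bnd ≤ ∑ j ∈ Finset.Icc a b, f j := by
  have := Finset.card_nsmul_le_sum (Finset.Icc a b) f bnd h
  rwa [Nat.card_Icc, smul_eq_mul] at this

/-- RC: in a rigid block, the conjugate takes the canonical rounded shape. -/
lemma rigid_block (hq : 2 ≤ q) {φ : Multiset ℕ+} (hφ : zetaPart q φ = ψ)
    {v : ℕ} (hv : 1 ≤ v)
    (hr : cge φ ((v-1)*q+1) ≤ cge φ ((v-1)*q+q) + 1) :
    ∃ K e, q*K + e = cge ψ v ∧ e < q ∧
      ∀ j, (v-1)*q+1 ≤ j → j ≤ (v-1)*q+q →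
        cge φ j = K + (if j ≤ (v-1)*q + e then 1 else 0) := by
  set m := (v-1)*q with hm
  set Mv := cge ψ v with hMv
  set b := cge φ (m+q) with hb
  set t := cge φ (m+1) with ht
  have hsum : ∑ j ∈ Finset.Icc (m+1) (m+q), cge φ j = Mv := block_sum_eq (by omega) hφ v hv
  have hbc : ∀ j, m+1 ≤ j → j ≤ m+q → b ≤ cge φ j ∧ cge φ j ≤ t := by
    intro j hj1 hj2
    exact ⟨cge_antitone φ hj2, cge_antitone φ hj1⟩
  have hbt : b ≤ t := (hbc (m+1) (le_refl _) (by omega)).1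
  -- lower bound q*b ≤ Mv
  have hlow : q * b ≤ Mv := by
    have := sum_blk_ge (cge φ) m q b (fun j hj => by
      simp [Finset.mem_Icc] at hj; exact (hbc j hj.1 hj.2).1)
    have hcomm : q*b = b*q := Nat.mul_comm _ _
    omega
  -- upper bound Mv ≤ q*b + (q-1)
  have hup : Mv ≤ q * b + (q-1) := by
    have hmemq : m+q ∈ Finset.Icc (m+1) (m+q) := by simp [Finset.mem_Icc]; omega
    have hsplit := Finset.add_sum_erase _ (cge φ) hmemq
    have hrest : ∑ j ∈ (Finset.Icc (m+1) (m+q)).erase (m+q), cge φ j ≤ (q-1) * (b+1) := by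
      have := Finset.sum_le_card_nsmul ((Finset.Icc (m+1) (m+q)).erase (m+q)) (cge φ) (b+1)
        (fun j hj => by
          have hj' := Finset.mem_of_mem_erase hj
          simp [Finset.mem_Icc] at hj'
          have := (hbc j hj'.1 hj'.2).2
          omega)
      rwa [Finset.card_erase_of_mem hmemq, card_blk, smul_eq_mul] at this
    have h1 : (q-1)*(b+1) = (q-1)*b + (q-1) := Nat.mul_succ _ _
    have h2 : q*b = (q-1)*b + b := by
      have h3 : (q-1)*b + b = ((q-1)+1)*b := (Nat.succ_mul _ _).symm
      rw [h3, show (q-1)+1 = q from by omega]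
    omega
  refine ⟨b, Mv - q*b, by omega, by omega, ?_⟩
  intro j hj1 hj2
  have hCj : cge φ j = b ∨ cge φ j = b + 1 := by
    have := hbc j hj1 hj2
    omega
  -- claim (i): if cge φ j = b+1 then q*b + (j-m) ≤ Mv
  have claim1 : cge φ j = b + 1 → q*b + (j-m) ≤ Mv := by
    intro hval
    have hsp := sum_split (cge φ) m q j (by omega) (by omega)
    have hS1 : (j+1-(m+1)) * (b+1) ≤ ∑ i ∈ Finset.Icc (m+1) j, cge φ i := by
      apply sum_Icc_ge
      intro i hi
      simp [Finset.mem_Icc] at hi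
      have : cge φ j ≤ cge φ i := cge_antitone φ hi.2
      omega
    have hS2 : (m+q+1-(j+1)) * b ≤ ∑ i ∈ Finset.Icc (j+1) (m+q), cge φ i := by
      apply sum_Icc_ge
      intro i hi
      simp [Finset.mem_Icc] at hi
      exact (hbc i (by omega) hi.2).1
    rw [show j+1-(m+1) = j-m from by omega] at hS1
    rw [show m+q+1-(j+1) = m+q-j from by omega] at hS2
    have h1 : (j-m)*(b+1) = (j-m)*b + (j-m) := Nat.mul_succ _ _
    have h2 : (j-m)*b + (m+q-j)*b = q*b := by
      rw [← Nat.add_mul, show (j-m) + (m+q-j) = q from by omega, Nat.mul_comm]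
    omega
  -- claim (ii): if cge φ j = b then Mv ≤ q*b + (j-1-m)
  have claim2 : cge φ j = b → Mv ≤ q*b + (j-1-m) := by
    intro hval
    have hsp := sum_split (cge φ) m q (j-1) (by omega) (by omega)
    have hS1 : ∑ i ∈ Finset.Icc (m+1) (j-1), cge φ i ≤ (j-1+1-(m+1)) * (b+1) := by
      apply sum_Icc_le
      intro i hi
      simp [Finset.mem_Icc] at hi
      have := (hbc i hi.1 (by omega)).2
      omega
    have hS2 : ∑ i ∈ Finset.Icc (j-1+1) (m+q), cge φ i ≤ (m+q+1-(j-1+1)) * b := by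
      apply sum_Icc_le
      intro i hi
      simp [Finset.mem_Icc] at hi
      have : cge φ i ≤ cge φ j := cge_antitone φ (by omega)
      omega
    rw [show j-1+1-(m+1) = j-1-m from by omega] at hS1
    rw [show m+q+1-(j-1+1) = m+q+1-j from by omega] at hS2
    have h1 : (j-1-m)*(b+1) = (j-1-m)*b + (j-1-m) := Nat.mul_succ _ _
    have h2 : (j-1-m)*b + (m+q+1-j)*b = q*b := by
      rw [← Nat.add_mul, show (j-1-m) + (m+q+1-j) = q from by omega, Nat.mul_comm]
    omega
  by_cases hcase : j ≤ m + (Mv - q*b)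
  · rw [if_pos hcase]
    rcases hCj with h | h
    · have := claim2 h; omega
    · omega
  · rw [if_neg hcase]
    rcases hCj with h | h
    · omega
    · have := claim1 h; omega

/-- MC: two everywhere-rigid preimages coincide. -/
lemma rigid_unique (hq : 2 ≤ q) {φ₁ φ₂ : Multiset ℕ+}
    (h1 : zetaPart q φ₁ = ψ) (h2 : zetaPart q φ₂ = ψ)
    (hr1 : ∀ v, 1 ≤ v → cge φ₁ ((v-1)*q+1) ≤ cge φ₁ ((v-1)*q+q) + 1)
    (hr2 : ∀ v, 1 ≤ v → cge φ₂ ((v-1)*q+1) ≤ cge φ₂ ((v-1)*q+q) + 1) :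
    φ₁ = φ₂ := by
  apply ext_cge
  intro j hj
  obtain ⟨d, r, hdr, hrq⟩ : ∃ d r, d*q + r = j - 1 ∧ r < q :=
    ⟨(j-1)/q, (j-1)%q, Nat.div_add_mod' _ _, Nat.mod_lt _ (by omega)⟩
  have hdq : (d+1-1)*q = d*q := by norm_num
  obtain ⟨K₁, e₁, hKe₁, he₁, hf₁⟩ := rigid_block hq h1 (v := d+1) (by omega)
    (by rw [hdq]; exact hr1 (d+1) (by omega))
  obtain ⟨K₂, e₂, hKe₂, he₂, hf₂⟩ := rigid_block hq h2 (v := d+1) (by omega)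
    (by rw [hdq]; exact hr2 (d+1) (by omega))
  obtain ⟨hKK, hee⟩ := divmod_unique (hKe₁.trans hKe₂.symm) he₁ he₂
  have hjm : d*q+1 ≤ j ∧ j ≤ d*q+q := by omega
  have g1 := hf₁ j (by rw [hdq]; omega) (by rw [hdq]; omega)
  have g2 := hf₂ j (by rw [hdq]; omega) (by rw [hdq]; omega)
  rw [hdq] at g1 g2
  rw [g1, g2, hKK, hee]

/-- ME: if the position condition holds and the preimage `φ` is everywhere rigid,
then there are two distinct preimages. -/
lemma two_preimages_of_cond_rigid (hq : 2 ≤ q) {φ : Multiset ℕ+} (hφ : zetaPart q φ = ψ)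
    (hr : ∀ v, 1 ≤ v → cge φ ((v-1)*q+1) ≤ cge φ ((v-1)*q+q) + 1)
    {s i₁ i₂ : ℕ} (hs : 1 ≤ s) (hi1 : 0 < i₁) (hi12 : i₁ < i₂)
    (hA1 : cge ψ (s+1) ≤ (i₁-1)*q)
    (hA2 : (i₁-1)*q + 2 ≤ cge ψ s)
    (hA3 : cge ψ s + 2 ≤ i₂*q)
    (hA4 : s = 1 ∨ i₂*q ≤ cge ψ (s-1)) :
    ∃ φ₁ φ₂ : Multiset ℕ+, φ₁ ≠ φ₂ ∧ zetaPart q φ₁ = ψ ∧ zetaPart q φ₂ = ψ := by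
  set m := (s-1)*q with hm
  set μ := cge ψ s with hμ
  have hm0 : 2 ≤ s ∨ m = 0 := by
    rcases Nat.lt_or_ge s 2 with h | h
    · right; rw [hm, show s - 1 = 0 from by omega, Nat.zero_mul]
    · left; exact h
  have hmsq : m + q = s*q := by
    have h1 : (s-1)*q + q = ((s-1)+1)*q := (Nat.succ_mul _ _).symm
    rw [hm, h1, show (s-1)+1 = s from by omega]
  -- β = cge φ (m+q+1), the first entry of block s+1
  set β := cge φ (m+q+1) with hβdef
  have hβ : β ≤ i₁ - 1 := by
    obtain ⟨K', e', hKe', he', hf'⟩ := rigid_block hq hφ (v := s+1) (by omega)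
      (by rw [show (s+1-1)*q = s*q from by norm_num]; exact hr (s+1) (by omega))
    rw [show (s+1-1)*q = s*q from by norm_num] at hf'
    have hval := hf' (m+q+1) (by omega) (by omega)
    by_contra hcon
    push_neg at hcon
    by_cases he0 : 1 ≤ e'
    · rw [if_pos (by omega)] at hval
      have h1 : i₁ - 1 ≤ K' := by omega
      have h2 : q*(i₁-1) ≤ q*K' := Nat.mul_le_mul_left _ h1
      have h3 : q*(i₁-1) = (i₁-1)*q := Nat.mul_comm _ _
      omega
    · rw [if_neg (by omega)] at hval
      have h1 : i₁ - 1 + 1 ≤ K' := by omega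
      have h2 : q*(i₁-1+1) ≤ q*K' := Nat.mul_le_mul_left _ h1
      have h3 : q*(i₁-1+1) = q*(i₁-1) + q := Nat.mul_succ _ _
      have h4 : q*(i₁-1) = (i₁-1)*q := Nat.mul_comm _ _
      omega
  have hT2 : q*β + 2 ≤ μ := by
    have h2 : q*β ≤ q*(i₁-1) := Nat.mul_le_mul_left _ hβ
    have h3 : q*(i₁-1) = (i₁-1)*q := Nat.mul_comm _ _
    omega
  -- the cap T
  set T := if 2 ≤ s then cge φ m else max (β+2) μ with hTdef
  have hTfacts : (β + 2 ≤ T) ∧ (μ + 2 ≤ q*T) ∧ (2 ≤ s → cge φ m = T) := by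
    by_cases hs2 : 2 ≤ s
    · rw [hTdef, if_pos hs2]
      obtain ⟨K₀, e₀, hKe₀, he₀, hf₀⟩ := rigid_block hq hφ (v := s-1) (by omega)
        (hr (s-1) (by omega))
      have hm2 : (s-1-1)*q + q = m := by
        have h1 : (s-1-1)*q + q = ((s-1-1)+1)*q := (Nat.succ_mul _ _).symm
        rw [h1, show (s-1-1)+1 = s-1 from by omega]
      have hval := hf₀ m (by omega) (by omega)
      rw [if_neg (by omega), Nat.add_zero] at hval
      have hK₀ : i₂ ≤ K₀ := by
        rcases hA4 with h | h
        · omega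
        · by_contra hcon
          push_neg at hcon
          have h1 : K₀ + 1 ≤ i₂ := by omega
          have h2 : q*(K₀+1) ≤ q*i₂ := Nat.mul_le_mul_left _ h1
          have h3 : q*(K₀+1) = q*K₀ + q := Nat.mul_succ _ _
          have h4 : q*i₂ = i₂*q := Nat.mul_comm _ _
          have h5 : cge ψ (s-1-1+1) = cge ψ (s-1) := by rw [show s-1-1+1 = s-1 from by omega]
          omega
      rw [hval]
      refine ⟨by omega, ?_, fun _ => rfl⟩
      · have h1 : q*i₂ ≤ q*K₀ := Nat.mul_le_mul_left _ hK₀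
        have h2 : q*i₂ = i₂*q := Nat.mul_comm _ _
        omega
    · rw [hTdef, if_neg hs2]
      refine ⟨le_max_left _ _, ?_, fun h => absurd h hs2⟩
      have h1 : 2*(max (β+2) μ) ≤ q*(max (β+2) μ) := Nat.mul_le_mul_right _ hq
      have h2 : μ ≤ max (β+2) μ := le_max_right _ _
      have h3 : 2 ≤ max (β+2) μ := by
        have := le_max_left (β+2) μ; omega
      omega
  obtain ⟨hT1, hT3, hT4⟩ := hTfacts
  -- excess x and its division by D
  obtain ⟨x, hxdef, hx2⟩ : ∃ x, q*β + x = μ ∧ 2 ≤ x := ⟨μ - q*β, by omega, by omega⟩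
  set D := T - β with hDdef
  have hD2 : 2 ≤ D := by omega
  have hqT : q*D + q*β = q*T := by
    rw [← Nat.mul_add, show D + β = T from by omega]
  have hxD : x + 2 ≤ q*D := by omega
  obtain ⟨k, ρ, hkρ, hρ⟩ : ∃ k ρ, D*k + ρ = x ∧ ρ < D :=
    ⟨x/D, x%D, Nat.div_add_mod x D, Nat.mod_lt _ (by omega)⟩
  have hkq : k + 1 ≤ q := by
    by_contra hcon
    push_neg at hcon
    have h1 : D*q ≤ D*k := Nat.mul_le_mul_left _ (by omega)
    have h2 : D*q = q*D := Nat.mul_comm _ _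
    omega
  -- the pattern and the new conjugate sequence
  set P : ℕ → ℕ := fun j => if j ≤ m+k then T else if j = m+k+1 then β+ρ else β with hP
  have hPle : ∀ j, P j ≤ T := by
    intro j
    simp only [hP]
    by_cases h1 : j ≤ m+k
    · rw [if_pos h1]
    · rw [if_neg h1]
      by_cases h2 : j = m+k+1
      · rw [if_pos h2]; omega
      · rw [if_neg h2]; omega
  have hPge : ∀ j, β ≤ P j := by
    intro j
    simp only [hP]
    by_cases h1 : j ≤ m+k
    · rw [if_pos h1]; omega
    · rw [if_neg h1]
      by_cases h2 : j = m+k+1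
      · rw [if_pos h2]; omega
      · rw [if_neg h2]
  have hPanti : ∀ j j', j ≤ j' → P j' ≤ P j := by
    intro j j' hjj
    simp only [hP]
    by_cases h1 : j ≤ m+k
    · rw [if_pos h1]; exact hPle j'
    · rw [if_neg h1]
      by_cases h2 : j = m+k+1
      · rw [if_pos h2]
        by_cases h1' : j' ≤ m+k
        · omega
        · rw [show (if j' ≤ m+k then T else if j' = m+k+1 then β+ρ else β) = if j' = m+k+1 then β+ρ else β from by rw [if_neg h1']]
          by_cases h2' : j' = m+k+1
          · rw [if_pos h2']
          · rw [if_neg h2']; omega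
      · rw [if_neg h2]
        rw [if_neg (by omega), if_neg (by omega)]
  set C' : ℕ → ℕ := fun j => if m+1 ≤ j ∧ j ≤ m+q then P j else cge φ j with hC'
  have hC'in : ∀ j, m+1 ≤ j → j ≤ m+q → C' j = P j := by
    intro j h1 h2; simp only [hC', if_pos (And.intro h1 h2)]
  have hC'out : ∀ j, ¬(m+1 ≤ j ∧ j ≤ m+q) → C' j = cge φ j := by
    intro j h; simp only [hC', if_neg h]
  -- antitone
  have hanti : ∀ j, 1 ≤ j → C' (j+1) ≤ C' j := by
    intro j hj
    rcases Nat.lt_or_ge j m with h | h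
    · rw [hC'out j (by omega)]
      rcases Nat.lt_or_ge (j+1) (m+1) with h2 | h2
      · rw [hC'out (j+1) (by omega)]; exact cge_antitone φ (by omega)
      · have hjm : j + 1 = m + 1 := by omega
        omega
    · rcases Nat.lt_or_ge j (m+1) with h1 | h1
      · -- j = m, so s ≥ 2 here since j ≥ 1
        have hjm : j = m := by omega
        have hs2 : 2 ≤ s := by rcases hm0 with h' | h' <;> omega
        rw [hjm, hC'out m (by omega), hC'in (m+1) (by omega) (by omega), hT4 hs2]
        exact hPle (m+1)
      · rcases Nat.lt_or_ge j (m+q) with h2 | h2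
        · rw [hC'in j (by omega) (by omega), hC'in (j+1) (by omega) (by omega)]
          exact hPanti j (j+1) (by omega)
        · rcases Nat.lt_or_ge j (m+q+1) with h3 | h3
          · have hjm : j = m+q := by omega
            rw [hjm, hC'in (m+q) (by omega) (by omega), hC'out (m+q+1) (by omega)]
            exact le_trans (le_refl _) (le_trans (le_refl β) (hPge (m+q)))
          · rw [hC'out j (by omega), hC'out (j+1) (by omega)]
            exact cge_antitone φ (by omega)
  -- eventually zero
  have hev : ∀ j, max ((φ.map ((↑·) : ℕ+ → ℕ)).sum + 1) (m+q+1) < j → C' j = 0 := by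
    intro j hj
    rw [hC'out j (by omega)]
    exact cge_eventually_zero φ j (by omega)
  obtain ⟨φ', hφ'⟩ := realize C' hanti _ hev
  -- block sum at s
  have hsum : ∑ j ∈ Finset.Icc (m+1) (m+q), cge φ j = μ := block_sum_eq (by omega) hφ s hs
  have hsum' : ∑ j ∈ Finset.Icc (m+1) (m+q), C' j = μ := by
    have hcongr : ∀ j ∈ Finset.Icc (m+1) (m+q), C' j = P j := by
      intro j hj
      simp only [Finset.mem_Icc] at hj
      exact hC'in j hj.1 hj.2
    rw [Finset.sum_congr rfl hcongr]
    have hsplit1 := sum_split P m q (m+k) (by omega) (by omega)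
    have hsplit2 : ∑ i ∈ Finset.Icc (m+k+1) (m+q), P i
        = ∑ i ∈ Finset.Icc (m+k+1) (m+k+1), P i + ∑ i ∈ Finset.Icc (m+k+2) (m+q), P i := by
      have := sum_split P (m+k) (q-k) (m+k+1) (by omega) (by omega)
      rw [show m+k+(q-k) = m+q from by omega] at this
      exact this
    have hS1 : ∑ i ∈ Finset.Icc (m+1) (m+k), P i = k*T := by
      have hcongr1 : ∀ i ∈ Finset.Icc (m+1) (m+k), P i = T := by
        intro i hi
        simp only [Finset.mem_Icc] at hi
        simp only [hP]
        exact if_pos hi.2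
      rw [Finset.sum_congr rfl hcongr1, Finset.sum_const, card_blk, smul_eq_mul]
    have hS2 : ∑ i ∈ Finset.Icc (m+k+1) (m+k+1), P i = β+ρ := by
      rw [Finset.Icc_self, Finset.sum_singleton]
      simp only [hP]
      rw [if_neg (by omega)]
      simp
    have hS3 : ∑ i ∈ Finset.Icc (m+k+2) (m+q), P i = (q-k-1)*β := by
      have hcongr3 : ∀ i ∈ Finset.Icc (m+k+2) (m+q), P i = β := by
        intro i hi
        simp only [Finset.mem_Icc] at hi
        simp only [hP]
        rw [if_neg (by omega), if_neg (by omega)]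
      rw [Finset.sum_congr rfl hcongr3, Finset.sum_const, smul_eq_mul, Nat.card_Icc]
      rw [show m+q+1-(m+k+2) = q-k-1 from by omega]
    rw [hsplit1, hsplit2, hS1, hS2, hS3]
    have hb1 : k*T = k*D + k*β := by
      rw [← Nat.mul_add, show D + β = T from by omega]
    have hb2 : k*D = D*k := Nat.mul_comm _ _
    have hb3 : (q-k-1)*β + k*β + β = q*β := by
      have h1 : (q-k-1)*β + k*β = ((q-k-1)+k)*β := (Nat.add_mul _ _ _).symm
      have h2 : ((q-k-1)+k)*β + β = ((q-k-1)+k+1)*β := (Nat.succ_mul _ _).symm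
      rw [h1, h2, show (q-k-1)+k+1 = q from by omega]
    omega
  -- block sums elsewhere unchanged
  have hblocks : ∀ w, 1 ≤ w →
      ∑ j ∈ Finset.Icc ((w-1)*q+1) ((w-1)*q+q), C' j
        = cge ψ w := by
    intro w hw
    rcases Nat.lt_trichotomy w s with h | h | h
    · rw [← block_sum_eq (q := q) (by omega) hφ w hw]
      apply Finset.sum_congr rfl
      intro j hjmem
      simp only [Finset.mem_Icc] at hjmem
      have hwv : w * q ≤ (s-1) * q := Nat.mul_le_mul_right _ (by omega)
      have hww : (w-1)*q + q = w * q := by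
        have h1 : (w-1)*q + q = ((w-1)+1)*q := (Nat.succ_mul _ _).symm
        rw [h1, Nat.sub_add_cancel hw]
      exact hC'out j (by omega)
    · subst h; exact hsum'
    · rw [← block_sum_eq (q := q) (by omega) hφ w hw]
      apply Finset.sum_congr rfl
      intro j hjmem
      simp only [Finset.mem_Icc] at hjmem
      have hwv : s * q ≤ (w-1) * q := Nat.mul_le_mul_right _ (by omega)
      exact hC'out j (by omega)
  -- φ' is a preimage
  have hpre' : zetaPart q φ' = ψ := by
    apply ext_cge
    intro u hu
    rw [cge_zetaPart_block q (by omega) φ' u hu]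
    have hcongr : ∀ j ∈ Finset.Icc ((u-1)*q+1) ((u-1)*q+q), cge φ' j = C' j := by
      intro j hjmem
      simp only [Finset.mem_Icc] at hjmem
      exact hφ' j (by omega)
    rw [Finset.sum_congr rfl hcongr, hblocks u hu]
  -- spread of φ' in block s
  have hsp' : cge φ' ((s-1)*q+q) + 2 ≤ cge φ' ((s-1)*q+1) := by
    rw [hφ' ((s-1)*q+q) (by omega), hφ' ((s-1)*q+1) (by omega)]
    rw [← hm, hC'in (m+q) (by omega) (by omega), hC'in (m+1) (by omega) (by omega)]
    rcases Nat.lt_or_ge k 1 with hk0 | hk1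
    · -- k = 0 : P(m+1) = β+ρ, P(m+q) = β, ρ = x
      have hk0' : k = 0 := by omega
      have hρx : ρ = x := by
        have : D*k = 0 := by rw [hk0', Nat.mul_zero]
        omega
      simp only [hP]
      rw [if_neg (show ¬ m+q ≤ m+k from by omega)]
      rw [if_neg (show ¬ m+q = m+k+1 from by omega)]
      rw [if_neg (show ¬ m+1 ≤ m+k from by omega)]
      rw [if_pos (show m+1 = m+k+1 from by omega)]
      omega
    · rcases Nat.lt_or_ge (k+1) q with hkq2 | hkq2
      · -- 1 ≤ k, k+1 < q : P(m+1) = T, P(m+q) = β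
        simp only [hP]
        rw [if_neg (show ¬ m+q ≤ m+k from by omega)]
        rw [if_neg (show ¬ m+q = m+k+1 from by omega)]
        rw [if_pos (show m+1 ≤ m+k from by omega)]
        omega
      · -- k+1 = q : P(m+1) = T, P(m+q) = β+ρ, and ρ ≤ D-2
        have hkq3 : k+1 = q := by omega
        have hρD : ρ + 2 ≤ D := by
          have h1 : q*D = (k+1)*D := by rw [hkq3]
          have h2 : (k+1)*D = k*D + D := Nat.succ_mul _ _
          have h3 : k*D = D*k := Nat.mul_comm _ _
          omega
        simp only [hP]
        rw [if_neg (show ¬ m+q ≤ m+k from by omega)]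
        rw [if_pos (show m+q = m+k+1 from by omega)]
        rw [if_pos (show m+1 ≤ m+k from by omega)]
        omega
  exact two_preimages_of_spread hq hpre' hs hsp'

end Main

end ZetaAux

open ZetaAux in
/-- For `q ≥ 2`, a partition `ψ` in the image of `ζ_q` has more than one preimage under
`ζ_q` if and only if there exist `r ≥ 0` and `0 < i₁ < i₂` with
`ψ_{(i₁-1)q+1} = ψ_{(i₁-1)q+2} = r + 1` and `ψ_{i₂q-1} = ψ_{i₂q} = r`. -/
theorem zetaPart_preimage_not_unique_iff (q : ℕ) (hq : 2 ≤ q) (ψ : Multiset ℕ+)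
    (hmem : ∃ φ : Multiset ℕ+, zetaPart q φ = ψ) :
    (∃ φ₁ φ₂ : Multiset ℕ+, φ₁ ≠ φ₂ ∧ zetaPart q φ₁ = ψ ∧ zetaPart q φ₂ = ψ) ↔
      ∃ r i₁ i₂ : ℕ, 0 < i₁ ∧ i₁ < i₂ ∧
        ψ.nthPart ((i₁ - 1) * q + 1) = r + 1 ∧ ψ.nthPart ((i₁ - 1) * q + 2) = r + 1 ∧
        ψ.nthPart (i₂ * q - 1) = r ∧ ψ.nthPart (i₂ * q) = r := by
  classical
  constructor
  · rintro ⟨φ₁, φ₂, hne, h1, h2⟩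
    by_cases hE1 : ∃ v, 1 ≤ v ∧ cge φ₁ ((v-1)*q+q) + 2 ≤ cge φ₁ ((v-1)*q+1)
    · obtain ⟨v, hv, hsp⟩ := hE1
      exact cond_of_spread hq h1 hv hsp
    · by_cases hE2 : ∃ v, 1 ≤ v ∧ cge φ₂ ((v-1)*q+q) + 2 ≤ cge φ₂ ((v-1)*q+1)
      · obtain ⟨v, hv, hsp⟩ := hE2
        exact cond_of_spread hq h2 hv hsp
      · exfalso
        apply hne
        apply rigid_unique hq h1 h2
        · intro v hv
          by_contra hc
          push_neg at hc
          exact hE1 ⟨v, hv, by omega⟩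
        · intro v hv
          by_contra hc
          push_neg at hc
          exact hE2 ⟨v, hv, by omega⟩
  · rintro ⟨r, i₁, i₂, hi1, hi12, h1, h2, h3, h4⟩
    obtain ⟨φ₀, hφ₀⟩ := hmem
    have hq4 : 2*2 ≤ i₂*q := Nat.mul_le_mul (by omega) hq
    have hA2 : (i₁-1)*q + 2 ≤ cge ψ (r+1) := by
      have hge : r+1 ≤ ψ.nthPart ((i₁-1)*q+2) := by rw [h2]
      exact (nthPart_iff ψ ((i₁-1)*q+2) (r+1) (by omega) (by omega)).1 hge
    have hA1 : cge ψ (r+2) ≤ (i₁-1)*q := by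
      have hlt : ¬ (r+2 ≤ ψ.nthPart ((i₁-1)*q+1)) := by omega
      rw [nthPart_iff ψ ((i₁-1)*q+1) (r+2) (by omega) (by omega)] at hlt
      omega
    have hA3 : cge ψ (r+1) + 2 ≤ i₂*q := by
      have hlt : ¬ (r+1 ≤ ψ.nthPart (i₂*q-1)) := by omega
      rw [nthPart_iff ψ (i₂*q-1) (r+1) (by omega) (by omega)] at hlt
      omega
    have hA4 : r+1 = 1 ∨ i₂*q ≤ cge ψ (r+1-1) := by
      rcases Nat.lt_or_ge r 1 with h | h
      · left; omega
      · right
        have hge : r ≤ ψ.nthPart (i₂*q) := by rw [h4]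
        have := (nthPart_iff ψ (i₂*q) r (by omega) (by omega)).1 hge
        rw [show r+1-1 = r from by omega]
        omega
    by_cases hE : ∃ v, 1 ≤ v ∧ cge φ₀ ((v-1)*q+q) + 2 ≤ cge φ₀ ((v-1)*q+1)
    · obtain ⟨v, hv, hsp⟩ := hE
      exact two_preimages_of_spread hq hφ₀ hv hsp
    · have hrig : ∀ v, 1 ≤ v → cge φ₀ ((v-1)*q+1) ≤ cge φ₀ ((v-1)*q+q) + 1 := by
        intro v hv
        by_contra hc
        push_neg at hc
        exact hE ⟨v, hv, by omega⟩
      exact two_preimages_of_cond_rigid hq hφ₀ hrig (s := r+1) (by omega) hi1 hi12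
        (by rw [show r+1+1 = r+2 from rfl]; exact hA1) hA2 hA3 hA4
end

section
/- Let q ≥ 2 and m ≥ 2. Then the restriction ζ_q : Part_m → Part_m of the map ζ_q to partitions of m is not injective; in fact the preimage of the partition m·[1] = [1,1,...,1] consists exactly of all partitions φ of m with φ_i ≤ q for all i, and there are at least two such partitions. -/
lemma zetaPiece_of_le (q : ℕ) (hq : 1 ≤ q) (a : ℕ+) (ha : (a : ℕ) ≤ q) :
    zetaPiece q a = Multiset.replicate (a : ℕ) 1 := by
  obtain ⟨av, hav⟩ := a
  simp only [PNat.mk_coe] at ha ⊢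
  rcases lt_or_eq_of_le ha with h | h
  · have h1 : av % q = av := Nat.mod_eq_of_lt h
    have h2 : av / q = 0 := Nat.div_eq_of_lt h
    simp [zetaPiece, h1, h2]
  · subst h
    have h1 : av % av = 0 := Nat.mod_self av
    have h2 : av / av = 1 := Nat.div_self hav
    simp only [zetaPiece, PNat.mk_coe, h1, h2, Multiset.replicate_zero, zero_add,
      dif_pos Nat.zero_lt_one, Nat.sub_zero]
    rfl

lemma zetaPiece_sum (q : ℕ) (hq : 1 ≤ q) (a : ℕ+) :
    ((zetaPiece q a).map ((↑·) : ℕ+ → ℕ)).sum = a := by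
  unfold zetaPiece
  have h1 := Nat.div_add_mod (a : ℕ) q
  have h2 : (a : ℕ) % q < q := Nat.mod_lt _ (by omega)
  split_ifs with h
  · simp only [Multiset.map_add, Multiset.map_replicate, Multiset.sum_add,
      Multiset.sum_replicate, smul_eq_mul, PNat.mk_coe]
    erw [Multiset.map_replicate, Multiset.map_replicate, Multiset.sum_replicate,
      Multiset.sum_replicate]
    simp only [smul_eq_mul, PNat.mk_coe]
    generalize hl : (a : ℕ) % q = l at *
    generalize hk : (a : ℕ) / q = k at *
    obtain ⟨d, hd⟩ : ∃ d, q = l + d := ⟨q - l, by omega⟩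
    subst hd
    have hsub : l + d - l = d := by omega
    rw [hsub]
    nlinarith [h1]
  · have h3 : (a : ℕ) / q = 0 := Nat.le_zero.mp (not_lt.mp h)
    rw [h3] at h1
    have h4 : (a : ℕ) % q = a := by omega
    simp [Multiset.map_replicate, h3, h4]

lemma mem_zetaPiece_ge (q : ℕ) (hq : 1 ≤ q) (a : ℕ+) (ha : q < (a : ℕ)) :
    ∃ b ∈ zetaPiece q a, (2 : ℕ) ≤ b := by
  have hk : 1 ≤ (a : ℕ) / q := Nat.one_le_div_iff (by omega) |>.mpr (le_of_lt ha)
  have h3 := Nat.div_add_mod (a : ℕ) q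
  rcases Nat.eq_zero_or_pos ((a : ℕ) % q) with h | h
  · have hk2 : 2 ≤ (a : ℕ) / q := by
      by_contra h4
      push_neg at h4
      have h5 : (a : ℕ) / q = 1 := by omega
      rw [h5] at h3
      omega
    refine ⟨⟨(a : ℕ) / q, by omega⟩, Multiset.mem_add.mpr (Or.inr ?_), hk2⟩
    rw [dif_pos (by omega)]
    exact Multiset.mem_replicate.mpr ⟨by omega, rfl⟩
  · refine ⟨⟨(a : ℕ) / q + 1, Nat.succ_pos _⟩, Multiset.mem_add.mpr (Or.inl ?_),
      by show 2 ≤ (a : ℕ) / q + 1; omega⟩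
    exact Multiset.mem_replicate.mpr ⟨by omega, rfl⟩

lemma zetaPart_sum (q : ℕ) (hq : 1 ≤ q) (φ : Multiset ℕ+) :
    ((zetaPart q φ).map ((↑·) : ℕ+ → ℕ)).sum = (φ.map ((↑·) : ℕ+ → ℕ)).sum := by
  induction φ using Multiset.induction with
  | empty => simp [zetaPart]
  | cons a s ih =>
      simp only [zetaPart, Multiset.cons_bind, Multiset.map_add, Multiset.sum_add,
        Multiset.map_cons, Multiset.sum_cons] at *
      rw [zetaPiece_sum q hq a, ih]

lemma zetaPart_eq_replicate (q m : ℕ) (hq : 1 ≤ q) (φ : Multiset ℕ+)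
    (h1 : (φ.map ((↑·) : ℕ+ → ℕ)).sum = m) (h2 : ∀ b ∈ φ, (b : ℕ) ≤ q) :
    zetaPart q φ = Multiset.replicate m 1 := by
  have hb : zetaPart q φ = φ.bind (fun a => Multiset.replicate (a : ℕ) 1) := by
    exact Multiset.bind_congr (fun a ha => zetaPiece_of_le q hq a (h2 a ha))
  rw [hb]
  rw [Multiset.eq_replicate]
  constructor
  · rw [Multiset.card_bind, ← h1]
    congr 1
    apply Multiset.map_congr rfl
    intro a _
    exact Multiset.card_replicate _ _
  · intro b hbmem
    rw [Multiset.mem_bind] at hbmem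
    obtain ⟨a, _, hmem⟩ := hbmem
    exact (Multiset.eq_of_mem_replicate hmem)

/-- For `q ≥ 2` and `m ≥ 2`, the preimage under `ζ_q` of the partition `m·[1]` consists
exactly of the partitions of `m` all of whose parts are at most `q`; there are at least
two of those, so `ζ_q` is not injective on partitions of `m`. -/
theorem zetaPart_not_injective (q m : ℕ) (hq : 2 ≤ q) (hm : 2 ≤ m) :
    (∀ φ : Multiset ℕ+, zetaPart q φ = Multiset.replicate m 1 ↔
        ((φ.map ((↑·) : ℕ+ → ℕ)).sum = m ∧ ∀ b ∈ φ, (b : ℕ) ≤ q)) ∧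
      ∃ φ₁ φ₂ : Multiset ℕ+, φ₁ ≠ φ₂ ∧
        (φ₁.map ((↑·) : ℕ+ → ℕ)).sum = m ∧ (φ₂.map ((↑·) : ℕ+ → ℕ)).sum = m ∧
        zetaPart q φ₁ = zetaPart q φ₂ := by
  have hq1 : 1 ≤ q := by omega
  constructor
  · intro φ
    constructor
    · intro h
      have hsum : (φ.map ((↑·) : ℕ+ → ℕ)).sum = m := by
        have := zetaPart_sum q hq1 φ
        rw [h] at this
        simpa using this.symm
      refine ⟨hsum, ?_⟩
      intro b hb
      by_contra hgt
      push_neg at hgt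
      obtain ⟨c, hc, hc2⟩ := mem_zetaPiece_ge q hq1 b hgt
      have hcmem : c ∈ zetaPart q φ := Multiset.mem_bind.mpr ⟨b, hb, hc⟩
      rw [h] at hcmem
      have := Multiset.eq_of_mem_replicate hcmem
      rw [this] at hc2
      norm_num at hc2
    · rintro ⟨h1, h2⟩
      exact zetaPart_eq_replicate q m hq1 φ h1 h2
  · refine ⟨Multiset.replicate m 1, (⟨2, by norm_num⟩ : ℕ+) ::ₘ Multiset.replicate (m - 2) 1,
      ?_, ?_, ?_, ?_⟩
    · intro hcontra
      have h2mem : (⟨2, by norm_num⟩ : ℕ+) ∈ Multiset.replicate m (1 : ℕ+) := by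
        rw [hcontra]; exact Multiset.mem_cons_self _ _
      have h2eq := Multiset.eq_of_mem_replicate h2mem
      simpa using congrArg (fun x : ℕ+ => (x : ℕ)) h2eq
    · simp [Multiset.map_replicate]
    · simp [Multiset.map_replicate]
      omega
    · have e1 : zetaPart q (Multiset.replicate m 1) = Multiset.replicate m 1 :=
        zetaPart_eq_replicate q m hq1 _ (by simp [Multiset.map_replicate]) (by
          intro b hb
          rw [Multiset.eq_of_mem_replicate hb]
          simpa using hq1)
      have e2 : zetaPart q ((⟨2, by norm_num⟩ : ℕ+) ::ₘ Multiset.replicate (m - 2) 1) =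
          Multiset.replicate m 1 :=
        zetaPart_eq_replicate q m hq1 _ (by simp [Multiset.map_replicate]; omega) (by
          intro b hb
          replace hb := Multiset.mem_cons.mp hb
          rcases hb with hb | hb
          · rw [hb]; exact hq
          · rw [Multiset.eq_of_mem_replicate hb]; simpa using hq1)
      rw [e1, e2]
end

section
/- Let K be a field, f ∈ K[T] monic irreducible of inseparability degree q, and x : V → V an f-primary endomorphism of a finite-dimensional K-vector space satisfying inv_{(i−1)q+1} x ≤ 1 + inv_{iq} x for all i ≥ 1. Then x admits a Jordan-Chevalley decomposition x = s + n with s semisimple, n nilpotent and sn = ns. -/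
open Polynomial

/-- The sequence (1-indexed) of multiplicities of `f` in the invariant factors,
extended by `0`. -/
def invSeq {r : ℕ} (ψ : Fin r → ℕ) (j : ℕ) : ℕ :=
  if h : j - 1 < r then ψ ⟨j - 1, h⟩ else 0

namespace JCAux

variable {K : Type} [Field K]

/-- The decomposition property we construct. -/
def JC (K : Type) [Field K] {V : Type} [AddCommGroup V] [Module K V]
    (f : K[X]) (x : Module.End K V) : Prop :=
  ∃ s n : Module.End K V,
    x = s + n ∧ aeval s f = 0 ∧ IsNilpotent n ∧ Commute s n

/-- Conjugation by a linear equivalence, as an algebra equivalence of endomorphism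
algebras. -/
def conjAlg {V V' : Type} [AddCommGroup V] [Module K V] [AddCommGroup V'] [Module K V']
    (E : V ≃ₗ[K] V') : Module.End K V ≃ₐ[K] Module.End K V' :=
  { E.conj with
    map_mul' := fun s t => E.conj_comp t s
    commutes' := fun c => by
      ext w
      simp [LinearEquiv.conj_apply_apply, Module.algebraMap_end_apply] }

@[simp] lemma conjAlg_apply {V V' : Type} [AddCommGroup V] [Module K V] [AddCommGroup V']
    [Module K V'] (E : V ≃ₗ[K] V') (s : Module.End K V) (w : V') :
    conjAlg E s w = E (s (E.symm w)) := rfl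

theorem JC.conj {V V' : Type} [AddCommGroup V] [Module K V] [AddCommGroup V'] [Module K V']
    (f : K[X]) {x : Module.End K V} {x' : Module.End K V'} (E : V ≃ₗ[K] V')
    (hx : ∀ v, E (x v) = x' (E v)) (h : JC K f x) : JC K f x' := by
  obtain ⟨s, n, hsum, hs, hn, hc⟩ := h
  refine ⟨conjAlg E s, conjAlg E n, ?_, ?_, ?_, ?_⟩
  · have hx' : x' = conjAlg E x := by
      ext w
      rw [conjAlg_apply, hx, E.apply_symm_apply]
    rw [hx', hsum, map_add]
  · have h2 : aeval ((conjAlg E).toAlgHom s) f = (conjAlg E).toAlgHom (aeval s f) :=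
      Polynomial.aeval_algHom_apply (conjAlg E).toAlgHom s f
    rw [show ((conjAlg E).toAlgHom s) = conjAlg E s from rfl] at h2
    rw [h2, hs, map_zero]
  · exact hn.map (conjAlg E).toAlgHom
  · exact hc.map ((conjAlg E).toAlgHom : Module.End K V →* Module.End K V')

theorem JC.prodMap {V V' : Type} [AddCommGroup V] [Module K V] [AddCommGroup V'] [Module K V']
    (f : K[X]) {x : Module.End K V} {x' : Module.End K V'}
    (h : JC K f x) (h' : JC K f x') : JC K f (x.prodMap x') := by
  obtain ⟨s, n, hsum, hs, ⟨k, hk⟩, hc⟩ := h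
  obtain ⟨s', n', hsum', hs', ⟨k', hk'⟩, hc'⟩ := h'
  have hA := LinearMap.prodMapAlgHom (R := K) (M := V) (M₂ := V')
  refine ⟨s.prodMap s', n.prodMap n', ?_, ?_, ?_, ?_⟩
  · rw [hsum, hsum']
    exact (map_add (LinearMap.prodMapAlgHom K V V') (s, s') (n, n')).symm ▸ rfl
  · have := Polynomial.aeval_algHom_apply (LinearMap.prodMapAlgHom K V V') (s, s') f
    rw [show (s.prodMap s') = (LinearMap.prodMapAlgHom K V V') (s, s') from rfl, this]
    have h3 : (Polynomial.aeval ((s, s') : Module.End K V × Module.End K V') f)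
        = (aeval s f, aeval s' f) := by
      refine Prod.ext ?_ ?_
      · exact (Polynomial.aeval_algHom_apply (AlgHom.fst K _ _) (s, s') f).symm
      · exact (Polynomial.aeval_algHom_apply (AlgHom.snd K _ _) (s, s') f).symm
    rw [h3, hs, hs']
    exact map_zero _
  · refine ⟨k + k', ?_⟩
    have : (n.prodMap n') ^ (k + k') = (n ^ (k + k')).prodMap (n' ^ (k + k')) := by
      rw [show (n.prodMap n') = (LinearMap.prodMapAlgHom K V V') (n, n') from rfl, ← map_pow]
      rfl
    rw [this, pow_eq_zero_of_le (Nat.le_add_right k k') hk,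
      pow_eq_zero_of_le (Nat.le_add_left k' k) hk']
    ext v <;> rfl
  · show _ * _ = _ * _
    rw [show (s.prodMap s') = (LinearMap.prodMapAlgHom K V V') (s, s') from rfl,
      show (n.prodMap n') = (LinearMap.prodMapAlgHom K V V') (n, n') from rfl,
      ← map_mul, ← map_mul]
    congr 1
    exact Prod.ext hc hc'



section Model

variable (f : K[X])

/-- The model endomorphism: componentwise multiplication by the root. -/
noncomputable def xModel {r : ℕ} (ψ : Fin r → ℕ) :
    Module.End K ((i : Fin r) → AdjoinRoot (f ^ ψ i)) :=
  LinearMap.pi fun i =>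
    (Algebra.lmul K (AdjoinRoot (f ^ ψ i)) (AdjoinRoot.root (f ^ ψ i))).comp
      (LinearMap.proj i)

@[simp] lemma xModel_apply {r : ℕ} (ψ : Fin r → ℕ) (v : (i : Fin r) → AdjoinRoot (f ^ ψ i))
    (i : Fin r) : xModel f ψ v i = AdjoinRoot.root (f ^ ψ i) * v i := rfl

/-- Splitting a dependent product over `Fin (m + n)`. -/
def splitEquiv (K : Type) [Field K] {m n : ℕ} (A : Fin (m + n) → Type) [∀ i, AddCommGroup (A i)]
    [∀ i, Module K (A i)] :
    ((i : Fin (m + n)) → A i) ≃ₗ[K]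
      ((j : Fin m) → A (Fin.castAdd n j)) × ((j : Fin n) → A (Fin.natAdd m j)) where
  toFun v := (fun j => v _, fun j => v _)
  map_add' v w := rfl
  map_smul' c v := rfl
  invFun w i := Fin.addCases (fun j => w.1 j) (fun j => w.2 j) i
  left_inv v := by
    funext i
    refine Fin.addCases (fun j => ?_) (fun j => ?_) i <;>
      simp [Fin.addCases_left, Fin.addCases_right]
  right_inv w := by
    refine Prod.ext ?_ ?_ <;> funext j <;>
      simp [Fin.addCases_left, Fin.addCases_right]

lemma splitEquiv_xModel {q r' : ℕ} (ψ : Fin (q + r') → ℕ)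
    (v : (i : Fin (q + r')) → AdjoinRoot (f ^ ψ i)) :
    splitEquiv K (A := fun i => AdjoinRoot (f ^ ψ i)) (xModel f ψ v)
      = ((xModel f (fun j : Fin q => ψ (Fin.castAdd r' j))).prodMap
          (xModel f (fun j : Fin r' => ψ (Fin.natAdd q j))))
        (splitEquiv K (A := fun i => AdjoinRoot (f ^ ψ i)) v) := rfl

end Model

section Base

variable (f : K[X]) [Fact (Irreducible f)]

/-- The model for a group: `L[N]/(N^lam)` where `L = K[S]/(f)`. -/
noncomputable abbrev Wm (lam : ℕ) : Type := AdjoinRoot ((X : (AdjoinRoot f)[X]) ^ lam)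

noncomputable def NN (lam : ℕ) : Wm f lam := AdjoinRoot.root _

noncomputable def SS (lam : ℕ) : Wm f lam :=
  algebraMap (AdjoinRoot f) _ (AdjoinRoot.root f)

noncomputable def w0 (lam : ℕ) : Wm f lam := SS f lam + NN f lam

lemma NN_pow_lam (lam : ℕ) : NN f lam ^ lam = 0 := by
  rw [NN, ← AdjoinRoot.mk_X, ← map_pow, AdjoinRoot.mk_self]

lemma NN_pow_eq_zero {lam m : ℕ} (h : lam ≤ m) : NN f lam ^ m = 0 :=
  pow_eq_zero_of_le h (NN_pow_lam f lam)

lemma finrank_Wm (hf : f.Monic) (lam : ℕ) :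
    Module.finrank K (Wm f lam) = f.natDegree * lam := by
  haveI : Module.Finite K (AdjoinRoot f) := (AdjoinRoot.powerBasis hf.ne_zero).finite
  haveI : Module.Finite (AdjoinRoot f) (Wm f lam) :=
    (AdjoinRoot.powerBasis' (monic_X_pow (R := AdjoinRoot f) lam)).finite
  rw [← Module.finrank_mul_finrank K (AdjoinRoot f) (Wm f lam),
    (AdjoinRoot.powerBasis hf.ne_zero).finrank,
    (AdjoinRoot.powerBasis' (monic_X_pow (R := AdjoinRoot f) lam)).finrank]
  simp [AdjoinRoot.powerBasis, AdjoinRoot.powerBasis']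

lemma finDim_Wm (hf : f.Monic) (lam : ℕ) : FiniteDimensional K (Wm f lam) := by
  haveI : Module.Finite K (AdjoinRoot f) := (AdjoinRoot.powerBasis hf.ne_zero).finite
  haveI : Module.Finite (AdjoinRoot f) (Wm f lam) :=
    (AdjoinRoot.powerBasis' (monic_X_pow (R := AdjoinRoot f) lam)).finite
  exact Module.Finite.trans (AdjoinRoot f) (Wm f lam)


theorem JC_base (hf : f.Monic) {q : ℕ} (hq : 1 ≤ q)
    (g : Polynomial (AdjoinRoot f))
    (hfac : f.map (algebraMap K (AdjoinRoot f)) = (X - C (AdjoinRoot.root f)) ^ q * g)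
    (hg : Polynomial.eval (AdjoinRoot.root f) g ≠ 0)
    {c : ℕ} (hcq : c ≤ q) (E : Fin c → ℕ) (hE1 : ∀ j, 1 ≤ E j)
    (hkey : ∀ j : Fin c, (∑ k, E k) ≤ q * E j + j.1)
    (hflat : c < q → ∀ j, E j = 1) :
    JC K f (xModel f E) := by
  classical
  set lam := ∑ k, E k with hlam
  set N := NN f lam with hN
  set S := SS f lam with hS
  set w := w0 f lam with hw
  have hwSN : w = S + N := rfl
  -- the key factorization of `f` evaluated at `w`
  have hfw : (aeval w f : Wm f lam) = N ^ q * Polynomial.aeval w g := by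
    rw [aeval_def, IsScalarTower.algebraMap_eq K (AdjoinRoot f) (Wm f lam),
      ← Polynomial.eval₂_map, hfac]
    simp only [eval₂_mul, eval₂_pow, eval₂_sub, eval₂_X, eval₂_C]
    rw [show w - algebraMap (AdjoinRoot f) (Wm f lam) (AdjoinRoot.root f) = N by
      rw [hwSN, hS, SS]; ring]
    rw [Polynomial.aeval_def]
  -- `aeval w g` is a unit
  have hu : IsUnit (Polynomial.aeval w g : Wm f lam) := by
    have hSg : algebraMap (AdjoinRoot f) (Wm f lam) (g.eval (AdjoinRoot.root f)) =
        Polynomial.eval S (g.map (algebraMap (AdjoinRoot f) (Wm f lam))) := by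
      rw [hS, SS, Polynomial.eval_map, Polynomial.eval₂_at_apply]
    have hdvd : (S - w) ∣ (Polynomial.eval S (g.map (algebraMap (AdjoinRoot f) (Wm f lam)))
        - Polynomial.eval w (g.map (algebraMap (AdjoinRoot f) (Wm f lam)))) :=
      Polynomial.sub_dvd_eval_sub S w _
    rw [show S - w = -N by rw [hwSN]; ring, neg_dvd, ← hSg, Polynomial.eval_map,
      ← Polynomial.aeval_def] at hdvd
    obtain ⟨d, hd⟩ := hdvd
    have hrw : Polynomial.aeval w g =
        algebraMap (AdjoinRoot f) (Wm f lam) (g.eval (AdjoinRoot.root f)) + N * (-d) := by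
      rw [mul_neg, ← hd]; ring
    rw [hrw]
    exact IsNilpotent.isUnit_add_left_of_commute
      ⟨lam, by rw [mul_pow, hN, NN_pow_lam, zero_mul]⟩
      ((isUnit_iff_ne_zero.mpr hg).map (algebraMap (AdjoinRoot f) (Wm f lam)))
      (Commute.all _ _)
  -- annihilation
  have hz : ∀ j : Fin c, (Polynomial.aeval w (f ^ E j) : Wm f lam) * N ^ (j : ℕ) = 0 := by
    intro j
    rw [map_pow, hfw]
    have h1 : ((N : Wm f lam) ^ q * Polynomial.aeval w g) ^ E j * N ^ (j : ℕ)
        = N ^ (q * E j + (j : ℕ)) * Polynomial.aeval w g ^ E j := by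
      rw [mul_pow, ← pow_mul, pow_add]; ring
    rw [h1, hN, NN_pow_eq_zero f (hkey j), zero_mul]
  -- reduction mod `f ^ E j`
  have hmod : ∀ (j : Fin c) (p : K[X]),
      (N : Wm f lam) ^ (j : ℕ) * Polynomial.aeval w (p %ₘ f ^ E j)
        = Polynomial.aeval w p * N ^ (j : ℕ) := by
    intro j p
    conv_rhs => rw [← Polynomial.modByMonic_add_div p (f ^ E j)]
    rw [map_add, map_mul, add_mul, mul_comm (Polynomial.aeval w (f ^ E j)) _, mul_assoc,
      hz j, mul_zero, add_zero, mul_comm]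
  -- the comparison map
  set Φ : ((j : Fin c) → AdjoinRoot (f ^ E j)) →ₗ[K] Wm f lam :=
    ∑ j : Fin c, (Algebra.lmul K (Wm f lam) (N ^ (j : ℕ))) ∘ₗ
      (Polynomial.aeval w).toLinearMap ∘ₗ
        (AdjoinRoot.modByMonicHom (hf.pow (E j))) ∘ₗ LinearMap.proj j with hΦ
  have hΦap : ∀ v, Φ v = ∑ j : Fin c, N ^ (j : ℕ) *
      Polynomial.aeval w ((AdjoinRoot.modByMonicHom (hf.pow (E j))) (v j)) := by
    intro v
    rw [hΦ, LinearMap.sum_apply]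
    refine Finset.sum_congr rfl fun j _ => ?_
    simp [Algebra.coe_lmul_eq_mul, LinearMap.mul_apply']
  have hΦsingle : ∀ (j : Fin c) (p : K[X]),
      Φ (Pi.single j (AdjoinRoot.mk (f ^ E j) p)) = Polynomial.aeval w p * N ^ (j : ℕ) := by
    intro j p
    rw [hΦap, Finset.sum_eq_single j ?_ ?_]
    · rw [Pi.single_eq_same, AdjoinRoot.modByMonicHom_mk, hmod]
    · intro k _ hk
      rw [Pi.single_eq_of_ne hk, map_zero, map_zero, mul_zero]
    · intro h; exact absurd (Finset.mem_univ j) h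
  have hinter : ∀ v, Φ (xModel f E v) = w * Φ v := by
    intro v
    rw [hΦap, hΦap, Finset.mul_sum]
    refine Finset.sum_congr rfl fun j _ => ?_
    have : xModel f E v j = AdjoinRoot.root (f ^ E j) * v j := rfl
    rw [this]
    induction v j using AdjoinRoot.induction_on with
    | ih p =>
      rw [← AdjoinRoot.mk_X, ← map_mul, AdjoinRoot.modByMonicHom_mk,
        AdjoinRoot.modByMonicHom_mk, hmod, hmod, map_mul, aeval_X]
      ring
  -- range of Φ
  set M := LinearMap.range Φ with hM
  have hw0M : ∀ z ∈ M, w * z ∈ M := by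
    rintro z ⟨v, rfl⟩
    exact ⟨xModel f E v, hinter v⟩
  have hpowM : ∀ (m : ℕ), ∀ z ∈ M, w ^ m * z ∈ M := by
    intro m
    induction m with
    | zero => intro z hz'; simpa using hz'
    | succ m ih =>
      intro z hz'
      rw [pow_succ', mul_assoc]
      exact hw0M _ (ih z hz')
  have haevM : ∀ (P : K[X]), ∀ z ∈ M, Polynomial.aeval w P * z ∈ M := by
    intro P
    induction P using Polynomial.induction_on' with
    | add p r hp hr =>
      intro z hz'
      rw [map_add, add_mul]
      exact M.add_mem (hp z hz') (hr z hz')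
    | monomial m a =>
      intro z hz'
      rw [aeval_monomial, mul_assoc]
      rw [show algebraMap K (Wm f lam) a * (w ^ m * z) = a • (w ^ m * z) from
        (Algebra.smul_def a _).symm]
      exact M.smul_mem a (hpowM m z hz')
  -- membership of the generators
  have hgen : ∀ (j : Fin c) (p : K[X]), Polynomial.aeval w p * N ^ (j : ℕ) ∈ M :=
    fun j p => ⟨Pi.single j (AdjoinRoot.mk (f ^ E j) p), hΦsingle j p⟩
  -- decomposition of elements of W
  have hWdec : ∀ z : Wm f lam, ∃ (l : AdjoinRoot f) (z' : Wm f lam),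
      z = algebraMap (AdjoinRoot f) (Wm f lam) l + N * z' := by
    intro z
    induction z using AdjoinRoot.induction_on with
    | ih p =>
      refine ⟨p.coeff 0, AdjoinRoot.mk _ p.divX, ?_⟩
      rw [AdjoinRoot.algebraMap_eq, ← AdjoinRoot.mk_C, hN, NN, ← AdjoinRoot.mk_X,
        ← map_mul, ← map_add, add_comm (C (p.coeff 0)) (X * p.divX), X_mul_divX_add]
  -- approximate scalars by polynomials in w
  have hLapprox : ∀ l : AdjoinRoot f, ∃ (p : K[X]) (d : Wm f lam),
      algebraMap (AdjoinRoot f) (Wm f lam) l = Polynomial.aeval w p + N * d := by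
    intro l
    obtain ⟨p, rfl⟩ := AdjoinRoot.mk_surjective l
    have h1 : algebraMap (AdjoinRoot f) (Wm f lam) (AdjoinRoot.mk f p) =
        Polynomial.aeval S p := by
      have h := Polynomial.aeval_algHom_apply
        (IsScalarTower.toAlgHom K (AdjoinRoot f) (Wm f lam)) (AdjoinRoot.root f) p
      rw [AdjoinRoot.aeval_eq] at h
      simpa [IsScalarTower.coe_toAlgHom', hS, SS] using h.symm
    have hdvd : (S - w) ∣ (Polynomial.eval S (p.map (algebraMap K (Wm f lam)))
        - Polynomial.eval w (p.map (algebraMap K (Wm f lam)))) :=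
      Polynomial.sub_dvd_eval_sub S w _
    rw [show S - w = -N by rw [hwSN]; ring, neg_dvd, Polynomial.eval_map, Polynomial.eval_map,
      ← Polynomial.aeval_def, ← Polynomial.aeval_def] at hdvd
    obtain ⟨d, hd⟩ := hdvd
    refine ⟨p, d, ?_⟩
    rw [h1, ← hd]
    ring
  -- main filtration induction
  have main : ∀ m : ℕ, ∀ z : Wm f lam, ∃ zM ∈ M, ∃ z', z = zM + N ^ m * z' := by
    intro m
    induction m using Nat.strong_induction_on with
    | _ m ih =>
      match m, ih with
      | 0, _ => exact fun z => ⟨0, M.zero_mem, z, by rw [pow_zero, one_mul, zero_add]⟩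
      | (m+1), ih =>
        intro z
        obtain ⟨zM, hzM, z₁, rfl⟩ := ih m (Nat.lt_succ_self m) z
        suffices h : ∃ yM ∈ M, ∃ y', N ^ m * z₁ = yM + N ^ (m+1) * y' by
          obtain ⟨yM, hyM, y', hy⟩ := h
          exact ⟨zM + yM, M.add_mem hzM hyM, y', by rw [hy]; ring⟩
        obtain ⟨l, z₂, rfl⟩ := hWdec z₁
        obtain ⟨p, d, hl⟩ := hLapprox l
        have hsplit : N ^ m * (algebraMap (AdjoinRoot f) (Wm f lam) l + N * z₂)
            = Polynomial.aeval w p * N ^ m + N ^ (m+1) * (d + z₂) := by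
          rw [hl]; ring
        rw [hsplit]
        suffices h : ∃ yM ∈ M, ∃ y', Polynomial.aeval w p * N ^ m = yM + N ^ (m+1) * y' by
          obtain ⟨yM, hyM, y', hy⟩ := h
          exact ⟨yM, hyM, y' + (d + z₂), by rw [hy]; ring⟩
        by_cases hc1 : m < c
        · exact ⟨Polynomial.aeval w p * N ^ m, hgen ⟨m, hc1⟩ p, 0, by rw [mul_zero, add_zero]⟩
        by_cases hc2 : lam ≤ m
        · exact ⟨0, M.zero_mem, 0, by simp [hN, NN_pow_eq_zero f hc2]⟩
        -- here c ≤ m < lam, so c = q and q ≤ m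
        have hceq : c = q := by
          rcases lt_or_eq_of_le hcq with h' | h'
          · exfalso
            have : lam = c := by
              rw [hlam]
              calc ∑ k : Fin c, E k = ∑ _k : Fin c, 1 :=
                    Finset.sum_congr rfl fun k _ => hflat h' k
                _ = c := by simp
            omega
          · exact h'
        have hqm : q ≤ m := by omega
        obtain ⟨yM, hyM, y₂, hy⟩ := ih (m - q + 1) (by omega) ((↑hu.unit⁻¹ : Wm f lam) * N ^ (m - q))
        have hy' : (N : Wm f lam) ^ (m - q) = ↑hu.unit * (yM + N ^ (m - q + 1) * y₂) := by
          rw [← hy, ← mul_assoc, Units.mul_inv, one_mul]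
        refine ⟨Polynomial.aeval w (p * f) * yM, haevM _ _ hyM,
          Polynomial.aeval w p * Polynomial.aeval w g * y₂, ?_⟩
        have hmq : m = q + (m - q) := by omega
        rw [hmq]  -- careful: rewrites every m
        rw [pow_add, pow_add]
        rw [hy', map_mul, hfw, IsUnit.unit_spec]
        ring
  -- surjectivity of Φ
  have hsurj : Function.Surjective Φ := by
    intro z
    obtain ⟨zM, ⟨v, hv⟩, z', hz'⟩ := main lam z
    exact ⟨v, by rw [hv, hz', hN, NN_pow_lam, zero_mul, add_zero]⟩
  -- dimensions
  haveI : ∀ j : Fin c, Module.Finite K (AdjoinRoot (f ^ E j)) := fun j =>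
    (AdjoinRoot.powerBasis (pow_ne_zero (E j) hf.ne_zero)).finite
  haveI := finDim_Wm f hf lam
  have hdim : Module.finrank K ((j : Fin c) → AdjoinRoot (f ^ E j))
      = Module.finrank K (Wm f lam) := by
    rw [finrank_Wm f hf lam, Module.finrank_pi_fintype]
    have h1 : ∀ j : Fin c, Module.finrank K (AdjoinRoot (f ^ E j)) = E j * f.natDegree := by
      intro j
      rw [(AdjoinRoot.powerBasis (pow_ne_zero (E j) hf.ne_zero)).finrank]
      show (f ^ E j).natDegree = E j * f.natDegree
      rw [natDegree_pow]
    rw [Finset.sum_congr rfl fun j _ => h1 j, ← Finset.sum_mul, hlam, mul_comm]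
  have hinj : Function.Injective Φ :=
    (LinearMap.injective_iff_surjective_of_finrank_eq_finrank hdim).mpr hsurj
  set eΦ := LinearEquiv.ofBijective Φ ⟨hinj, hsurj⟩ with heΦ
  have heΦap : ∀ v, eΦ v = Φ v := fun v => rfl
  have heΦsymm : ∀ z, Φ (eΦ.symm z) = z := fun z => eΦ.apply_symm_apply z
  -- the decomposition on W
  have hJCW : JC K f (Algebra.lmul K (Wm f lam) w) := by
    refine ⟨Algebra.lmul K (Wm f lam) S, Algebra.lmul K (Wm f lam) N, ?_, ?_, ?_, ?_⟩
    · rw [← map_add]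
      exact congrArg _ hwSN
    · have h2 := Polynomial.aeval_algHom_apply (Algebra.lmul K (Wm f lam)) S f
      have hSf : (Polynomial.aeval S f : Wm f lam) = 0 := by
        have h := Polynomial.aeval_algHom_apply
          (IsScalarTower.toAlgHom K (AdjoinRoot f) (Wm f lam)) (AdjoinRoot.root f) f
        rw [AdjoinRoot.aeval_eq, AdjoinRoot.mk_self, map_zero] at h
        rw [show (S : Wm f lam) = (IsScalarTower.toAlgHom K (AdjoinRoot f) (Wm f lam))
          (AdjoinRoot.root f) from rfl]
        exact h
      rw [hSf, map_zero] at h2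
      exact h2
    · exact ⟨lam, by rw [← map_pow, hN, NN_pow_lam, map_zero]⟩
    · exact (Commute.all S N).map (Algebra.lmul K (Wm f lam) : Wm f lam →* Module.End K (Wm f lam))
  -- transport back through eΦ
  refine JC.conj f eΦ.symm ?_ hJCW
  intro z
  apply hinj
  rw [heΦsymm, hinter, heΦsymm]
  rfl

lemma key_arith {c q : ℕ} (hcq : c ≤ q) (E : Fin c → ℕ)
    (htop : ∀ k j : Fin c, E k ≤ 1 + E j)
    (hmono : ∀ i j : Fin c, i ≤ j → E j ≤ E i) :
    ∀ j : Fin c, (∑ k, E k) ≤ q * E j + j.1 := by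
  intro j
  have hbound : ∀ k : Fin c, E k ≤ E j + if (k : ℕ) < (j : ℕ) then 1 else 0 := by
    intro k
    by_cases h : (k : ℕ) < (j : ℕ)
    · rw [if_pos h]
      have := htop k j
      omega
    · rw [if_neg h]
      have := hmono j k (by omega)
      omega
  calc (∑ k, E k) ≤ ∑ k : Fin c, (E j + if (k : ℕ) < (j : ℕ) then 1 else 0) :=
        Finset.sum_le_sum fun k _ => hbound k
    _ = c * E j + ∑ k : Fin c, (if (k : ℕ) < (j : ℕ) then 1 else 0) := by
        rw [Finset.sum_add_distrib, Finset.sum_const, Finset.card_univ, Fintype.card_fin,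
          smul_eq_mul]
    _ = c * E j + (j : ℕ) := by
        congr 1
        rw [Fin.sum_univ_eq_sum_range (fun k => if k < (j : ℕ) then 1 else 0) c,
          Finset.sum_ite, Finset.sum_const, Finset.sum_const, smul_eq_mul, mul_one,
          smul_eq_mul, mul_zero, add_zero]
        rw [show (Finset.range c).filter (· < (j : ℕ)) = Finset.range (j : ℕ) by
          ext k
          simp only [Finset.mem_filter, Finset.mem_range]
          have := j.isLt
          omega]
        rw [Finset.card_range]
    _ ≤ q * E j + (j : ℕ) := by
        have := Nat.mul_le_mul_right (E j) hcq
        omega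

theorem JC_model (hf : f.Monic) {q : ℕ} (hq : 1 ≤ q)
    (g : Polynomial (AdjoinRoot f))
    (hfac : f.map (algebraMap K (AdjoinRoot f)) = (X - C (AdjoinRoot.root f)) ^ q * g)
    (hg : Polynomial.eval (AdjoinRoot.root f) g ≠ 0) :
    ∀ (r : ℕ) (ψ : Fin r → ℕ),
      (∀ i j : Fin r, i ≤ j → ψ j ≤ ψ i) → (∀ i, 1 ≤ ψ i) →
      (∀ i : ℕ, 1 ≤ i → invSeq ψ ((i - 1) * q + 1) ≤ 1 + invSeq ψ (i * q)) →
      JC K f (xModel f ψ) := by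
  intro r
  induction r using Nat.strong_induction_on with
  | _ r ih =>
    intro ψ hmono hpos hineq
    by_cases hrq : r ≤ q
    · -- a single group
      have h1 := hineq 1 le_rfl
      simp only [Nat.sub_self, Nat.zero_mul, Nat.zero_add, Nat.one_mul] at h1
      have htop : ∀ k j : Fin r, ψ k ≤ 1 + ψ j := by
        intro k j
        have h0r : 0 < r := j.pos
        have hk0 : ψ k ≤ ψ ⟨0, h0r⟩ := hmono ⟨0, h0r⟩ k (by
          rw [Fin.le_def]
          exact Nat.zero_le _)
        have hinv1 : invSeq ψ 1 = ψ ⟨0, h0r⟩ := by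
          simp only [invSeq]
          rw [dif_pos (by omega : 1 - 1 < r)]
        rw [hinv1] at h1
        by_cases hqr : q ≤ r
        · have hq_eq : q = r := le_antisymm hqr hrq
          have hinvq : invSeq ψ q = ψ ⟨q - 1, by omega⟩ := by
            simp only [invSeq]
            rw [dif_pos (by omega : q - 1 < r)]
          rw [hinvq] at h1
          have hlast : ψ ⟨q - 1, by omega⟩ ≤ ψ j := hmono j ⟨q - 1, by omega⟩
            (by
              rw [Fin.le_def]
              show (j : ℕ) ≤ q - 1
              have := j.isLt
              omega)
          omega
        · have hinvq : invSeq ψ q = 0 := by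
            simp only [invSeq]
            rw [dif_neg (by omega)]
          rw [hinvq] at h1
          omega
      refine JC_base f hf hq g hfac hg hrq ψ hpos (key_arith hrq ψ htop hmono) ?_
      intro hrq' j
      have := htop j j
      have h1' := htop ⟨0, j.pos⟩ j
      -- in this case `invSeq ψ q = 0`, giving `ψ 0 ≤ 1`
      have hinv1 : invSeq ψ 1 = ψ ⟨0, j.pos⟩ := by
        simp only [invSeq]
        rw [dif_pos (by have := j.pos; omega : 1 - 1 < r)]
      have hinvq : invSeq ψ q = 0 := by
        simp only [invSeq]
        rw [dif_neg (by omega)]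
      rw [hinv1, hinvq] at h1
      have hj0 : ψ j ≤ ψ ⟨0, j.pos⟩ := hmono ⟨0, j.pos⟩ j (by
        rw [Fin.le_def]
        exact Nat.zero_le _)
      have := hpos j
      omega
    · -- split off the first group of size q
      obtain ⟨r', rfl⟩ : ∃ r', r = q + r' := ⟨r - q, by omega⟩
      set ψ₁ := fun j : Fin q => ψ (Fin.castAdd r' j) with hψ₁
      set ψ₂ := fun j : Fin r' => ψ (Fin.natAdd q j) with hψ₂
      have h1 := hineq 1 le_rfl
      simp only [Nat.sub_self, Nat.zero_mul, Nat.zero_add, Nat.one_mul] at h1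
      have hinv1 : invSeq ψ 1 = ψ ⟨0, by omega⟩ := by
        simp only [invSeq]
        rw [dif_pos (by omega : 1 - 1 < q + r')]
      have hinvq : invSeq ψ q = ψ ⟨q - 1, by omega⟩ := by
        simp only [invSeq]
        rw [dif_pos (by omega : q - 1 < q + r')]
      rw [hinv1, hinvq] at h1
      have htop1 : ∀ k j : Fin q, ψ₁ k ≤ 1 + ψ₁ j := by
        intro k j
        have hk0 : ψ₁ k ≤ ψ ⟨0, by omega⟩ :=
          hmono ⟨0, by omega⟩ (Fin.castAdd r' k) (by
            rw [Fin.le_def]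
            exact Nat.zero_le _)
        have hlast : ψ ⟨q - 1, by omega⟩ ≤ ψ₁ j :=
          hmono (Fin.castAdd r' j) ⟨q - 1, by omega⟩ (by
            rw [Fin.le_def]
            show ((Fin.castAdd r' j : Fin (q + r')) : ℕ) ≤ q - 1
            simp only [Fin.coe_castAdd]
            have := j.isLt
            omega)
        omega
      have hmono1 : ∀ i j : Fin q, i ≤ j → ψ₁ j ≤ ψ₁ i := fun i j hij =>
        hmono (Fin.castAdd r' i) (Fin.castAdd r' j) (by
          rw [Fin.le_def] at hij ⊢
          simpa only [Fin.coe_castAdd] using hij)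
      have hJC1 : JC K f (xModel f ψ₁) :=
        JC_base f hf hq g hfac hg le_rfl ψ₁ (fun j => hpos _)
          (key_arith le_rfl ψ₁ htop1 hmono1) (fun h => absurd h (lt_irrefl q))
      -- the tail
      have hinv2 : ∀ m : ℕ, 1 ≤ m → invSeq ψ₂ m = invSeq ψ (m + q) := by
        intro m hm
        simp only [invSeq]
        by_cases h : m - 1 < r'
        · rw [dif_pos h, dif_pos (by omega : m + q - 1 < q + r')]
          show ψ (Fin.natAdd q ⟨m - 1, h⟩) = ψ ⟨m + q - 1, by omega⟩
          congr 1
          ext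
          simp
          omega
        · rw [dif_neg h, dif_neg (by omega)]
      have hJC2 : JC K f (xModel f ψ₂) := by
        refine ih r' (by omega) ψ₂
          (fun i j hij => hmono (Fin.natAdd q i) (Fin.natAdd q j)
            (by
              rw [Fin.le_def] at hij ⊢
              simp only [Fin.coe_natAdd]
              omega))
          (fun j => hpos _) ?_
        intro i hi
        obtain ⟨i', rfl⟩ : ∃ i', i = i' + 1 := ⟨i - 1, by omega⟩
        have h2 := hineq (i' + 2) (by omega)
        rw [hinv2 ((i' + 1 - 1) * q + 1) (by omega), hinv2 ((i' + 1) * q) (by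
          have := Nat.mul_le_mul_right q hi
          omega)]
        have e1 : (i' + 1 - 1) * q + 1 + q = (i' + 2 - 1) * q + 1 := by
          rw [show i' + 2 - 1 = i' + 1 from by omega, show i' + 1 - 1 = i' from by omega]
          ring
        have e2 : (i' + 1) * q + q = (i' + 2) * q := by ring
        rw [e1, e2]
        exact h2
      have hprod := JC.prodMap f hJC1 hJC2
      refine JC.conj f (splitEquiv K (A := fun i => AdjoinRoot (f ^ ψ i))).symm ?_ hprod
      intro z
      have h3 := splitEquiv_xModel f ψ ((splitEquiv K (A := fun i => AdjoinRoot (f ^ ψ i))).symm z)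
      rw [LinearEquiv.apply_symm_apply] at h3
      exact (LinearEquiv.symm_apply_eq _).mpr h3.symm

end Base

end JCAux

/-- If an `f`-primary endomorphism `x`, with invariant factors `f^{ψ 0} | f^{ψ 1} | ⋯`
(witnessed by a decomposition into cyclic blocks), satisfies
`inv_{(i-1)q+1} x ≤ 1 + inv_{iq} x` for all `i ≥ 1`, where `q` is the inseparability
degree of `f` (i.e. `f = (T - S)^q · g` over `L = K[S]/(f)` with `g(S) ≠ 0`), then `x`
admits a Jordan-Chevalley decomposition. -/
theorem jordan_chevalley_of_inv_ineq {K V : Type} [Field K] [AddCommGroup V] [Module K V]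
    [FiniteDimensional K V] (f : K[X]) (hf : f.Monic) [Fact (Irreducible f)]
    (q : ℕ) (g : Polynomial (AdjoinRoot f))
    (hfac : f.map (algebraMap K (AdjoinRoot f)) = (X - C (AdjoinRoot.root f)) ^ q * g)
    (hg : Polynomial.eval (AdjoinRoot.root f) g ≠ 0)
    (x : Module.End K V) (r : ℕ) (ψ : Fin r → ℕ)
    (hmono : ∀ i j : Fin r, i ≤ j → ψ j ≤ ψ i) (hpos : ∀ i, 1 ≤ ψ i)
    (e : V ≃ₗ[K] ((i : Fin r) → AdjoinRoot (f ^ ψ i)))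
    (he : ∀ (v : V) (i : Fin r), e (x v) i = AdjoinRoot.root (f ^ ψ i) * e v i)
    (hineq : ∀ i : ℕ, 1 ≤ i → invSeq ψ ((i - 1) * q + 1) ≤ 1 + invSeq ψ (i * q)) :
    ∃ s n : Module.End K V,
      x = s + n ∧ Squarefree (minpoly K s) ∧ IsNilpotent n ∧ Commute s n := by
  have hq : 1 ≤ q := by
    have h0 : Polynomial.eval (AdjoinRoot.root f) (f.map (algebraMap K (AdjoinRoot f))) = 0 := by
      rw [AdjoinRoot.algebraMap_eq, eval_map, AdjoinRoot.eval₂_root]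
    rw [hfac] at h0
    by_contra h
    have hq0 : q = 0 := by omega
    subst hq0
    rw [pow_zero, one_mul] at h0
    exact hg h0
  have hmodel := JCAux.JC_model f hf hq g hfac hg r ψ hmono hpos hineq
  have hJCx : JCAux.JC K f x := by
    refine JCAux.JC.conj f e.symm ?_ hmodel
    intro v
    apply e.injective
    rw [e.apply_symm_apply]
    have : e (x (e.symm v)) = JCAux.xModel f ψ (e (e.symm v)) := by
      funext i
      rw [he (e.symm v) i]
      rfl
    rw [this, e.apply_symm_apply]
  obtain ⟨s, n, hsum, hs, hn, hc⟩ := hJCx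
  refine ⟨s, n, hsum, ?_, hn, hc⟩
  have hdvd : minpoly K s ∣ f := minpoly.dvd K s hs
  exact (Fact.out (p := Irreducible f)).squarefree.squarefree_of_dvd hdvd
end
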